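/- arXiv:2009.10805 — 9 statements merged into one kernel-verified Lean document; each statement's English description precedes it below -/
import Mathlib

section
/- Let A and G be abelian groups and let c : A × A → G be a normalized symmetric 2-cocycle. Extend c to tuples by setting c(x) = 0 for a single element x ∈ A and recursively c(x_1,…,x_n,x_{n+1}) = c(x_1,…,x_n) + c(x_1+⋯+x_n, x_{n+1}) for n ≥ 1. Then for every n ≥ 1 the resulting function A^n → G is invariant under permutations of its arguments, and for all n, m ≥ 1 and all x_1,…,x_n, y_1,…,y_m ∈ A one has c(x_1,…,x_n,y_1,…,y_m) = c(x_1,…,x_n) + c(y_1,…,y_m) + c(x_1+⋯+x_n, y_1+⋯+y_m). -/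
/-!
Statement 0: Eilenberg–Mac Lane extension of a normalized symmetric 2-cocycle to tuples:
permutation invariance and the additivity formula.

A tuple `(x₁, …, xₙ)` is represented by the list `[x₁, …, xₙ]`.  The extension is
characterized by `c(x) = 0` for a single element and
`c(x₁,…,xₙ,x_{n+1}) = c(x₁,…,xₙ) + c(x₁+⋯+xₙ, x_{n+1})`.
-/

/-- Auxiliary recursion with accumulator: `cextAux c s [x₁,…,xₙ] = Σ_{k} c(s + x₁ + ⋯ + x_{k-1}, x_k)`. -/
def cextAux {A G : Type*} [AddCommGroup A] [AddCommGroup G] (c : A → A → G) : A → List A → G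
  | _, [] => 0
  | s, x :: xs => c s x + cextAux c (s + x) xs

/-- The extension of a 2-cocycle `c` to tuples, with `cext c [x] = 0` and
`cext c (l ++ [y]) = cext c l + c (l.sum) y`. -/
def cext {A G : Type*} [AddCommGroup A] [AddCommGroup G] (c : A → A → G) : List A → G
  | [] => 0
  | x :: xs => cextAux c x xs

section Aux

variable {A G : Type*} [AddCommGroup A] [AddCommGroup G] (c : A → A → G)

lemma cextAux_append (l₁ l₂ : List A) : ∀ s,
    cextAux c s (l₁ ++ l₂) = cextAux c s l₁ + cextAux c (s + l₁.sum) l₂ := by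
  induction l₁ with
  | nil => intro s; simp [cextAux]
  | cons x xs ih =>
    intro s
    show c s x + cextAux c (s + x) (xs ++ l₂)
        = (c s x + cextAux c (s + x) xs) + cextAux c (s + (x :: xs).sum) l₂
    rw [ih, List.sum_cons, ← add_assoc s x xs.sum]
    abel

lemma cext_eq_cextAux_zero
    (hnorm : ∀ x : A, c x 0 = 0) (hsymm : ∀ x y : A, c x y = c y x)
    (l : List A) : cext c l = cextAux c 0 l := by
  cases l with
  | nil => rfl
  | cons x xs =>
    have : c 0 x = 0 := by rw [hsymm, hnorm]
    simp [cext, cextAux, this]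

lemma cextAux_perm
    (hcoc : ∀ x y z : A, c x y + c (x + y) z = c x z + c (x + z) y)
    {l l' : List A} (hp : l.Perm l') : ∀ s, cextAux c s l = cextAux c s l' := by
  induction hp with
  | nil => intro s; rfl
  | cons x _ ih => intro s; simp only [cextAux, ih]
  | swap x y l =>
    intro s
    simp only [cextAux]
    have h := hcoc s y x
    rw [add_right_comm s y x, ← add_assoc, ← add_assoc, h]
  | trans _ _ ih₁ ih₂ => intro s; rw [ih₁ s, ih₂ s]

lemma cextAux_nonempty
    (hsymm : ∀ x y : A, c x y = c y x)
    (hcoc : ∀ x y z : A, c x y + c (x + y) z = c x z + c (x + z) y)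
    (l : List A) (hl : l ≠ []) : ∀ s, cextAux c s l = cext c l + c s l.sum := by
  have hcoc' : ∀ s y z : A, c s y + c (s + y) z = c y z + c s (y + z) := by
    intro s y z
    calc c s y + c (s + y) z = c y s + c (y + s) z := by rw [hsymm s y, add_comm s y]
    _ = c y z + c (y + z) s := (hcoc y z s).symm
    _ = c y z + c s (y + z) := by rw [hsymm (y + z) s]
  induction l with
  | nil => exact absurd rfl hl
  | cons y ys ih =>
    intro s
    cases ys with
    | nil => simp [cextAux, cext]
    | cons z zs =>
      have hne : (z :: zs : List A) ≠ [] := by simp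
      show c s y + cextAux c (s + y) (z :: zs) = cextAux c y (z :: zs) + c s (y :: z :: zs).sum
      rw [ih hne (s + y), ih hne y]
      have h := hcoc' s y (z :: zs).sum
      simp only [List.sum_cons] at h ⊢
      rw [show c s y + (cext c (z :: zs) + c (s + y) (z + zs.sum))
          = (c s y + c (s + y) (z + zs.sum)) + cext c (z :: zs) from by abel, h]
      abel

end Aux

theorem cocycle_tuple_extension_perm_invariant_and_additive
    {A G : Type*} [AddCommGroup A] [AddCommGroup G]
    (c : A → A → G)
    (hnorm : ∀ x : A, c x 0 = 0)
    (hsymm : ∀ x y : A, c x y = c y x)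
    (hcoc : ∀ x y z : A, c x y + c (x + y) z = c x z + c (x + z) y) :
    (∀ l l' : List A, l.Perm l' → cext c l = cext c l') ∧
    (∀ l₁ l₂ : List A, l₁ ≠ [] → l₂ ≠ [] →
      cext c (l₁ ++ l₂) = cext c l₁ + cext c l₂ + c l₁.sum l₂.sum) := by
  constructor
  · intro l l' hp
    rw [cext_eq_cextAux_zero c hnorm hsymm, cext_eq_cextAux_zero c hnorm hsymm]
    exact cextAux_perm c hcoc hp 0
  · rintro ⟨⟩ l₂ h₁ h₂
    · exact absurd rfl h₁
    · rename_i x xs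
      show cextAux c x (xs ++ l₂) = cextAux c x xs + cext c l₂ + c (x :: xs).sum l₂.sum
      rw [cextAux_append c xs l₂ x, cextAux_nonempty c hsymm hcoc l₂ h₂ (x + xs.sum),
        List.sum_cons]
      abel
end

section
/- Let F be a free abelian group with free basis B ⊆ F, let G be an abelian group, and let c be a normalized symmetric 2-cocycle on F with values in G; extend c to tuples recursively as above, and for x ∈ F and k ≥ 1 write x^{(k)} for the k-tuple (x,…,x). Define ρ : F → G by setting, for x = (k_0 b_0 + ⋯ + k_ℓ b_ℓ) − (m_0 d_0 + ⋯ + m_s d_s) with k_0,…,k_ℓ, m_0,…,m_s strictly positive integers and b_0,…,b_ℓ, d_0,…,d_s pairwise distinct elements of B, ρ(x) := c(b_0^{(k_0)},…,b_ℓ^{(k_ℓ)}, −d_0^{(m_0)},…,−d_s^{(m_s)}) − Σ_{i=0}^{s} m_i · c(d_i, −d_i). Then for every x, x′ ∈ F and every e ∈ B: (1) ρ(x) + c(x,e) = ρ(x+e) and ρ(x) + c(x,−e) − c(e,−e) = ρ(x−e); (2) ρ(x+x′) = c(x,x′) + ρ(x) + ρ(x′). -/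
section Aux
variable {F G : Type*} [AddCommGroup F] [AddCommGroup G] (c : F → F → G)

lemma cextAux_cons_eq (hcoc : ∀ x y z : F, c x y + c (x + y) z = c x z + c (x + z) y) :
    ∀ (l : List F) (s y : F), cextAux c s (y :: l) = cextAux c s l + c (s + l.sum) y
  | [], s, y => by simp [cextAux]
  | x :: l, s, y => by
    have ih := cextAux_cons_eq hcoc l (s + x) y
    simp only [cextAux, List.sum_cons] at ih ⊢
    rw [add_right_comm s y x, ← add_assoc s x l.sum]
    rw [show c s y + (c (s + y) x + cextAux c (s + x + y) l)
        = (c s y + c (s + y) x) + cextAux c (s + x + y) l from by abel]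
    rw [hcoc s y x]
    rw [show c s x + c (s + x) y + cextAux c (s + x + y) l
        = c s x + (c (s + x) y + cextAux c (s + x + y) l) from by abel, ih]
    abel

lemma cextAux_insert (hcoc : ∀ x y z : F, c x y + c (x + y) z = c x z + c (x + z) y) :
    ∀ (l : List F) (s y : F) (l' : List F),
      cextAux c s (l ++ y :: l') = cextAux c s (l ++ l') + c (s + (l.sum + l'.sum)) y
  | [], s, y, l' => by simpa using cextAux_cons_eq c hcoc l' s y
  | x :: l, s, y, l' => by
    simp only [List.cons_append, cextAux, List.sum_cons, List.append_eq]
    rw [cextAux_insert hcoc l (s + x) y l']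
    rw [show s + x + (l.sum + l'.sum) = s + (x + l.sum + l'.sum) from by abel]
    abel

lemma cext_eq_aux (hnorm : ∀ x : F, c x 0 = 0) (hsymm : ∀ x y : F, c x y = c y x) :
    ∀ L : List F, cext c L = cextAux c 0 L
  | [] => rfl
  | x :: xs => by
    simp only [cext, cextAux, zero_add]
    rw [hsymm 0 x, hnorm]
    abel

lemma zip_map_self_sum {α γ : Type*} [AddCommMonoid γ] (l : List α) (g : α → ℕ)
    (h : α × ℕ → γ) :
    ((l.zip (l.map g)).map h).sum = (l.map fun a => h (a, g a)).sum := by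
  have h1 : l.zip (l.map g) = l.map fun a => (a, g a) := by
    conv_lhs => rw [show l.zip (l.map g) = (l.map id).zip (l.map g) from by rw [List.map_id]]
    rw [List.zip_map']
    rfl
  rw [h1, List.map_map]
  rfl

lemma flatten_replicate_sum (l : List (F × ℕ)) (v : F × ℕ → F) :
    ((l.map fun p => List.replicate p.2 (v p)).flatten).sum
      = (l.map fun p => p.2 • v p).sum := by
  rw [List.sum_flatten, List.map_map]
  congr 1
  apply List.map_congr_left
  intro p _
  simp [List.sum_replicate]

lemma sum_map_neg {α : Type*} (l : List α) (g : α → F) :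
    (l.map fun a => -g a).sum = -(l.map g).sum := by
  induction l with
  | nil => simp
  | cons a l ih => simp [ih]; abel

end Aux

lemma exists_lists {F : Type*} [AddCommGroup F] (T : Finset F) (f : F → ℤ)
    (hf : ∀ b ∈ T, f b ≠ 0) :
    ∃ (bs ds : List F) (ks ms : List ℕ),
      bs.length = ks.length ∧ ds.length = ms.length ∧
      (∀ b ∈ bs, b ∈ T) ∧ (∀ d ∈ ds, d ∈ T) ∧
      (bs ++ ds).Nodup ∧ (∀ k ∈ ks, 0 < k) ∧ (∀ m ∈ ms, 0 < m) ∧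
      (∑ b ∈ T, f b • b) =
        ((bs.zip ks).map fun p => p.2 • p.1).sum
          - ((ds.zip ms).map fun p => p.2 • p.1).sum := by
  classical
  set bs := (T.filter fun b => 0 < f b).toList with hbs
  set ds := (T.filter fun b => ¬ 0 < f b).toList with hds
  refine ⟨bs, ds, bs.map fun b => (f b).toNat, ds.map fun b => (-f b).toNat,
    (List.length_map _).symm, (List.length_map _).symm, ?_, ?_, ?_, ?_, ?_, ?_⟩
  · intro b hb
    exact Finset.mem_of_mem_filter b (Finset.mem_toList.mp hb)
  · intro d hd
    exact Finset.mem_of_mem_filter d (Finset.mem_toList.mp hd)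
  · rw [List.nodup_append]
    refine ⟨Finset.nodup_toList _, Finset.nodup_toList _, ?_⟩
    rintro a ha _ ha' rfl
    have h1 := (Finset.mem_filter.mp (Finset.mem_toList.mp ha)).2
    have h2 := (Finset.mem_filter.mp (Finset.mem_toList.mp ha')).2
    exact h2 h1
  · intro k hk
    obtain ⟨b, hb, rfl⟩ := List.mem_map.mp hk
    have := (Finset.mem_filter.mp (Finset.mem_toList.mp hb)).2
    omega
  · intro m hm
    obtain ⟨d, hd, rfl⟩ := List.mem_map.mp hm
    have h1 := (Finset.mem_filter.mp (Finset.mem_toList.mp hd)).2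
    have h2 := hf d (Finset.mem_of_mem_filter d (Finset.mem_toList.mp hd))
    omega
  · rw [zip_map_self_sum, zip_map_self_sum]
    rw [← Finset.sum_filter_add_sum_filter_not T (fun b => 0 < f b) (fun b => f b • b)]
    have h1 : ((bs.map fun b => (f b).toNat • b)).sum
        = ∑ b ∈ T.filter fun b => 0 < f b, f b • b := by
      rw [show (bs.map fun b => (f b).toNat • b)
          = bs.map fun b => f b • b from ?_]
      · rw [hbs, Finset.sum_map_toList]
      · apply List.map_congr_left
        intro b hb
        have h := (Finset.mem_filter.mp (Finset.mem_toList.mp hb)).2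
        rw [← natCast_zsmul, Int.toNat_of_nonneg h.le]
    have h2 : ((ds.map fun b => (-f b).toNat • b)).sum
        = -∑ b ∈ T.filter fun b => ¬ 0 < f b, f b • b := by
      rw [show (ds.map fun b => (-f b).toNat • b)
          = ds.map fun b => -(f b • b) from ?_]
      · rw [sum_map_neg, hds, Finset.sum_map_toList]
      · apply List.map_congr_left
        intro b hb
        have h := (Finset.mem_filter.mp (Finset.mem_toList.mp hb)).2
        have h' := hf b (Finset.mem_of_mem_filter b (Finset.mem_toList.mp hb))
        rw [← natCast_zsmul, Int.toNat_of_nonneg (by omega), neg_smul]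
    rw [h1, h2]
    abel
theorem rho_of_cocycle_on_free_abelian_group
    {F G : Type*} [AddCommGroup F] [AddCommGroup G]
    (B : Set F)
    (hBindep : LinearIndependent ℤ ((↑) : B → F))
    (hBspan : Submodule.span ℤ B = ⊤)
    (c : F → F → G)
    (hnorm : ∀ x : F, c x 0 = 0)
    (hsymm : ∀ x y : F, c x y = c y x)
    (hcoc : ∀ x y z : F, c x y + c (x + y) z = c x z + c (x + z) y)
    (ρ : F → G)
    -- ρ is defined by the explicit formula: for
    -- x = (k₀ b₀ + ⋯ + k_ℓ b_ℓ) − (m₀ d₀ + ⋯ + m_s d_s), with strictly positive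
    -- integer coefficients and pairwise distinct basis elements,
    -- ρ(x) = c(b₀^{(k₀)},…,b_ℓ^{(k_ℓ)},−d₀^{(m₀)},…,−d_s^{(m_s)}) − Σᵢ mᵢ · c(dᵢ, −dᵢ).
    (hρ : ∀ (x : F) (bs ds : List F) (ks ms : List ℕ),
      bs.length = ks.length → ds.length = ms.length →
      (∀ b ∈ bs, b ∈ B) → (∀ d ∈ ds, d ∈ B) →
      (bs ++ ds).Nodup →
      (∀ k ∈ ks, 0 < k) → (∀ m ∈ ms, 0 < m) →
      x = ((bs.zip ks).map fun p => p.2 • p.1).sum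
          - ((ds.zip ms).map fun p => p.2 • p.1).sum →
      ρ x = cext c
              (((bs.zip ks).map fun p => List.replicate p.2 p.1).flatten
                ++ ((ds.zip ms).map fun p => List.replicate p.2 (-p.1)).flatten)
            - ((ds.zip ms).map fun p => p.2 • c p.1 (-p.1)).sum) :
    (∀ (x : F) (e : F), e ∈ B →
      ρ x + c x e = ρ (x + e) ∧ ρ x + c x (-e) - c e (-e) = ρ (x - e)) ∧
    (∀ x x' : F, ρ (x + x') = c x x' + ρ x + ρ x') := by
  classical
  have key : ∀ w e : F, c w e + c (w + e) (-e) = c e (-e) := by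
    intro w e
    have h := hcoc e w (-e)
    rw [add_neg_cancel, hsymm 0 w, hnorm, add_zero, hsymm e w, add_comm e w] at h
    exact h
  have hcext := cext_eq_aux c hnorm hsymm
  have hins := cextAux_insert c hcoc
  have rho0 : ρ 0 = 0 := by
    have h := hρ 0 [] [] [] [] rfl rfl (by simp) (by simp) (by simp) (by simp) (by simp)
      (by simp)
    simpa [cext] using h
  have rho_e : ∀ e : F, e ∈ B → ρ e = 0 := by
    intro e he
    have h := hρ e [e] [] [1] [] rfl rfl (by simpa using he) (by simp) (by simp)
      (by simp) (by simp) (by simp)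
    simpa [cext, cextAux] using h
  have rho_ne : ∀ e : F, e ∈ B → ρ (-e) = -c e (-e) := by
    intro e he
    have h := hρ (-e) [] [e] [] [1] rfl rfl (by simp) (by simpa using he) (by simp)
      (by simp) (by simp) (by simp)
    simpa [cext, cextAux] using h
  have repr_of : ∀ (x e : F), ∃ (y : F) (n : ℤ) (bs ds : List F) (ks ms : List ℕ),
      x = y + n • e ∧ e ∉ bs ∧ e ∉ ds ∧
      bs.length = ks.length ∧ ds.length = ms.length ∧
      (∀ b ∈ bs, b ∈ B) ∧ (∀ d ∈ ds, d ∈ B) ∧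
      (bs ++ ds).Nodup ∧ (∀ k ∈ ks, 0 < k) ∧ (∀ m ∈ ms, 0 < m) ∧
      y = ((bs.zip ks).map fun p => p.2 • p.1).sum
          - ((ds.zip ms).map fun p => p.2 • p.1).sum := by
    intro x e
    have hx : x ∈ Submodule.span ℤ B := by rw [hBspan]; trivial
    rw [Submodule.mem_span_set] at hx
    obtain ⟨c0, hsupp, hsum⟩ := hx
    obtain ⟨bs, ds, ks, ms, hl1, hl2, hbT, hdT, hnd, hks, hms, hsum'⟩ :=
      exists_lists (c0.support.erase e) c0
        (fun b hb => Finsupp.mem_support_iff.mp (Finset.mem_of_mem_erase hb))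
    refine ⟨∑ b ∈ c0.support.erase e, c0 b • b, c0 e, bs, ds, ks, ms, ?_,
      fun hbe => Finset.notMem_erase e _ (hbT e hbe),
      fun hde => Finset.notMem_erase e _ (hdT e hde), hl1, hl2,
      fun b hb => hsupp (Finset.mem_coe.mpr (Finset.mem_of_mem_erase (hbT b hb))),
      fun d hd => hsupp (Finset.mem_coe.mpr (Finset.mem_of_mem_erase (hdT d hd))),
      hnd, hks, hms, hsum'⟩
    rw [← hsum, Finsupp.sum]
    by_cases he : e ∈ c0.support
    · rw [← Finset.sum_erase_add _ _ he]
    · rw [Finsupp.notMem_support_iff.mp he, zero_smul, add_zero,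
        Finset.erase_eq_of_notMem he]
  have step1 : ∀ (x e : F), e ∈ B → ρ x + c x e = ρ (x + e) := by
    intro x e he
    obtain ⟨y, n, bs, ds, ks, ms, hxy, henb, hend, hl1, hl2, hbB, hdB, hnd, hks, hms, hy⟩ :=
      repr_of x e
    set L := ((bs.zip ks).map fun p => List.replicate p.2 p.1).flatten with hL
    set M := ((ds.zip ms).map fun p => List.replicate p.2 (-p.1)).flatten with hM
    set S := ((ds.zip ms).map fun p => p.2 • c p.1 (-p.1)).sum with hS
    have hLsum : L.sum = ((bs.zip ks).map fun p => p.2 • p.1).sum :=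
      flatten_replicate_sum (bs.zip ks) (fun p => p.1)
    have hMsum : M.sum = -((ds.zip ms).map fun p => p.2 • p.1).sum := by
      rw [hM, flatten_replicate_sum (ds.zip ms) (fun p => -p.1),
        show ((ds.zip ms).map fun p => p.2 • -p.1) = (ds.zip ms).map fun p => -(p.2 • p.1)
          from by simp [smul_neg]]
      exact sum_map_neg _ _
    have hsumLM : L.sum + M.sum = y := by rw [hLsum, hMsum, hy]; abel
    have hzero : ρ y = cext c (L ++ M) - S :=
      hρ y bs ds ks ms hl1 hl2 hbB hdB hnd hks hms hy
    have hpos : ∀ m : ℕ, ρ (y + ((m : ℕ) : ℤ) • e)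
        = cext c ((L ++ List.replicate m e) ++ M) - S := by
      intro m
      cases m with
      | zero => simpa using hzero
      | succ m =>
        have h := hρ (y + (((m+1 : ℕ) : ℤ)) • e) (bs ++ [e]) ds (ks ++ [m+1]) ms
          (by simp [hl1]) hl2
          (by intro b hb
              rcases List.mem_append.mp hb with h | h
              · exact hbB b h
              · simp at h; subst h; exact he)
          hdB
          (by rw [List.append_assoc, List.singleton_append, List.nodup_middle]
              refine List.nodup_cons.mpr ⟨?_, hnd⟩
              intro hmem
              rcases List.mem_append.mp hmem with h | h
              · exact henb h
              · exact hend h)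
          (by intro k hk
              rcases List.mem_append.mp hk with h | h
              · exact hks k h
              · simp at h; omega)
          hms
          (by rw [List.zip_append hl1, List.map_append, List.sum_append]
              simp only [List.zip_cons_cons, List.zip_nil_right, List.map_cons, List.map_nil, List.sum_cons, List.sum_nil, add_zero]
              rw [hy, natCast_zsmul]
              abel)
        have hshape : (((bs ++ [e]).zip (ks ++ [m+1])).map
              fun p => List.replicate p.2 p.1).flatten
            = L ++ List.replicate (m+1) e := by
          rw [List.zip_append hl1]
          simp [hL]
        rw [hshape] at h
        exact h
    have hneg : ∀ m : ℕ, ρ (y - ((m : ℕ) : ℤ) • e)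
        = cext c (L ++ (M ++ List.replicate m (-e))) - S - m • c e (-e) := by
      intro m
      cases m with
      | zero => simpa using hzero
      | succ m =>
        have h := hρ (y - (((m+1 : ℕ) : ℤ)) • e) bs (ds ++ [e]) ks (ms ++ [m+1])
          hl1 (by simp [hl2]) hbB
          (by intro d hd
              rcases List.mem_append.mp hd with h | h
              · exact hdB d h
              · simp at h; subst h; exact he)
          (by rw [← List.append_assoc, List.nodup_append]
              refine ⟨hnd, List.nodup_singleton e, ?_⟩
              rintro a ha _ h1 rfl
              simp at h1; subst h1
              rcases List.mem_append.mp ha with h | h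
              · exact henb h
              · exact hend h)
          hks
          (by intro m' hm'
              rcases List.mem_append.mp hm' with h | h
              · exact hms m' h
              · simp at h; omega)
          (by rw [List.zip_append hl2, List.map_append, List.sum_append]
              simp only [List.zip_cons_cons, List.zip_nil_right, List.map_cons, List.map_nil, List.sum_cons, List.sum_nil, add_zero]
              rw [hy, natCast_zsmul]
              abel)
        have hshape : (((ds ++ [e]).zip (ms ++ [m+1])).map
              fun p => List.replicate p.2 (-p.1)).flatten
            = M ++ List.replicate (m+1) (-e) := by
          rw [List.zip_append hl2]
          simp [hM]
        have hS' : (((ds ++ [e]).zip (ms ++ [m+1])).map fun p => p.2 • c p.1 (-p.1)).sum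
            = S + (m+1) • c e (-e) := by
          rw [List.zip_append hl2]
          simp [hS]
        rw [hshape, hS'] at h
        rw [h]
        abel
    rcases le_or_gt 0 n with hn | hn
    · obtain ⟨m, rfl⟩ := Int.eq_ofNat_of_zero_le hn
      have h1 := hpos m
      have h2 := hpos (m + 1)
      have hxe : y + ((m : ℕ) : ℤ) • e + e = y + (((m + 1 : ℕ) : ℤ)) • e := by
        have hc : (((m + 1 : ℕ) : ℤ)) = ((m : ℕ) : ℤ) + 1 := by push_cast; ring
        rw [hc, add_smul, one_smul]
        abel
      rw [hxy, hxe, h1, h2]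
      have hra : (L ++ List.replicate (m+1) e) ++ M
          = (L ++ List.replicate m e) ++ e :: M := by
        rw [List.replicate_succ']
        simp [List.append_assoc]
      rw [hra, hcext, hcext, hins (L ++ List.replicate m e) 0 e M]
      have harg : 0 + ((L ++ List.replicate m e).sum + M.sum) = y + ((m : ℕ) : ℤ) • e := by
        rw [List.sum_append, List.sum_replicate, zero_add, natCast_zsmul,
          show L.sum + m • e + M.sum = (L.sum + M.sum) + m • e from by abel, hsumLM]
      rw [harg]
      abel
    · obtain ⟨m, hm⟩ : ∃ m : ℕ, n = -(((m + 1 : ℕ) : ℤ)) := ⟨(-n).toNat - 1, by omega⟩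
      subst hm
      have hye : y - (((m + 1 : ℕ) : ℤ)) • e + e = y - ((m : ℕ) : ℤ) • e := by
        have hc : (((m + 1 : ℕ) : ℤ)) = ((m : ℕ) : ℤ) + 1 := by push_cast; ring
        rw [hc, add_smul, one_smul]
        abel
      have hx' : x = y - (((m + 1 : ℕ) : ℤ)) • e := by
        rw [hxy, neg_smul, ← sub_eq_add_neg]
      rw [hx', hye, hneg (m + 1), hneg m]
      have hra : L ++ (M ++ List.replicate (m+1) (-e))
          = (L ++ (M ++ List.replicate m (-e))) ++ [-e] := by
        rw [List.replicate_succ']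
        simp [List.append_assoc]
      rw [hra, hcext, hcext]
      have hend' := hins (L ++ (M ++ List.replicate m (-e))) 0 (-e) []
      rw [List.append_nil] at hend'
      rw [hend']
      have harg : 0 + ((L ++ (M ++ List.replicate m (-e))).sum + List.sum [])
          = y - ((m : ℕ) : ℤ) • e := by
        rw [List.sum_nil, add_zero, zero_add, List.sum_append, List.sum_append,
          List.sum_replicate, smul_neg, natCast_zsmul,
          show L.sum + (M.sum + -(m • e)) = (L.sum + M.sum) - m • e from by abel, hsumLM]
      rw [harg]
      have hkey' : c (y - (((m + 1 : ℕ) : ℤ)) • e) e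
          = c e (-e) - c (y - ((m : ℕ) : ℤ) • e) (-e) := by
        rw [eq_sub_iff_add_eq]
        have hkey := key (y - (((m + 1 : ℕ) : ℤ)) • e) e
        rw [hye] at hkey
        exact hkey
      rw [hkey', succ_nsmul]
      abel
  have step2 : ∀ (x e : F), e ∈ B → ρ x + c x (-e) - c e (-e) = ρ (x - e) := by
    intro x e he
    have h := step1 (x - e) e he
    rw [sub_add_cancel] at h
    have hk := key (x - e) e
    rw [sub_add_cancel] at hk
    have h1 : ρ (x - e) = ρ x - c (x - e) e := by rw [← h]; abel
    have h2 : c x (-e) = c e (-e) - c (x - e) e := by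
      rw [eq_sub_iff_add_eq, add_comm]
      exact hk
    rw [h1, h2]
    abel
  have hmem : ∀ x : F, x ∈ AddSubgroup.closure B := by
    intro x
    have hx : x ∈ Submodule.span ℤ B := by rw [hBspan]; trivial
    have hle : Submodule.span ℤ B
        ≤ AddSubgroup.toIntSubmodule (AddSubgroup.closure B) :=
      Submodule.span_le.mpr
        (by rw [AddSubgroup.coe_toIntSubmodule]; exact AddSubgroup.subset_closure)
    exact hle hx
  refine ⟨fun x e he => ⟨step1 x e he, step2 x e he⟩, fun x x' => ?_⟩
  refine AddSubgroup.closure_induction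
    (p := fun a _ => ∀ x, ρ (x + a) = c x a + ρ x + ρ a) ?_ ?_ ?_ ?_ (hmem x') x
  · intro e he x
    rw [← step1 x e he, rho_e e he]
    abel
  · intro x
    rw [add_zero, hnorm, rho0]
    abel
  · intro a b _ _ ha hb x
    have hc : c x (a + b) = c x a + c (x + a) b - c a b := by
      have h := hcoc a b x
      rw [hsymm (a + b) x, hsymm a x, add_comm a x] at h
      rw [eq_sub_iff_add_eq, add_comm]
      exact h
    rw [← add_assoc x a b, hb (x + a), ha x, hb a, hc]
    abel
  · intro a _ ha x
    have h0 : ρ 0 = c (-a) a + ρ (-a) + ρ a := by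
      have h := ha (-a)
      rwa [neg_add_cancel] at h
    rw [rho0, hsymm (-a) a] at h0
    have h0' : c a (-a) + ρ (-a) + ρ a = 0 := h0.symm
    rw [show c a (-a) + ρ (-a) + ρ a = ρ (-a) + (c a (-a) + ρ a) from by abel] at h0'
    have h0'' := eq_neg_of_add_eq_zero_left h0'
    have h1 : ρ x = c (x - a) a + ρ (x - a) + ρ a := by
      have h := ha (x - a)
      rwa [sub_add_cancel] at h
    have h1' : ρ (x - a) = ρ x - c (x - a) a - ρ a := by
      rw [h1]
      abel
    have hk : c (x - a) a + c x (-a) = c a (-a) := by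
      have h := key (x - a) a
      rwa [sub_add_cancel] at h
    have hk' : c x (-a) = c a (-a) - c (x - a) a := by
      rw [eq_sub_iff_add_eq, add_comm]
      exact hk
    rw [← sub_eq_add_neg, h1', hk', h0'']
    abel
end

section
/- Let G be a Polish abelian group with the division closure property, let F be a countable free abelian group, and let R be a subgroup of F. Then Hom_f(F|R,G), the subgroup of Hom(R,G) consisting of those homomorphisms φ : R → G that extend to a group homomorphism F_0 → G for every subgroup F_0 with R ≤ F_0 ≤ F and F_0/R finite, is a closed subgroup of Hom(R,G), and it equals the closure in Hom(R,G) of the subgroup Hom(F|R,G) of homomorphisms R → G that extend to a group homomorphism F → G. -/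
/-!
Statement 2: for a Polish abelian group `G` with the division closure property, a countable
free abelian group `F`, and a subgroup `R ≤ F`, the group `Hom_f(F|R,G)` of homomorphisms
`R → G` that extend to every intermediate subgroup `F₀` with `F₀/R` finite is a closed
subgroup of `Hom(R,G) ⊆ G^R`, and equals the closure of `Hom(F|R,G)` therein.

`Hom(R,G)` is realized as the subtype of additive functions `↥R → G`, with the subspace
topology inherited from the product topology on `↥R → G`.
-/

/-! ### Auxiliary development -/
/-- The saturation (division hull) of a submodule of a `ℤ`-module. -/
def intSat {F : Type*} [AddCommGroup F] (A : Submodule ℤ F) : Submodule ℤ F where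
  carrier := {x | ∃ m : ℤ, m ≠ 0 ∧ m • x ∈ A}
  add_mem' := by
    rintro x y ⟨m, hm, hmx⟩ ⟨n, hn, hny⟩
    refine ⟨m * n, mul_ne_zero hm hn, ?_⟩
    have h1 : (m * n) • (x + y) = n • (m • x) + m • (n • y) := by
      rw [smul_add, mul_smul, mul_comm, mul_smul, smul_comm n m y, smul_comm m n x]
    rw [h1]
    exact A.add_mem (A.smul_mem n hmx) (A.smul_mem m hny)
  zero_mem' := ⟨1, one_ne_zero, by simp⟩
  smul_mem' := by
    rintro c x ⟨m, hm, hmx⟩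
    exact ⟨m, hm, by rw [smul_comm]; exact A.smul_mem c hmx⟩

theorem mem_intSat {F : Type*} [AddCommGroup F] {A : Submodule ℤ F} {x : F} :
    x ∈ intSat A ↔ ∃ m : ℤ, m ≠ 0 ∧ m • x ∈ A := Iff.rfl

theorem le_intSat {F : Type*} [AddCommGroup F] (A : Submodule ℤ F) : A ≤ intSat A :=
  fun x hx => ⟨1, one_ne_zero, by simpa using hx⟩

/-- If `P` is a finitely generated submodule, torsion modulo `R`, then the image of `R ⊔ P`
in `F ⧸ R` is finite. -/
theorem sup_image_finite {F : Type*} [AddCommGroup F] (R : AddSubgroup F) (P : Submodule ℤ F)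
    (hfg : P.FG) (htor : ∀ p ∈ P, ∃ m : ℤ, m ≠ 0 ∧ m • p ∈ R) :
    ((fun x : F => (QuotientAddGroup.mk x : F ⧸ R)) ''
      ((R ⊔ AddSubgroup.toIntSubmodule.symm P : AddSubgroup F) : Set F)).Finite := by
  haveI : Module.Finite ℤ ↥P := Module.Finite.iff_fg.mpr hfg
  haveI : AddGroup.FG ↥P := Module.Finite.iff_addGroup_fg.mp ‹_›
  set q : ↥P →+ F ⧸ R := (QuotientAddGroup.mk' R).comp P.subtype.toAddMonoidHom with hq
  haveI : AddGroup.FG ↥q.range := AddGroup.fg_range q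
  have htor' : AddMonoid.IsTorsion ↥q.range := by
    rintro ⟨y, p, rfl⟩
    rw [isOfFinAddOrder_iff_nsmul_eq_zero]
    obtain ⟨m, hm, hmem⟩ := htor ↑p p.2
    refine ⟨m.natAbs, Int.natAbs_pos.mpr hm, ?_⟩
    have : (m.natAbs : ℤ) • (p : F) ∈ R := by
      rcases Int.natAbs_eq m with h | h
      · rw [← h]; exact hmem
      · rw [show ((m.natAbs : ℤ)) = -m by omega, neg_smul]; exact neg_mem hmem
    ext
    show m.natAbs • (q p) = (0 : F ⧸ R)
    have hqp : q p = QuotientAddGroup.mk (p : F) := rfl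
    rw [hqp, ← QuotientAddGroup.mk_nsmul, QuotientAddGroup.eq_zero_iff]
    rwa [← natCast_zsmul] 
  haveI : Finite ↥q.range := AddCommGroup.finite_of_fg_torsion _ htor'
  apply Set.Finite.subset (Set.toFinite (q.range : Set (F ⧸ R)))
  rintro _ ⟨z, hz, rfl⟩
  obtain ⟨r, hr, p, hp, rfl⟩ := AddSubgroup.mem_sup.mp hz
  have hpP : p ∈ P := hp
  have : (QuotientAddGroup.mk (r + p) : F ⧸ R) = q ⟨p, hpP⟩ := by
    show _ = QuotientAddGroup.mk p
    rw [QuotientAddGroup.eq_iff_sub_mem]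
    simpa using hr
  show QuotientAddGroup.mk (r + p) ∈ (q.range : Set (F ⧸ R))
  rw [SetLike.mem_coe, this]
  exact ⟨⟨p, hpP⟩, rfl⟩

/-- Extension of a homomorphism over a finite-index extension inside a free abelian group,
given divisibility of values. -/
theorem key_extend {F : Type*} [AddCommGroup F] [Module.Free ℤ F] {G : Type*} [AddCommGroup G]
    (R F₀ : AddSubgroup F) (hle : R ≤ F₀)
    (hfin : ((fun x : F => (QuotientAddGroup.mk x : F ⧸ R)) '' (F₀ : Set F)).Finite)
    (Φ : ↥R →+ G)
    (hdiv : ∀ (m : ℤ) (x : F) (h : m • x ∈ R), m ≠ 0 → ∃ g : G, m • g = Φ ⟨m • x, h⟩) :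
    ∃ ψ : ↥F₀ →+ G, ∀ r : ↥R, ψ (AddSubgroup.inclusion hle r) = Φ r := by
  classical
  set S : Set (F ⧸ R) := (fun x : F => (QuotientAddGroup.mk x : F ⧸ R)) '' (F₀ : Set F) with hS
  haveI : Finite ↥S := hfin.to_subtype
  have hchoice : ∀ q : ↥S, ∃ z, z ∈ F₀ ∧ (QuotientAddGroup.mk z : F ⧸ R) = ↑q := by
    rintro ⟨q, z, hz, rfl⟩
    exact ⟨z, hz, rfl⟩
  choose zrep hzrep1 hzrep2 using hchoice
  set P : Submodule ℤ F := Submodule.span ℤ (Set.range zrep) with hP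
  have hPfg : P.FG := Submodule.fg_span (Set.finite_range zrep)
  haveI : Module.Finite ℤ ↥P := Module.Finite.iff_fg.mpr hPfg
  haveI : Module.IsTorsionFree ℤ ↥P := inferInstance
  haveI : Module.Free ℤ ↥P := Module.free_of_finite_type_torsion_free'
  set N : Submodule ℤ ↥P := Submodule.comap P.subtype (AddSubgroup.toIntSubmodule R) with hN
  obtain ⟨n, snf⟩ := Submodule.smithNormalForm (Module.Free.chooseBasis ℤ ↥P) N
  -- membership of basis vectors of N in R
  have hmemR : ∀ j : Fin n, ((snf.bN j : ↥P) : F) ∈ R := fun j => (snf.bN j).2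
  -- the diagonal entries are nonzero
  have ha : ∀ j : Fin n, snf.a j ≠ 0 := by
    intro j h
    have h0 : ((snf.bN j : ↥P)) = 0 := by rw [snf.snf j, h, zero_smul]
    exact snf.bN.ne_zero j (Subtype.coe_injective h0)
  -- choose divided values
  have hex : ∀ j : Fin n, ∃ g : G, snf.a j • g = Φ ⟨((snf.bN j : ↥P) : F), hmemR j⟩ := by
    intro j
    have hcoe : snf.a j • ((snf.bM (snf.f j) : F)) = ((snf.bN j : ↥P) : F) := by
      rw [snf.snf j]; simp
    have hxR : snf.a j • ((snf.bM (snf.f j) : F)) ∈ R := by rw [hcoe]; exact hmemR j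
    obtain ⟨g, hg⟩ := hdiv (snf.a j) (snf.bM (snf.f j) : F) hxR (ha j)
    refine ⟨g, ?_⟩
    rw [hg]
    congr 1
    exact Subtype.ext hcoe
  choose gg hgg using hex
  set gvec : Module.Free.ChooseBasisIndex ℤ ↥P → G :=
    fun i => if h : ∃ j, snf.f j = i then gg h.choose else 0 with hgvec
  have hgvecf : ∀ j, gvec (snf.f j) = gg j := by
    intro j
    have h : ∃ j', snf.f j' = snf.f j := ⟨j, rfl⟩
    have hj : h.choose = j := snf.f.injective h.choose_spec
    simp only [hgvec, dif_pos h, hj]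
  set θ : ↥P →ₗ[ℤ] G := snf.bM.constr ℤ gvec with hθ
  -- θ agrees with Φ on N
  have hagree : ∀ (p : F) (hp : p ∈ P) (hr : p ∈ R), θ ⟨p, hp⟩ = Φ ⟨p, hr⟩ := by
    set toR : ↥N →ₗ[ℤ] ↥R :=
      { toFun := fun y => ⟨((y : ↥P) : F), y.2⟩
        map_add' := fun a b => by apply Subtype.ext; simp
        map_smul' := fun c a => by apply Subtype.ext; simp } with htoR
    have hLL : θ ∘ₗ N.subtype = Φ.toIntLinearMap ∘ₗ toR := by
      apply snf.bN.ext
      intro j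
      have h1 : (θ ∘ₗ N.subtype) (snf.bN j) = θ (snf.bN j : ↥P) := rfl
      rw [h1, snf.snf j, map_smul, hθ, Module.Basis.constr_basis, hgvecf, hgg]
      rfl
    intro p hp hr
    have hpN : (⟨p, hp⟩ : ↥P) ∈ N := by
      rw [hN]
      simp only [Submodule.mem_comap]
      exact hr
    have := DFunLike.congr_fun hLL (⟨⟨p, hp⟩, hpN⟩ : ↥N)
    exact this
  -- decomposition of elements of F₀
  have hdec : ∀ z : ↥F₀, ∃ rp : F × F, rp.1 ∈ R ∧ rp.2 ∈ P ∧ (z : F) = rp.1 + rp.2 := by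
    rintro ⟨z, hz⟩
    have hq : (QuotientAddGroup.mk z : F ⧸ R) ∈ S := Set.mem_image_of_mem _ hz
    set q : ↥S := ⟨_, hq⟩ with hqdef
    refine ⟨(z - zrep q, zrep q), ?_, ?_, by simp⟩
    · rw [← QuotientAddGroup.eq_iff_sub_mem, hzrep2 q]
    · exact Submodule.subset_span ⟨q, rfl⟩
  choose dec hdec1 hdec2 hdec3 using hdec
  -- well-definedness
  have wd : ∀ (r p r' p' : F) (hr : r ∈ R) (hp : p ∈ P) (hr' : r' ∈ R) (hp' : p' ∈ P),
      r + p = r' + p' → Φ ⟨r, hr⟩ + θ ⟨p, hp⟩ = Φ ⟨r', hr'⟩ + θ ⟨p', hp'⟩ := by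
    intro r p r' p' hr hp hr' hp' heq
    have hsub : r - r' = p' - p := by
      rw [sub_eq_sub_iff_add_eq_add, heq]
      abel
    have hmem1 : p' - p ∈ P := sub_mem hp' hp
    have hmem2 : p' - p ∈ R := by rw [← hsub]; exact sub_mem hr hr'
    have key : θ ⟨p', hp'⟩ - θ ⟨p, hp⟩ = Φ ⟨r, hr⟩ - Φ ⟨r', hr'⟩ := by
      have e1 : θ ⟨p', hp'⟩ - θ ⟨p, hp⟩ = θ ⟨p' - p, hmem1⟩ := by
        rw [← map_sub]
        congr 1
      have e2 : Φ ⟨r, hr⟩ - Φ ⟨r', hr'⟩ = Φ ⟨r - r', sub_mem hr hr'⟩ := by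
        rw [← map_sub]
        congr 1
      rw [e1, e2, hagree (p' - p) hmem1 hmem2]
      congr 1
      exact Subtype.ext hsub.symm
    have := sub_eq_sub_iff_add_eq_add.mp key
    rw [add_comm (θ ⟨p', hp'⟩) (Φ ⟨r', hr'⟩)] at this
    rw [add_comm (Φ ⟨r, hr⟩) (θ ⟨p, hp⟩)] at this ⊢
    exact this.symm
  -- assemble the homomorphism
  set f₀ : ↥F₀ → G := fun z => Φ ⟨(dec z).1, hdec1 z⟩ + θ ⟨(dec z).2, hdec2 z⟩ with hf₀
  have hf₀add : ∀ a b : ↥F₀, f₀ (a + b) = f₀ a + f₀ b := by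
    intro a b
    have h1 : ((a + b : ↥F₀) : F) = ((dec a).1 + (dec b).1) + ((dec a).2 + (dec b).2) := by
      push_cast
      rw [hdec3 a, hdec3 b]
      abel
    have h2 : (dec (a+b)).1 + (dec (a+b)).2 = ((dec a).1 + (dec b).1) + ((dec a).2 + (dec b).2) := by
      rw [← hdec3 (a+b)]
      exact h1
    have := wd (dec (a+b)).1 (dec (a+b)).2 ((dec a).1 + (dec b).1) ((dec a).2 + (dec b).2)
      (hdec1 _) (hdec2 _) (add_mem (hdec1 a) (hdec1 b)) (add_mem (hdec2 a) (hdec2 b)) h2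
    rw [hf₀]
    simp only []
    rw [this]
    have e1 : (⟨(dec a).1 + (dec b).1, _⟩ : ↥R) = ⟨(dec a).1, hdec1 a⟩ + ⟨(dec b).1, hdec1 b⟩ :=
      rfl
    have e2 : (⟨(dec a).2 + (dec b).2, _⟩ : ↥P) = ⟨(dec a).2, hdec2 a⟩ + ⟨(dec b).2, hdec2 b⟩ :=
      rfl
    rw [e1, e2, map_add, map_add]
    abel
  refine ⟨AddMonoidHom.mk' f₀ hf₀add, ?_⟩
  intro r
  have hz : ((AddSubgroup.inclusion hle r : ↥F₀) : F) = (r : F) := rfl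
  set z := AddSubgroup.inclusion hle r with hzdef
  have h2 : (dec z).1 + (dec z).2 = (r : F) + 0 := by
    rw [← hdec3 z, hz, add_zero]
  have := wd (dec z).1 (dec z).2 (r : F) 0 (hdec1 z) (hdec2 z) r.2 (zero_mem P) h2
  show f₀ z = Φ r
  rw [hf₀]
  simp only []
  rw [this]
  have e0 : (⟨0, zero_mem P⟩ : ↥P) = 0 := rfl
  rw [e0, map_zero, add_zero]

/-- Given finitely many elements of a saturated f.g. situation, build a retraction-based global
homomorphism agreeing with a partially defined one. -/
theorem global_approx {F : Type*} [AddCommGroup F] [Module.Free ℤ F] {G : Type*} [AddCommGroup G]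
    (R : AddSubgroup F) (φ : ↥R → G)
    (hφ : ∀ (F₀ : AddSubgroup F) (hle : R ≤ F₀),
        ((fun x : F => (QuotientAddGroup.mk x : F ⧸ R)) '' (F₀ : Set F)).Finite →
        ∃ ψ : ↥F₀ →+ G, ∀ r : ↥R, ψ (AddSubgroup.inclusion hle r) = φ r)
    (I : Finset ↥R) : ∃ Ψ : F →+ G, ∀ r ∈ I, Ψ ↑r = φ r := by
  classical
  set b := Module.Free.chooseBasis ℤ F with hb
  set κ := Module.Free.ChooseBasisIndex ℤ F
  set J : Finset κ := I.biUnion (fun r => (b.repr ↑r).support) with hJ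
  set A : Submodule ℤ F := Submodule.span ℤ ((fun r : ↥R => (r : F)) '' (I : Set ↥R)) with hA
  set P : Submodule ℤ F := intSat A with hPdef
  set V : Submodule ℤ F := Submodule.span ℤ (⇑b '' (J : Set κ)) with hV
  have hAV : A ≤ V := by
    rw [hA, Submodule.span_le]
    rintro _ ⟨r, hr, rfl⟩
    rw [SetLike.mem_coe, Module.Basis.mem_span_image]
    intro j hj
    simp only [hJ, Finset.coe_biUnion, Set.mem_iUnion]
    exact ⟨r, hr, hj⟩
  have hAR : A ≤ AddSubgroup.toIntSubmodule R := by
    rw [hA, Submodule.span_le]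
    rintro _ ⟨r, hr, rfl⟩
    exact r.2
  have hPV : P ≤ V := by
    rintro x ⟨m, hm, hmx⟩
    have h1 : m • x ∈ V := hAV hmx
    rw [Module.Basis.mem_span_image] at h1 ⊢
    rwa [map_smul, Finsupp.support_smul_eq hm] at h1
  -- V is f.g., hence Noetherian
  have hVfg : V.FG := Submodule.fg_span ((J : Set κ).toFinite.image _)
  haveI : Module.Finite ℤ ↥V := Module.Finite.iff_fg.mpr hVfg
  haveI : IsNoetherian ℤ ↥V := isNoetherian_of_fg_of_noetherian V hVfg
  set P₁ : Submodule ℤ ↥V := P.comap V.subtype with hP₁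
  have hP₁fg : P₁.FG := IsNoetherian.noetherian P₁
  have hPfg : P.FG := by
    have hmap : P₁.map V.subtype = P := by
      rw [hP₁, Submodule.map_comap_subtype, inf_eq_right.mpr hPV]
    rw [← hmap]
    exact Submodule.FG.map _ hP₁fg
  -- the quotient V ⧸ P₁ is f.g. torsion-free, hence free, hence projective; get a section
  haveI : Module.Finite ℤ (↥V ⧸ P₁) := Module.Finite.quotient ℤ _
  haveI : NoZeroSMulDivisors ℤ (↥V ⧸ P₁) := by
    refine ⟨fun {c} {x} h => ?_⟩
    by_cases hc : c = 0
    · exact Or.inl hc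
    · right
      obtain ⟨v, rfl⟩ := P₁.mkQ_surjective x
      have h1 : P₁.mkQ (c • v) = 0 := by rwa [map_smul]
      rw [Submodule.mkQ_apply, Submodule.Quotient.mk_eq_zero] at h1
      have h2 : (c • v : ↥V) ∈ P₁ := h1
      have h3 : c • (v : F) ∈ P := h2
      obtain ⟨m, hm, hmx⟩ := h3
      have h4 : (v : F) ∈ P := ⟨m * c, mul_ne_zero hm hc, by rwa [mul_smul]⟩
      rw [Submodule.mkQ_apply, Submodule.Quotient.mk_eq_zero]
      exact h4
  haveI : Module.Free ℤ (↥V ⧸ P₁) := Module.free_of_finite_type_torsion_free'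
  obtain ⟨sec, hsec⟩ := Module.projective_lifting_property P₁.mkQ
    (LinearMap.id : (↥V ⧸ P₁) →ₗ[ℤ] (↥V ⧸ P₁)) P₁.mkQ_surjective
  -- retraction ρ₂ : V → P₁
  have hρmem : ∀ v : ↥V, v - sec (P₁.mkQ v) ∈ P₁ := by
    intro v
    have : P₁.mkQ (v - sec (P₁.mkQ v)) = 0 := by
      rw [map_sub]
      have : P₁.mkQ (sec (P₁.mkQ v)) = P₁.mkQ v := by
        have := DFunLike.congr_fun hsec (P₁.mkQ v)
        exact this
      rw [this, sub_self]
    rwa [Submodule.mkQ_apply, Submodule.Quotient.mk_eq_zero] at this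
  set ρ₂ : ↥V →ₗ[ℤ] ↥P₁ :=
    LinearMap.codRestrict P₁ (LinearMap.id - sec ∘ₗ P₁.mkQ) hρmem with hρ₂
  have hρ₂id : ∀ (v : ↥V) (hv : v ∈ P₁), ((ρ₂ v : ↥P₁) : ↥V) = v := by
    intro v hv
    show v - sec (P₁.mkQ v) = v
    have : P₁.mkQ v = 0 := by rwa [Submodule.mkQ_apply, Submodule.Quotient.mk_eq_zero]
    rw [this, map_zero, sub_zero]
  -- projection π : F → V using coordinates in J
  set πF : F →ₗ[ℤ] F := ∑ j ∈ J, (b.coord j).smulRight (b j) with hπF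
  have hπFval : ∀ z : F, πF z = ∑ j ∈ J, b.repr z j • b j := by
    intro z
    rw [hπF]
    simp [LinearMap.sum_apply, LinearMap.smulRight_apply, Module.Basis.coord_apply]
  have hπFmem : ∀ z : F, πF z ∈ V := by
    intro z
    rw [hπFval]
    exact Submodule.sum_mem _ fun j hj =>
      Submodule.smul_mem _ _ (Submodule.subset_span ⟨j, hj, rfl⟩)
  set π : F →ₗ[ℤ] ↥V := LinearMap.codRestrict V πF hπFmem with hπ
  have hπid : ∀ z : F, (b.repr z).support ⊆ J → ((π z : ↥V) : F) = z := by
    intro z hz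
    show πF z = z
    rw [hπFval]
    rw [← Finset.sum_subset hz (fun j _ hj => by
      rw [Finsupp.notMem_support_iff.mp hj, zero_smul])]
    conv_rhs => rw [← b.linearCombination_repr z]
    rw [Finsupp.linearCombination_apply, Finsupp.sum]
  -- the subgroup F₀ := R ⊔ P
  set P' : AddSubgroup F := AddSubgroup.toIntSubmodule.symm P with hP'
  set F₀ : AddSubgroup F := R ⊔ P' with hF₀
  have hle : R ≤ F₀ := le_sup_left
  have hPF₀ : ∀ x ∈ P, x ∈ F₀ := fun x hx => AddSubgroup.mem_sup_right (show x ∈ P' from hx)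
  have hfin : ((fun x : F => (QuotientAddGroup.mk x : F ⧸ R)) '' (F₀ : Set F)).Finite := by
    refine sup_image_finite R P hPfg fun p hp => ?_
    obtain ⟨m, hm, hmA⟩ := hp
    exact ⟨m, hm, hAR hmA⟩
  obtain ⟨ψ₀, hψ₀⟩ := hφ F₀ hle hfin
  -- assemble Ψ
  set ι₂ : ↥P₁ →+ ↥F₀ := AddMonoidHom.mk' (fun y => ⟨((y : ↥V) : F), hPF₀ _ y.2⟩)
    (fun a b => by apply Subtype.ext; simp) with hι₂
  set Ψ : F →+ G := ψ₀.comp (ι₂.comp ((ρ₂ ∘ₗ π).toAddMonoidHom)) with hΨ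
  refine ⟨Ψ, ?_⟩
  intro r hr
  have hrA : (r : F) ∈ A := Submodule.subset_span ⟨r, hr, rfl⟩
  have hrP : (r : F) ∈ P := ⟨1, one_ne_zero, by simpa using hrA⟩
  have hrsupp : ((b.repr (r : F)).support : Set κ) ⊆ J := by
    intro j hj
    simp only [hJ, Finset.coe_biUnion, Set.mem_iUnion]
    exact ⟨r, hr, hj⟩
  have hπr : ((π (r : F) : ↥V) : F) = (r : F) := hπid _ (by exact_mod_cast hrsupp)
  have hπrP₁ : (π (r : F)) ∈ P₁ := by
    show ((π (r : F) : ↥V) : F) ∈ P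
    rw [hπr]; exact hrP
  have hρπ : ((ρ₂ (π (r : F)) : ↥P₁) : ↥V) = π (r : F) := hρ₂id _ hπrP₁
  have hval : ((ι₂ (ρ₂ (π (r : F)))) : F) = (r : F) := by
    show (((ρ₂ (π (r : F)) : ↥P₁) : ↥V) : F) = (r : F)
    rw [hρπ, hπr]
  have : ι₂ (ρ₂ (π (r : F))) = AddSubgroup.inclusion hle r := by
    apply Subtype.ext
    rw [hval]
    rfl
  show ψ₀ (ι₂ (ρ₂ (π (r : F)))) = φ r
  rw [this, hψ₀]

theorem homf_is_closed_and_is_closure_of_hom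
    {G : Type*} [AddCommGroup G] [TopologicalSpace G] [IsTopologicalAddGroup G]
    [PolishSpace G]
    (hdcp : ∀ k : ℕ, 0 < k → IsClosed {g : G | ∃ x : G, k • x = g})
    {F : Type*} [AddCommGroup F] [Countable F] [Module.Free ℤ F]
    (R : AddSubgroup F) :
    IsClosed {φ : {f : ↥R → G // ∀ a b : ↥R, f (a + b) = f a + f b} |
        ∀ (F₀ : AddSubgroup F) (hle : R ≤ F₀),
          ((fun x : F => (QuotientAddGroup.mk x : F ⧸ R)) '' (F₀ : Set F)).Finite →
          ∃ ψ : ↥F₀ →+ G, ∀ r : ↥R, ψ (AddSubgroup.inclusion hle r) = φ.1 r} ∧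
    {φ : {f : ↥R → G // ∀ a b : ↥R, f (a + b) = f a + f b} |
        ∀ (F₀ : AddSubgroup F) (hle : R ≤ F₀),
          ((fun x : F => (QuotientAddGroup.mk x : F ⧸ R)) '' (F₀ : Set F)).Finite →
          ∃ ψ : ↥F₀ →+ G, ∀ r : ↥R, ψ (AddSubgroup.inclusion hle r) = φ.1 r}
      = closure {φ : {f : ↥R → G // ∀ a b : ↥R, f (a + b) = f a + f b} |
          ∃ ψ : F →+ G, ∀ r : ↥R, ψ ↑r = φ.1 r} := by
  classical
  -- characterization of the set `Hom_f(F|R,G)` by divisibility conditions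
  have hchar : {φ : {f : ↥R → G // ∀ a b : ↥R, f (a + b) = f a + f b} |
        ∀ (F₀ : AddSubgroup F) (hle : R ≤ F₀),
          ((fun x : F => (QuotientAddGroup.mk x : F ⧸ R)) '' (F₀ : Set F)).Finite →
          ∃ ψ : ↥F₀ →+ G, ∀ r : ↥R, ψ (AddSubgroup.inclusion hle r) = φ.1 r}
      = ⋂ (m : ℤ), ⋂ (x : F), ⋂ (h : m • x ∈ R), ⋂ (_ : m ≠ 0),
          {φ : {f : ↥R → G // ∀ a b : ↥R, f (a + b) = f a + f b} |
            ∃ g : G, m • g = φ.1 ⟨m • x, h⟩} := by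
    ext φ
    simp only [Set.mem_setOf_eq, Set.mem_iInter]
    constructor
    · intro hφ m x h hm
      set P : Submodule ℤ F := Submodule.span ℤ {x} with hP
      set P' : AddSubgroup F := AddSubgroup.toIntSubmodule.symm P with hP'
      have htor : ∀ p ∈ P, ∃ k : ℤ, k ≠ 0 ∧ k • p ∈ R := by
        intro p hp
        obtain ⟨a, rfl⟩ := Submodule.mem_span_singleton.mp hp
        refine ⟨m, hm, ?_⟩
        rw [smul_comm]
        exact AddSubgroup.zsmul_mem R h a
      have hfin := sup_image_finite R P (Submodule.fg_span_singleton x) htor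
      obtain ⟨ψ, hψ⟩ := hφ (R ⊔ P') le_sup_left hfin
      have hxF₀ : x ∈ R ⊔ P' :=
        AddSubgroup.mem_sup_right (show x ∈ P from Submodule.mem_span_singleton_self x)
      refine ⟨ψ ⟨x, hxF₀⟩, ?_⟩
      have h1 : AddSubgroup.inclusion (le_sup_left : R ≤ R ⊔ P') ⟨m • x, h⟩
          = m • (⟨x, hxF₀⟩ : ↥(R ⊔ P')) := by
        apply Subtype.ext
        simp
      rw [← hψ ⟨m • x, h⟩, h1, map_zsmul]
    · intro hS F₀ hle hfin
      exact key_extend R F₀ hle hfin (AddMonoidHom.mk' φ.1 φ.2)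
        (fun m x h hm => hS m x h hm)
  have hclosed : IsClosed {φ : {f : ↥R → G // ∀ a b : ↥R, f (a + b) = f a + f b} |
        ∀ (F₀ : AddSubgroup F) (hle : R ≤ F₀),
          ((fun x : F => (QuotientAddGroup.mk x : F ⧸ R)) '' (F₀ : Set F)).Finite →
          ∃ ψ : ↥F₀ →+ G, ∀ r : ↥R, ψ (AddSubgroup.inclusion hle r) = φ.1 r} := by
    rw [hchar]
    refine isClosed_iInter fun m => isClosed_iInter fun x => isClosed_iInter fun h =>
      isClosed_iInter fun hm => ?_
    have hsign : ∀ c : G, (∃ g : G, m • g = c) ↔ (∃ y : G, m.natAbs • y = c) := by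
      intro c
      constructor
      · rintro ⟨g, rfl⟩
        rcases Int.natAbs_eq m with he | he
        · exact ⟨g, by rw [← natCast_zsmul, ← he]⟩
        · refine ⟨-g, ?_⟩
          rw [← natCast_zsmul, show ((m.natAbs : ℤ)) = -m by omega, neg_smul, smul_neg, neg_neg]
      · rintro ⟨y, rfl⟩
        rcases Int.natAbs_eq m with he | he
        · exact ⟨y, by rw [← natCast_zsmul, ← he]⟩
        · refine ⟨-y, ?_⟩
          rw [smul_neg, ← neg_smul, ← natCast_zsmul, show ((m.natAbs : ℤ)) = -m by omega]
    have hrw : {φ : {f : ↥R → G // ∀ a b : ↥R, f (a + b) = f a + f b} |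
          ∃ g : G, m • g = φ.1 ⟨m • x, h⟩}
        = (fun φ : {f : ↥R → G // ∀ a b : ↥R, f (a + b) = f a + f b} => φ.1 ⟨m • x, h⟩) ⁻¹'
            {v : G | ∃ y : G, m.natAbs • y = v} := by
      ext φ
      simp only [Set.mem_setOf_eq, Set.mem_preimage]
      exact hsign _
    rw [hrw]
    exact (hdcp m.natAbs (Int.natAbs_pos.mpr hm)).preimage
      ((continuous_apply (⟨m • x, h⟩ : ↥R)).comp continuous_subtype_val)
  refine ⟨hclosed, ?_⟩
  apply Set.Subset.antisymm
  · -- Hom_f ⊆ closure Hom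
    intro φ hφ
    rw [mem_closure_iff]
    intro o ho hmemo
    obtain ⟨V, hVopen, hpre⟩ := isOpen_induced_iff.mp ho
    have hφV : (φ : {f : ↥R → G // ∀ a b : ↥R, f (a + b) = f a + f b}).1 ∈ V := by
      rw [← hpre] at hmemo
      exact hmemo
    obtain ⟨I, u, h1, h2⟩ := isOpen_pi_iff.mp hVopen φ.1 hφV
    obtain ⟨Ψ, hΨ⟩ := global_approx R φ.1 hφ I
    refine ⟨⟨fun r => Ψ ↑r, fun a b => by simp⟩, ?_, ⟨Ψ, fun r => rfl⟩⟩
    rw [← hpre]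
    apply h2
    intro i hi
    show Ψ ↑i ∈ u i
    rw [hΨ i hi]
    exact (h1 i hi).2
  · -- closure Hom ⊆ Hom_f
    refine closure_minimal ?_ hclosed
    rintro φ ⟨ψ, hψ⟩ F₀ hle hfin
    refine ⟨ψ.comp F₀.subtype, fun r => ?_⟩
    show ψ ((AddSubgroup.inclusion hle r : ↥F₀) : F) = φ.1 r
    rw [AddSubgroup.coe_inclusion]
    exact hψ r
end

section
/- Let G be a Polish abelian group with the division closure property, A a cochain complex of countable free abelian groups, and A* its G-dual Polish chain complex. For each n ∈ ℤ, the rule Index([z])([a]) = z(a), for z ∈ Z_n(A*) and a ∈ Z^n(A), gives a well-defined group homomorphism Index : H_n(A*) → Hom(H^n(A),G), whose kernel equals °H_n(A*) = Ann(Z^n(A))/B_n(A*). Moreover, Index is a split epimorphism: for any group-homomorphism retraction i† : A^n → Z^n(A) of the inclusion Z^n(A) ↪ A^n (which exists since B^{n+1}(A) is free abelian), the map Hom(H^n(A),G) → Z_n(A*), φ ↦ φ ∘ p^n ∘ i† (where p^n : Z^n(A) → H^n(A) is the quotient map), is continuous, takes values in Z_n(A*), and induces a right inverse of Index. -/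
/-!
Statement 4: the index homomorphism `Index : H_n(A*) → Hom(H^n(A), G)` for the `G`-dual
Polish chain complex `A*` of a cochain complex `A` of countable free abelian groups:
it is well defined, its kernel is `°H_n(A*) = Ann(Z^n(A))/B_n(A*)`, and it is a split
epimorphism, split by `φ ↦ φ ∘ p^n ∘ i†` for any group-theoretic retraction
`i† : A^n → Z^n(A)` (which exists since `B^{n+1}(A)` is free abelian).

Encoding: the cochain complex is given by `δ n : A n →+ A (n+1)`; the statement at
paper degree `n` is formalized at degree `n+1`, quantified over `n : ℤ`.  Thus
`Z_{n+1}(A*) = ker (precompHom G (δ n))`, `B_{n+1}(A*) = range (precompHom G (δ (n+1)))`,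
`Z^{n+1}(A) = ker (δ (n+1))`, `B^{n+1}(A) = range (δ n)`.  The topology on dual groups
is the one inherited from the product topology, so the continuity assertion for the
splitting is expressed on underlying functions.
-/

/-- Precomposition `g ↦ g ∘ f`, as a homomorphism of dual groups. -/
def precompHom (G : Type*) [AddCommGroup G] {X Y : Type*} [AddCommGroup X] [AddCommGroup Y]
    (f : X →+ Y) : (Y →+ G) →+ (X →+ G) where
  toFun g := g.comp f
  map_zero' := rfl
  map_add' _ _ := rfl

/-- The submodule of finsupps supported on `[0, k)`. -/
noncomputable def finsuppTrunc (k : ℕ) : Submodule ℤ (ℕ →₀ ℤ) where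
  carrier := {v | ∀ j, k ≤ j → v j = 0}
  add_mem' := fun ha hb j hj => by simp [Finsupp.add_apply, ha j hj, hb j hj]
  zero_mem' := fun j hj => rfl
  smul_mem' := fun c v hv j hj => by simp [Finsupp.smul_apply, hv j hj]

theorem projective_of_le_finsupp_nat (N : Submodule ℤ (ℕ →₀ ℤ)) :
    Module.Projective ℤ ↥N := by
  classical
  -- the ideal of `k`-th coordinates of elements of `N` supported on `[0, k]`
  set D : ℕ → Submodule ℤ ℤ :=
    fun k => (N ⊓ finsuppTrunc (k + 1)).map (Finsupp.lapply k) with hD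
  haveI : ∀ k, (D k).IsPrincipal := fun k => inferInstance
  set d : ℕ → ℤ := fun k => Submodule.IsPrincipal.generator (D k) with hd
  have hgen : ∀ k, ∃ v, (v ∈ N ∧ v ∈ finsuppTrunc (k + 1)) ∧ v k = d k := by
    intro k
    obtain ⟨v, hv, hvk⟩ := Submodule.mem_map.mp
      (Submodule.IsPrincipal.generator_mem (D k))
    exact ⟨v, Submodule.mem_inf.mp hv, hvk⟩
  choose y hyN hyk using hgen
  have hyN' : ∀ k, y k ∈ N := fun k => (hyN k).1
  have hsupp : ∀ k j, k < j → y k j = 0 := fun k j hj => (hyN k).2 j hj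
  set S := {k : ℕ // d k ≠ 0} with hS
  set v : S → ℕ →₀ ℤ := fun i => y i.1 with hv
  -- membership of coordinates in `D k`
  have hmemD : ∀ (k : ℕ) (x : ℕ →₀ ℤ), x ∈ N → (∀ j, k + 1 ≤ j → x j = 0) →
      x k ∈ D k := by
    intro k x hxN hx
    exact ⟨x, Submodule.mem_inf.mpr ⟨hxN, hx⟩, rfl⟩
  -- spanning
  have span_aux : ∀ (k : ℕ) (x : ℕ →₀ ℤ), x ∈ N → (∀ j, k ≤ j → x j = 0) →
      x ∈ Submodule.span ℤ (Set.range v) := by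
    intro k
    induction k with
    | zero =>
      intro x _ h0
      have : x = 0 := by ext j; exact h0 j (Nat.zero_le j)
      rw [this]; exact Submodule.zero_mem _
    | succ k ih =>
      intro x hxN hx
      have hxk : x k ∈ D k := hmemD k x hxN hx
      rw [← Submodule.IsPrincipal.span_singleton_generator (D k),
        Submodule.mem_span_singleton] at hxk
      obtain ⟨c, hc⟩ := hxk
      by_cases hdk : d k = 0
      · have hx0 : x k = 0 := by
          rw [← hc, show Submodule.IsPrincipal.generator (D k) = d k from rfl, hdk, smul_zero]
        exact ih x hxN (fun j hj => by
          rcases Nat.eq_or_lt_of_le hj with h | h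
          · rw [← h]; exact hx0
          · exact hx j h)
      · have hx' : x - c • y k ∈ N := N.sub_mem hxN (N.smul_mem c (hyN' k))
        have hx'' : ∀ j, k ≤ j → (x - c • y k) j = 0 := by
          intro j hj
          rcases Nat.eq_or_lt_of_le hj with h | h
          · rw [← h, Finsupp.sub_apply, Finsupp.smul_apply, hyk k, ← hc]
            show (c • d k : ℤ) - c • d k = 0
            exact sub_self _
          · simp [Finsupp.sub_apply, Finsupp.smul_apply, hx j h, hsupp k j h]
        have h1 := ih _ hx' hx''
        have h2 : y k ∈ Submodule.span ℤ (Set.range v) :=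
          Submodule.subset_span ⟨⟨k, hdk⟩, rfl⟩
        have : x = (x - c • y k) + c • y k := by abel
        rw [this]
        exact Submodule.add_mem _ h1 (Submodule.smul_mem _ c h2)
  -- linear independence
  have indep : LinearIndependent ℤ v := by
    rw [linearIndependent_iff']
    intro s
    induction s using Finset.strongInduction with
    | _ s ih =>
      intro g hsum i hi
      have hsne : s.Nonempty := ⟨i, hi⟩
      set i₀ := s.max' hsne with hi₀
      have hg0 : g i₀ = 0 := by
        have heval : (∑ j ∈ s, g j • v j) i₀.1 = g i₀ * d i₀.1 := by
          rw [Finsupp.finset_sum_apply]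
          rw [Finset.sum_eq_single i₀]
          · simp [hv, hyk i₀.1]
          · intro j hj hji
            have : j < i₀ := lt_of_le_of_ne (s.le_max' j hj) hji
            have : j.1 < i₀.1 := this
            simp [hv, hsupp j.1 i₀.1 this]
          · intro h; exact absurd (s.max'_mem hsne) h
        rw [hsum] at heval
        have := heval.symm
        simp only [Finsupp.zero_apply] at this
        rcases mul_eq_zero.mp this with h | h
        · exact h
        · exact absurd h i₀.2
      have hsum' : ∑ j ∈ s.erase i₀, g j • v j = 0 := by
        have h2 := Finset.add_sum_erase s (fun j => g j • v j) (s.max'_mem hsne)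
        rw [← hi₀] at h2
        simp only [hg0, zero_smul, zero_add] at h2
        rw [h2]
        exact hsum
      by_cases hii : i = i₀
      · rw [hii]; exact hg0
      · exact ih (s.erase i₀) (Finset.erase_ssubset (s.max'_mem hsne)) g hsum'
          i (Finset.mem_erase.mpr ⟨hii, hi⟩)
  -- assemble a basis of `↥N`
  set w : S → ↥N := fun i => ⟨y i.1, hyN' i.1⟩ with hw
  have indep' : LinearIndependent ℤ w := by
    apply LinearIndependent.of_comp N.subtype
    convert indep
    rfl
  have hspan : ⊤ ≤ Submodule.span ℤ (Set.range w) := by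
    intro x _
    have hbound : ∀ j, (x.1.support.sup id + 1) ≤ j → x.1 j = 0 := by
      intro j hj
      by_contra h
      have hjs : j ∈ x.1.support := Finsupp.mem_support_iff.mpr h
      have := Finset.le_sup (f := id) hjs
      simp only [id_eq] at this
      omega
    have hx := span_aux _ x.1 x.2 hbound
    have himg : Set.range v = N.subtype '' Set.range w := by
      rw [← Set.range_comp]; rfl
    rw [himg, ← Submodule.map_span] at hx
    obtain ⟨z, hz, hzx⟩ := hx
    have : z = x := Subtype.ext hzx
    rwa [this] at hz
  exact Module.Projective.of_basis (Module.Basis.mk indep' hspan)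

/-- A submodule of a countable free `ℤ`-module is projective. -/
theorem projective_of_submodule_countable_free {C : Type*} [AddCommGroup C]
    [Countable C] [Module.Free ℤ C] (P : Submodule ℤ C) : Module.Projective ℤ ↥P := by
  classical
  let b := Module.Free.chooseBasis ℤ C
  haveI : Countable (Module.Free.ChooseBasisIndex ℤ C) := b.injective.countable
  obtain ⟨f, hf⟩ := exists_injective_nat (Module.Free.ChooseBasisIndex ℤ C)
  let J : C →ₗ[ℤ] (ℕ →₀ ℤ) := (Finsupp.lmapDomain ℤ ℤ f).comp (b.repr : C ≃ₗ[ℤ] _).toLinearMap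
  have hJ : Function.Injective J := by
    intro a b' h
    exact b.repr.injective (Finsupp.mapDomain_injective hf h)
  haveI := projective_of_le_finsupp_nat (P.map J)
  exact Module.Projective.of_equiv (Submodule.equivMapOfInjective J hJ P).symm

/-- Existence of a group-theoretic retraction onto the kernel of a homomorphism out of a
countable free abelian group. -/
theorem exists_retraction_onto_ker {X Y : Type*} [AddCommGroup X] [AddCommGroup Y]
    [Countable X] [Module.Free ℤ X] [Countable Y] [Module.Free ℤ Y] (f : X →+ Y) :
    ∃ r : X →+ ↥f.ker, ∀ a : ↥f.ker, r ↑a = a := by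
  classical
  set L : Submodule ℤ X := LinearMap.ker f.toIntLinearMap with hL
  haveI := projective_of_submodule_countable_free (LinearMap.range f.toIntLinearMap)
  haveI : Module.Projective ℤ (X ⧸ L) :=
    Module.Projective.of_equiv (LinearMap.quotKerEquivRange f.toIntLinearMap).symm
  obtain ⟨s, hs⟩ := Module.projective_lifting_property L.mkQ LinearMap.id L.mkQ_surjective
  have hsec : ∀ q, L.mkQ (s q) = q := fun q => by
    have := LinearMap.ext_iff.mp hs q
    simpa using this
  have hmemL : ∀ a : X, a - s (L.mkQ a) ∈ L := by
    intro a
    rw [← Submodule.Quotient.mk_eq_zero, ← Submodule.mkQ_apply, map_sub, hsec, sub_self]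
  have hker : ∀ a : X, a - s (L.mkQ a) ∈ f.ker := by
    intro a
    have h := hmemL a
    simp only [hL, LinearMap.mem_ker, AddMonoidHom.coe_toIntLinearMap] at h
    exact AddMonoidHom.mem_ker.mpr h
  refine ⟨{ toFun := fun a => ⟨a - s (L.mkQ a), hker a⟩,
            map_zero' := Subtype.ext (by simp),
            map_add' := fun a b => Subtype.ext (by
              push_cast
              rw [map_add, map_add]
              abel) }, ?_⟩
  intro a
  have ha : (a : X) ∈ L := by
    simp only [hL, LinearMap.mem_ker, AddMonoidHom.coe_toIntLinearMap]
    exact AddMonoidHom.mem_ker.mp a.2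
  apply Subtype.ext
  show (a : X) - s (L.mkQ a) = a
  rw [Submodule.mkQ_apply, (Submodule.Quotient.mk_eq_zero L).mpr ha, map_zero, sub_zero]

section IndexDef

variable {G : Type*} [AddCommGroup G] {A : ℤ → Type*} [∀ n, AddCommGroup (A n)]
  (δ : ∀ n : ℤ, A n →+ A (n + 1)) (n : ℤ)

/-- Restriction of a cocycle of `A*` to `Z^{n+1}(A)`, descended to `H^{n+1}(A)`. -/
def indexAux (z : ↥(precompHom G (δ n)).ker) :
    (↥(δ (n + 1)).ker ⧸ ((δ n).range.addSubgroupOf (δ (n + 1)).ker)) →+ G :=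
  QuotientAddGroup.lift _ (z.1.comp (δ (n + 1)).ker.subtype) (by
    intro a ha
    rw [AddSubgroup.mem_addSubgroupOf] at ha
    obtain ⟨x, hx⟩ := ha
    have hz := AddMonoidHom.mem_ker.mp z.2
    show z.1 ↑a = 0
    rw [← hx]
    exact DFunLike.congr_fun hz x)

/-- `indexAux` as a homomorphism in `z`. -/
def indexFst : ↥(precompHom G (δ n)).ker →+
    ((↥(δ (n + 1)).ker ⧸ ((δ n).range.addSubgroupOf (δ (n + 1)).ker)) →+ G) where
  toFun := indexAux δ n
  map_zero' := by
    refine AddMonoidHom.ext fun q => ?_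
    refine QuotientAddGroup.induction_on q fun a => ?_
    rfl
  map_add' z w := by
    refine AddMonoidHom.ext fun q => ?_
    refine QuotientAddGroup.induction_on q fun a => ?_
    rfl

/-- The index homomorphism `H_{n+1}(A*) →+ Hom(H^{n+1}(A), G)`. -/
def indexHom :
    (↥(precompHom G (δ n)).ker ⧸
      ((precompHom G (δ (n + 1))).range.addSubgroupOf (precompHom G (δ n)).ker)) →+
    ((↥(δ (n + 1)).ker ⧸ ((δ n).range.addSubgroupOf (δ (n + 1)).ker)) →+ G) :=
  QuotientAddGroup.lift _ (indexFst δ n) (by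
    intro z hz
    rw [AddSubgroup.mem_addSubgroupOf] at hz
    obtain ⟨w, hw⟩ := hz
    refine AddMonoidHom.ext fun q => ?_
    refine QuotientAddGroup.induction_on q fun a => ?_
    show z.1 ↑a = 0
    have h1 : z.1 ↑a = w (δ (n + 1) ↑a) := by rw [← hw]; rfl
    rw [h1, AddMonoidHom.mem_ker.mp a.2, map_zero])

end IndexDef

theorem index_homomorphism_is_split_epi_with_kernel_ann
    {G : Type*} [AddCommGroup G] [TopologicalSpace G] [IsTopologicalAddGroup G]
    [PolishSpace G]
    (hdcp : ∀ k : ℕ, 0 < k → IsClosed {g : G | ∃ x : G, k • x = g})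
    (A : ℤ → Type*) [∀ n, AddCommGroup (A n)] [∀ n, Countable (A n)]
    [∀ n, Module.Free ℤ (A n)]
    (δ : ∀ n : ℤ, A n →+ A (n + 1))
    (hδδ : ∀ (n : ℤ) (x : A n), δ (n + 1) (δ n x) = 0) :
    ∀ n : ℤ,
      ∃ Index :
          (↥(precompHom G (δ n)).ker ⧸
            ((precompHom G (δ (n + 1))).range.addSubgroupOf (precompHom G (δ n)).ker)) →+
          ((↥(δ (n + 1)).ker ⧸ ((δ n).range.addSubgroupOf (δ (n + 1)).ker)) →+ G),
        -- the defining rule Index([z])([a]) = z(a)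
        (∀ (z : ↥(precompHom G (δ n)).ker) (a : ↥(δ (n + 1)).ker),
          Index (QuotientAddGroup.mk z) (QuotientAddGroup.mk a) = z.1 a.1) ∧
        -- the kernel of Index is °H_n(A*) = Ann(Z^n(A))/B_n(A*)
        (∀ z : ↥(precompHom G (δ n)).ker,
          (Index (QuotientAddGroup.mk z) = 0 ↔ ∀ a ∈ (δ (n + 1)).ker, z.1 a = 0)) ∧
        -- a group-theoretic retraction of the inclusion Z^{n+1}(A) ↪ A^{n+1} exists
        (∃ r : A (n + 1) →+ ↥(δ (n + 1)).ker, ∀ a : ↥(δ (n + 1)).ker, r ↑a = a) ∧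
        -- for any such retraction, φ ↦ φ ∘ p ∘ i† is continuous, takes values in
        -- Z_{n+1}(A*), and induces a right inverse of Index
        (∀ r : A (n + 1) →+ ↥(δ (n + 1)).ker, (∀ a : ↥(δ (n + 1)).ker, r ↑a = a) →
          Continuous (fun (φ : (↥(δ (n + 1)).ker ⧸
                ((δ n).range.addSubgroupOf (δ (n + 1)).ker)) → G) (a : A (n + 1)) =>
              φ (QuotientAddGroup.mk (r a))) ∧
          ∀ φ : (↥(δ (n + 1)).ker ⧸ ((δ n).range.addSubgroupOf (δ (n + 1)).ker)) →+ G,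
            ∃ hmem : φ.comp ((QuotientAddGroup.mk'
                ((δ n).range.addSubgroupOf (δ (n + 1)).ker)).comp r) ∈
                (precompHom G (δ n)).ker,
              Index (QuotientAddGroup.mk
                (⟨φ.comp ((QuotientAddGroup.mk'
                    ((δ n).range.addSubgroupOf (δ (n + 1)).ker)).comp r), hmem⟩ :
                  ↥(precompHom G (δ n)).ker)) = φ) := by
  intro n
  refine ⟨indexHom δ n, ?_, ?_, ?_, ?_⟩
  · intro z a
    rfl
  · intro z
    constructor
    · intro h a ha
      exact DFunLike.congr_fun h (QuotientAddGroup.mk (⟨a, ha⟩ : ↥(δ (n + 1)).ker))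
    · intro h
      refine AddMonoidHom.ext fun q => ?_
      refine QuotientAddGroup.induction_on q fun a => ?_
      exact h ↑a a.2
  · exact exists_retraction_onto_ker (δ (n + 1))
  · intro r hr
    refine ⟨continuous_pi fun a => continuous_apply _, ?_⟩
    intro φ
    have hmem : φ.comp ((QuotientAddGroup.mk'
        ((δ n).range.addSubgroupOf (δ (n + 1)).ker)).comp r) ∈ (precompHom G (δ n)).ker := by
      refine AddMonoidHom.mem_ker.mpr ?_
      refine AddMonoidHom.ext fun x => ?_
      have hmemx : δ n x ∈ (δ (n + 1)).ker := AddMonoidHom.mem_ker.mpr (hδδ n x)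
      show φ ((QuotientAddGroup.mk'
        ((δ n).range.addSubgroupOf (δ (n + 1)).ker)) (r ((⟨δ n x, hmemx⟩ : ↥(δ (n + 1)).ker) : A (n + 1)))) = 0
      rw [hr ⟨δ n x, hmemx⟩]
      have h2 : (QuotientAddGroup.mk' ((δ n).range.addSubgroupOf (δ (n + 1)).ker))
          (⟨δ n x, hmemx⟩ : ↥(δ (n + 1)).ker) = 0 := by
        rw [QuotientAddGroup.mk'_apply, QuotientAddGroup.eq_zero_iff]
        exact AddSubgroup.mem_addSubgroupOf.mpr ⟨x, rfl⟩
      rw [h2, map_zero]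
    refine ⟨hmem, ?_⟩
    refine AddMonoidHom.ext fun q => ?_
    refine QuotientAddGroup.induction_on q fun a => ?_
    show φ ((QuotientAddGroup.mk' ((δ n).range.addSubgroupOf (δ (n + 1)).ker)) (r ↑a)) =
      φ (QuotientAddGroup.mk a)
    rw [hr a]
    rfl
end

section
/- Let G be a Polish abelian group with the division closure property, A a cochain complex of countable free abelian groups, and A* its G-dual Polish chain complex. For each n ∈ ℤ, the rule coIndex([f]) = [(−1)^n (f ∘ δ^n)], for f ∈ Hom(B^{n+1}(A),G), gives a well-defined injective group homomorphism coIndex : Hom(B^{n+1}(A),G)/Hom(Z^{n+1}(A)|B^{n+1}(A),G) → H_n(A*), whose image equals °H_n(A*) = Ann(Z^n(A))/B_n(A*). Moreover, coIndex is a split monomorphism: for any group-homomorphism right inverse δ† : B^{n+1}(A) → A^n of δ^n : A^n → B^{n+1}(A), the map Z_n(A*) → Hom(B^{n+1}(A),G), z ↦ (−1)^n (z ∘ δ†), is continuous and induces a left inverse of coIndex. -/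
/-!
Statement 5: the co-index homomorphism
`coIndex : Hom(B^{n+1}(A),G)/Hom(Z^{n+1}(A)|B^{n+1}(A),G) → H_n(A*)`, `[f] ↦ [(−1)^n (f∘δ^n)]`,
for the `G`-dual Polish chain complex `A*` of a cochain complex `A` of countable free
abelian groups: it is well defined and injective, its image is
`°H_n(A*) = Ann(Z^n(A))/B_n(A*)`, and it is split by the continuous map
`z ↦ (−1)^n (z ∘ δ†)` for any group-theoretic section `δ† : B^{n+1}(A) → A^n` of `δ^n`.

Encoding: the cochain complex is given by `δ n : A n →+ A (n+1)`; the statement at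
paper degree `n` is formalized at degree `n+1`, quantified over `n : ℤ`, so that the
sign `(−1)^n` of the paper is `sgn (n+1)`.  Thus `Z_{n+1}(A*) = ker (precompHom G (δ n))`,
`B_{n+1}(A*) = range (precompHom G (δ (n+1)))`, `B^{n+2}(A) = range (δ (n+1))`,
`Z^{n+2}(A) = ker (δ (n+1+1))`, and `f ∘ δ^{n+1}` is `f.comp (δ (n+1)).rangeRestrict`.
-/

/-- `(-1)^n` for `n : ℤ`. -/
def sgn (n : ℤ) : ℤ := if Even n then 1 else -1

/-- The subgroup of `Hom(S, G)` of homomorphisms that extend to `T`. -/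
def extSub {X G : Type*} [AddCommGroup X] [AddCommGroup G] (S T : AddSubgroup X) :
    AddSubgroup (↥S →+ G) where
  carrier := {f | ∃ ψ : ↥T →+ G, ∀ (x : X) (hxS : x ∈ S) (hxT : x ∈ T),
    ψ ⟨x, hxT⟩ = f ⟨x, hxS⟩}
  zero_mem' := ⟨0, fun _ _ _ => rfl⟩
  add_mem' := by
    rintro f g ⟨ψ, hψ⟩ ⟨χ, hχ⟩
    exact ⟨ψ + χ, fun x h1 h2 => by
      simp [AddMonoidHom.add_apply, hψ x h1 h2, hχ x h1 h2]⟩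
  neg_mem' := by
    rintro f ⟨ψ, hψ⟩
    exact ⟨-ψ, fun x h1 h2 => by simp [hψ x h1 h2]⟩



/-- Core lemma: any homomorphism onto a subgroup of `ℕ →₀ ℤ` splits. -/
lemma exists_section_finsupp {M : Type*} [AddCommGroup M] (p : M →+ (ℕ →₀ ℤ)) :
    ∃ σ : ↥p.range →+ M, ∀ y : ↥p.range, p (σ y) = ↑y := by
  classical
  set N := p.range with hN
  have key : ∀ k : ℕ, ∃ (w : ℕ →₀ ℤ) (u : M), p u = w ∧ (∀ i, k < i → w i = 0) ∧
      ∀ y : ℕ →₀ ℤ, y ∈ N → (∀ i, k < i → y i = 0) → w k ∣ y k := by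
    intro k
    set D : AddSubgroup ℤ :=
      { carrier := {c | ∃ y : ℕ →₀ ℤ, y ∈ N ∧ (∀ i, k < i → y i = 0) ∧ y k = c}
        zero_mem' := ⟨0, zero_mem N, fun _ _ => rfl, rfl⟩
        add_mem' := by
          rintro a b ⟨y, hy, hy2, rfl⟩ ⟨z, hz, hz2, rfl⟩
          exact ⟨y + z, add_mem hy hz, fun i hi => by
            simp [Finsupp.add_apply, hy2 i hi, hz2 i hi], by simp [Finsupp.add_apply]⟩
        neg_mem' := by
          rintro a ⟨y, hy, hy2, rfl⟩
          exact ⟨-y, neg_mem hy, fun i hi => by simp [hy2 i hi], by simp⟩ } with hD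
    obtain ⟨a, ha⟩ := Int.subgroup_cyclic D
    have haD : a ∈ D := by rw [ha]; exact AddSubgroup.subset_closure rfl
    obtain ⟨w, hwN, hwsupp, hwk⟩ := haD
    obtain ⟨u, hu⟩ := hwN
    refine ⟨w, u, hu, hwsupp, ?_⟩
    intro y hy hy2
    have hyD : y k ∈ D := ⟨y, hy, hy2, rfl⟩
    rw [ha, AddSubgroup.mem_closure_singleton] at hyD
    obtain ⟨m, hm⟩ := hyD
    rw [hwk]
    exact Dvd.intro_left m (by rw [← hm]; simp [zsmul_eq_mul])
  choose w u hpu hwsupp hdvd using key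
  set S : ℕ → (ℕ →₀ ℤ) → M := fun k => Nat.rec (fun _ => 0)
    (fun k Sk y => (y k / w k k) • u k + Sk (y - (y k / w k k) • w k)) k with hS
  have hS0 : ∀ y, S 0 y = 0 := fun _ => rfl
  have hSsucc : ∀ k y, S (k + 1) y =
      (y k / w k k) • u k + S k (y - (y k / w k k) • w k) := fun _ _ => rfl
  -- step facts
  have hexact : ∀ k (y : ℕ →₀ ℤ), y ∈ N → (∀ i, k + 1 ≤ i → y i = 0) →
      (y k / w k k) * (w k k) = y k := by
    intro k y hy hy2
    exact Int.ediv_mul_cancel (hdvd k y hy (fun i hi => hy2 i hi))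
  have hstep : ∀ k (y : ℕ →₀ ℤ), y ∈ N → (∀ i, k + 1 ≤ i → y i = 0) →
      (y - (y k / w k k) • w k) ∈ N ∧
      (∀ i, k ≤ i → (y - (y k / w k k) • w k) i = 0) := by
    intro k y hy hy2
    constructor
    · exact sub_mem hy (zsmul_mem (⟨u k, hpu k⟩ : w k ∈ N) _)
    · intro i hi
      rcases eq_or_lt_of_le hi with rfl | hlt
      · simp only [Finsupp.sub_apply, Finsupp.smul_apply, smul_eq_mul]
        rw [hexact k y hy hy2]; ring
      · simp only [Finsupp.sub_apply, Finsupp.smul_apply, smul_eq_mul]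
        rw [hy2 i hlt, hwsupp k i hlt]; ring
  -- main property
  have hmain : ∀ k (y : ℕ →₀ ℤ), y ∈ N → (∀ i, k ≤ i → y i = 0) → p (S k y) = y := by
    intro k
    induction k with
    | zero =>
      intro y _ hy2
      have : y = 0 := Finsupp.ext fun i => hy2 i (Nat.zero_le i)
      rw [this, hS0]; simp
    | succ k ih =>
      intro y hy hy2
      obtain ⟨h1, h2⟩ := hstep k y hy hy2
      rw [hSsucc, map_add, map_zsmul, hpu, ih _ h1 h2]
      abel
  -- stabilization
  have hstab : ∀ k (y : ℕ →₀ ℤ), (∀ i, k ≤ i → y i = 0) → S (k + 1) y = S k y := by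
    intro k y hy2
    have hyk : y k = 0 := hy2 k le_rfl
    rw [hSsucc, hyk]
    simp
  have hstabm : ∀ k m (y : ℕ →₀ ℤ), k ≤ m → (∀ i, k ≤ i → y i = 0) → S m y = S k y := by
    intro k m y hkm hy2
    induction m, hkm using Nat.le_induction with
    | base => rfl
    | succ m hkm ih =>
      rw [hstab m y (fun i hi => hy2 i (le_trans hkm hi)), ih]
  -- additivity
  have hadd : ∀ k (y z : ℕ →₀ ℤ), y ∈ N → z ∈ N → (∀ i, k ≤ i → y i = 0) →
      (∀ i, k ≤ i → z i = 0) → S k (y + z) = S k y + S k z := by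
    intro k
    induction k with
    | zero => intro y z _ _ _ _; rw [hS0, hS0, hS0]; simp
    | succ k ih =>
      intro y z hy hz hy2 hz2
      have hyz : (y + z) ∈ N := add_mem hy hz
      have hyz2 : ∀ i, k + 1 ≤ i → (y + z) i = 0 := fun i hi => by
        simp [Finsupp.add_apply, hy2 i hi, hz2 i hi]
      have hcs : (y + z) k / w k k = y k / w k k + z k / w k k := by
        rcases eq_or_ne (w k k) 0 with h0 | h0
        · have e1 : y k = 0 := by have := hexact k y hy hy2; rw [h0, mul_zero] at this; omega
          have e2 : z k = 0 := by have := hexact k z hz hz2; rw [h0, mul_zero] at this; omega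
          simp [Finsupp.add_apply, e1, e2]
        · apply mul_right_cancel₀ h0
          rw [hexact k _ hyz hyz2, add_mul, hexact k y hy hy2, hexact k z hz hz2,
            Finsupp.add_apply]
      obtain ⟨hy1', hy2'⟩ := hstep k y hy hy2
      obtain ⟨hz1', hz2'⟩ := hstep k z hz hz2
      have hre : (y + z) - ((y + z) k / w k k) • w k =
          (y - (y k / w k k) • w k) + (z - (z k / w k k) • w k) := by
        rw [hcs, add_smul]; abel
      rw [hSsucc, hSsucc, hSsucc, hre, hcs, add_smul,
        ih _ _ hy1' hz1' hy2' hz2']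
      abel
  -- degree bound
  have hdeg : ∀ (y : ℕ →₀ ℤ) (i : ℕ), y.support.sup _root_.id + 1 ≤ i → y i = 0 := by
    intro y i hi
    by_contra h
    have him : i ∈ y.support := Finsupp.mem_support_iff.mpr h
    have := Finset.le_sup (f := _root_.id) him
    simp only [_root_.id] at this
    omega
  -- assemble the section
  refine ⟨AddMonoidHom.mk' (fun y => S ((y : ℕ →₀ ℤ).support.sup _root_.id + 1) (y : ℕ →₀ ℤ)) ?_, ?_⟩
  · intro y z
    set ky := (y : ℕ →₀ ℤ).support.sup _root_.id + 1
    set kz := (z : ℕ →₀ ℤ).support.sup _root_.id + 1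
    set ks := ((y + z : ↥N) : ℕ →₀ ℤ).support.sup _root_.id + 1
    set K := max ks (max ky kz) with hK
    have hyv : ∀ i, ky ≤ i → (y : ℕ →₀ ℤ) i = 0 := hdeg _
    have hzv : ∀ i, kz ≤ i → (z : ℕ →₀ ℤ) i = 0 := hdeg _
    have hsv : ∀ i, ks ≤ i → ((y + z : ↥N) : ℕ →₀ ℤ) i = 0 := hdeg _
    have e1 : S ks ((y + z : ↥N) : ℕ →₀ ℤ) = S K ((y + z : ↥N) : ℕ →₀ ℤ) :=
      (hstabm ks K _ (le_max_left _ _) hsv).symm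
    have e2 : S ky (y : ℕ →₀ ℤ) = S K (y : ℕ →₀ ℤ) :=
      (hstabm ky K _ (le_trans (le_max_left _ _) (le_max_right _ _)) hyv).symm
    have e3 : S kz (z : ℕ →₀ ℤ) = S K (z : ℕ →₀ ℤ) :=
      (hstabm kz K _ (le_trans (le_max_right _ _) (le_max_right _ _)) hzv).symm
    show S ks _ = S ky _ + S kz _
    rw [e1, e2, e3]
    have hyK : ∀ i, K ≤ i → (y : ℕ →₀ ℤ) i = 0 := fun i hi =>
      hyv i (le_trans (le_trans (le_max_left _ _) (le_max_right _ _)) hi)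
    have hzK : ∀ i, K ≤ i → (z : ℕ →₀ ℤ) i = 0 := fun i hi =>
      hzv i (le_trans (le_trans (le_max_right _ _) (le_max_right _ _)) hi)
    have : ((y + z : ↥N) : ℕ →₀ ℤ) = (y : ℕ →₀ ℤ) + (z : ℕ →₀ ℤ) := rfl
    rw [this]
    exact hadd K _ _ y.2 z.2 hyK hzK
  · intro y
    exact hmain _ _ y.2 (hdeg _)

/-- A homomorphism onto a subgroup of a countable free abelian group splits. -/
lemma exists_section_of_free {X Y : Type*} [AddCommGroup X] [AddCommGroup Y]
    [Countable Y] [Module.Free ℤ Y] (d : X →+ Y) :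
    ∃ τ : ↥d.range →+ X, ∀ y : ↥d.range, d (τ y) = ↑y := by
  classical
  set b := Module.Free.chooseBasis ℤ Y
  have hinj : Function.Injective b := b.injective
  have : Countable (Module.Free.ChooseBasisIndex ℤ Y) := hinj.countable
  obtain ⟨e, he⟩ := Countable.exists_injective_nat (Module.Free.ChooseBasisIndex ℤ Y)
  set j : Y →ₗ[ℤ] (ℕ →₀ ℤ) :=
    (Finsupp.lmapDomain ℤ ℤ e).comp (b.repr : Y ≃ₗ[ℤ] _).toLinearMap with hj
  have hjinj : Function.Injective j := by
    apply Function.Injective.comp (Finsupp.mapDomain_injective he)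
    exact b.repr.injective
  set p : X →+ (ℕ →₀ ℤ) := j.toAddMonoidHom.comp d with hp
  obtain ⟨σ, hσ⟩ := exists_section_finsupp p
  have hmem : ∀ y : ↥d.range, j ↑y ∈ p.range := by
    rintro ⟨y, x, rfl⟩
    exact ⟨x, rfl⟩
  refine ⟨AddMonoidHom.mk' (fun y => σ ⟨j ↑y, hmem y⟩) ?_, ?_⟩
  · intro y z
    rw [← map_add]
    show σ ⟨j ↑(y + z), hmem (y + z)⟩ = σ (⟨j ↑y, hmem y⟩ + ⟨j ↑z, hmem z⟩)
    congr 1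
    apply Subtype.ext
    simp
  · intro y
    apply hjinj
    exact hσ ⟨j ↑y, hmem y⟩

/-- Extension lemma: a homomorphism defined on the kernel of `d : X →+ Y`, `Y` free
abelian and countable, extends to `X`. -/
lemma exists_extension_of_ker {X Y G : Type*} [AddCommGroup X] [AddCommGroup Y]
    [AddCommGroup G] [Countable Y] [Module.Free ℤ Y] (d : X →+ Y) (ψ : ↥d.ker →+ G) :
    ∃ g : X →+ G, ∀ (x : X) (hx : x ∈ d.ker), g x = ψ ⟨x, hx⟩ := by
  obtain ⟨τ, hτ⟩ := exists_section_of_free d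
  have hker : ∀ x : X, x - τ (d.rangeRestrict x) ∈ d.ker := by
    intro x
    rw [AddMonoidHom.mem_ker, map_sub, hτ, AddMonoidHom.coe_rangeRestrict, sub_self]
  set r : X →+ ↥d.ker := AddMonoidHom.mk' (fun x => ⟨x - τ (d.rangeRestrict x), hker x⟩)
    (by intro x y; apply Subtype.ext; simp; abel) with hr
  refine ⟨ψ.comp r, ?_⟩
  intro x hx
  have h0 : d.rangeRestrict x = 0 := by
    apply Subtype.ext; simpa [AddMonoidHom.coe_rangeRestrict] using hx
  simp only [AddMonoidHom.comp_apply, hr, AddMonoidHom.mk'_apply]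
  congr 1
  apply Subtype.ext
  simp [h0]

set_option maxHeartbeats 2000000 in
theorem coindex_homomorphism_is_split_mono_with_image_ann
    {G : Type*} [AddCommGroup G] [TopologicalSpace G] [IsTopologicalAddGroup G]
    [PolishSpace G]
    (hdcp : ∀ k : ℕ, 0 < k → IsClosed {g : G | ∃ x : G, k • x = g})
    (A : ℤ → Type*) [∀ n, AddCommGroup (A n)] [∀ n, Countable (A n)]
    [∀ n, Module.Free ℤ (A n)]
    (δ : ∀ n : ℤ, A n →+ A (n + 1))
    (hδδ : ∀ (n : ℤ) (x : A n), δ (n + 1) (δ n x) = 0) :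
    ∀ n : ℤ,
      ∃ coIndex :
          ((↥(δ (n + 1)).range →+ G) ⧸ extSub (δ (n + 1)).range (δ (n + 1 + 1)).ker) →+
          (↥(precompHom G (δ n)).ker ⧸
            ((precompHom G (δ (n + 1))).range.addSubgroupOf (precompHom G (δ n)).ker)),
        -- the defining rule coIndex([f]) = [(−1)^n (f ∘ δ^n)]
        (∀ f : ↥(δ (n + 1)).range →+ G,
          ∃ hmem : sgn (n + 1) • f.comp (δ (n + 1)).rangeRestrict ∈
              (precompHom G (δ n)).ker,
            coIndex (QuotientAddGroup.mk f) =
              QuotientAddGroup.mk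
                (⟨sgn (n + 1) • f.comp (δ (n + 1)).rangeRestrict, hmem⟩ :
                  ↥(precompHom G (δ n)).ker)) ∧
        -- coIndex is injective
        Function.Injective coIndex ∧
        -- the image of coIndex is °H_n(A*) = Ann(Z^n(A))/B_n(A*)
        (∀ z : ↥(precompHom G (δ n)).ker,
          ((∀ a ∈ (δ (n + 1)).ker, z.1 a = 0) ↔
            ∃ q, coIndex q = QuotientAddGroup.mk z)) ∧
        -- for any group-theoretic section δ† of δ^n : A^n → B^{n+1}(A), the map
        -- z ↦ (−1)^n (z ∘ δ†) is continuous and induces a left inverse of coIndex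
        (∀ s : ↥(δ (n + 1)).range →+ A (n + 1),
          (∀ b : ↥(δ (n + 1)).range, δ (n + 1) (s b) = ↑b) →
          Continuous (fun (z : A (n + 1) → G) (b : ↥(δ (n + 1)).range) =>
            sgn (n + 1) • z (s b)) ∧
          ∃ L : (↥(precompHom G (δ n)).ker ⧸
              ((precompHom G (δ (n + 1))).range.addSubgroupOf (precompHom G (δ n)).ker)) →+
              ((↥(δ (n + 1)).range →+ G) ⧸ extSub (δ (n + 1)).range (δ (n + 1 + 1)).ker),
            (∀ z : ↥(precompHom G (δ n)).ker,
              L (QuotientAddGroup.mk z) = QuotientAddGroup.mk (sgn (n + 1) • z.1.comp s)) ∧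
            ∀ q, L (coIndex q) = q) := by
  classical
  intro n
  set S : AddSubgroup (A (n+1+1)) := (δ (n + 1)).range with hSdef
  set T : AddSubgroup (A (n+1+1)) := (δ (n + 1 + 1)).ker with hTdef
  set K : AddSubgroup ↥(AddMonoidHom.ker (precompHom G (δ n))) :=
    ((precompHom G (δ (n + 1))).range.addSubgroupOf (precompHom G (δ n)).ker) with hKdef
  have hee : sgn (n + 1) * sgn (n + 1) = 1 := by unfold sgn; split <;> norm_num
  -- membership of the defining rule's value in the cycle group
  have hmem : ∀ f : ↥S →+ G,
      sgn (n + 1) • f.comp (δ (n + 1)).rangeRestrict ∈ (precompHom G (δ n)).ker := by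
    intro f
    rw [AddMonoidHom.mem_ker]
    refine AddMonoidHom.ext fun x => ?_
    have h0 : (δ (n + 1)).rangeRestrict (δ n x) = 0 := by
      apply Subtype.ext
      simp [AddMonoidHom.coe_rangeRestrict, hδδ n x]
    show (sgn (n + 1) • f.comp (δ (n + 1)).rangeRestrict).comp (δ n) x = 0
    simp [h0]
  -- the basic homomorphism F
  set F : (↥S →+ G) →+ ↥(precompHom G (δ n)).ker := AddMonoidHom.mk'
    (fun f => (⟨sgn (n + 1) • f.comp (δ (n + 1)).rangeRestrict, hmem f⟩ :
      ↥(precompHom G (δ n)).ker))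
    (by
      intro f g
      apply Subtype.ext
      show sgn (n + 1) • (f + g).comp (δ (n + 1)).rangeRestrict = _
      rw [AddMonoidHom.add_comp, smul_add]
      rfl) with hFdef
  -- F kills extSub
  have h0 : ∀ f ∈ extSub S T,
      ((QuotientAddGroup.mk' K).comp F) f = 0 := by
    intro f hf
    obtain ⟨ψ, hψ⟩ := hf
    obtain ⟨g, hg⟩ := exists_extension_of_ker (δ (n + 1 + 1)) ψ
    rw [AddMonoidHom.comp_apply, QuotientAddGroup.mk'_apply, QuotientAddGroup.eq_zero_iff,
      AddSubgroup.mem_addSubgroupOf]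
    refine ⟨sgn (n + 1) • g, ?_⟩
    show (sgn (n + 1) • g).comp (δ (n + 1)) = _
    refine AddMonoidHom.ext fun x => ?_
    have hxS : δ (n + 1) x ∈ S := ⟨x, rfl⟩
    have hxT : δ (n + 1) x ∈ T := by
      rw [hTdef, AddMonoidHom.mem_ker]; exact hδδ (n + 1) x
    show sgn (n + 1) • g (δ (n + 1) x) =
      (sgn (n + 1) • f.comp (δ (n + 1)).rangeRestrict) x
    have e1 : g (δ (n + 1) x) = ψ ⟨δ (n + 1) x, hxT⟩ := hg _ hxT
    have e2 : ψ ⟨δ (n + 1) x, hxT⟩ = f ⟨δ (n + 1) x, hxS⟩ := hψ _ hxS hxT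
    have e3 : (δ (n + 1)).rangeRestrict x = ⟨δ (n + 1) x, hxS⟩ := by
      apply Subtype.ext; simp [AddMonoidHom.coe_rangeRestrict]
    show sgn (n + 1) • g (δ (n + 1) x) =
      sgn (n + 1) • f ((δ (n + 1)).rangeRestrict x)
    rw [e1, e2, e3]
  set coIndexH := QuotientAddGroup.lift (extSub S T) ((QuotientAddGroup.mk' K).comp F) h0
    with hCdef
  -- the defining rule
  have hrule : ∀ f : ↥S →+ G, coIndexH (QuotientAddGroup.mk f) =
      QuotientAddGroup.mk (F f) := fun f => rfl
  -- generic construction of the left inverse from a section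
  have LSEC : ∀ s : ↥S →+ A (n + 1), (∀ b : ↥S, δ (n + 1) (s b) = ↑b) →
      ∃ L : (↥(precompHom G (δ n)).ker ⧸ K) → ((↥S →+ G) ⧸ extSub S T),
        ∃ Lh : (↥(precompHom G (δ n)).ker ⧸ K) →+ ((↥S →+ G) ⧸ extSub S T), L = Lh ∧
        (∀ z : ↥(precompHom G (δ n)).ker,
          L (QuotientAddGroup.mk z) = QuotientAddGroup.mk (sgn (n + 1) • z.1.comp s)) ∧
        ∀ q, L (coIndexH q) = q := by
    intro s hs
    have hL0add : ∀ y z : ↥(precompHom G (δ n)).ker,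
        (QuotientAddGroup.mk (sgn (n + 1) • ((y + z : ↥(precompHom G (δ n)).ker) :
          A (n + 1) →+ G).comp s) : (↥S →+ G) ⧸ extSub S T) =
        QuotientAddGroup.mk (sgn (n + 1) • (y : A (n + 1) →+ G).comp s) +
        QuotientAddGroup.mk (sgn (n + 1) • (z : A (n + 1) →+ G).comp s) := by
      intro y z
      rw [← QuotientAddGroup.mk_add]
      congr 1
      show sgn (n + 1) • ((y : A (n + 1) →+ G) + (z : A (n + 1) →+ G)).comp s = _
      rw [AddMonoidHom.add_comp, smul_add]
    set L0 : ↥(precompHom G (δ n)).ker →+ ((↥S →+ G) ⧸ extSub S T) :=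
      AddMonoidHom.mk' (fun z => QuotientAddGroup.mk (sgn (n + 1) •
        (z : A (n + 1) →+ G).comp s)) hL0add with hL0def
    have hL0 : ∀ z ∈ K, L0 z = 0 := by
      intro z hz
      rw [AddSubgroup.mem_addSubgroupOf] at hz
      obtain ⟨g, hg⟩ := hz
      show (QuotientAddGroup.mk (sgn (n + 1) • (z : A (n + 1) →+ G).comp s) :
        (↥S →+ G) ⧸ extSub S T) = 0
      rw [QuotientAddGroup.eq_zero_iff]
      refine ⟨sgn (n + 1) • g.comp T.subtype, ?_⟩
      intro x hxS hxT
      have hgz : g.comp (δ (n + 1)) = (z : A (n + 1) →+ G) := hg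
      show sgn (n + 1) • g x = sgn (n + 1) • (z : A (n + 1) →+ G) (s ⟨x, hxS⟩)
      rw [← hgz]
      show sgn (n + 1) • g x = sgn (n + 1) • g (δ (n + 1) (s ⟨x, hxS⟩))
      rw [hs ⟨x, hxS⟩]
    set L := QuotientAddGroup.lift K L0 hL0 with hLdef
    refine ⟨L, L, rfl, fun z => rfl, ?_⟩
    intro q
    induction q using QuotientAddGroup.induction_on with
    | H f =>
      rw [hrule f]
      show L (QuotientAddGroup.mk (F f)) = _
      have : L (QuotientAddGroup.mk (F f)) =
          QuotientAddGroup.mk (sgn (n + 1) • ((F f : ↥(precompHom G (δ n)).ker) :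
            A (n + 1) →+ G).comp s) := rfl
      rw [this]
      congr 1
      refine AddMonoidHom.ext fun b => ?_
      have hrrs : (δ (n + 1)).rangeRestrict (s b) = b := by
        apply Subtype.ext
        rw [AddMonoidHom.coe_rangeRestrict, hs b]
      show sgn (n + 1) •
        ((sgn (n + 1) • f.comp (δ (n + 1)).rangeRestrict) : A (n + 1) →+ G) (s b) = f b
      rw [AddMonoidHom.smul_apply, smul_smul, hee, one_smul, AddMonoidHom.comp_apply, hrrs]
  obtain ⟨τ, hτ⟩ := exists_section_of_free (δ (n + 1))
  obtain ⟨Lτ, _, _, _, hLτ⟩ := LSEC τ hτ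
  refine ⟨coIndexH, ?_, ?_, ?_, ?_⟩
  · -- the defining rule
    exact fun f => ⟨hmem f, hrule f⟩
  · -- injectivity
    intro q q' h
    rw [← hLτ q, ← hLτ q', h]
  · -- image characterization
    intro z
    constructor
    · intro hz
      have hwd : ∀ x x' : A (n + 1), δ (n + 1) x = δ (n + 1) x' →
          (z : A (n + 1) →+ G) x = (z : A (n + 1) →+ G) x' := by
        intro x x' h
        have hk : x - x' ∈ (δ (n + 1)).ker := by
          rw [AddMonoidHom.mem_ker, map_sub, h, sub_self]
        have h2 := hz _ hk
        rw [map_sub, sub_eq_zero] at h2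
        exact h2
      have hch : ∀ y : ↥S, ∃ x, δ (n + 1) x = ↑y := fun y => y.2
      choose pre hpre using hch
      set f₀ : ↥S →+ G := AddMonoidHom.mk'
        (fun y => (z : A (n + 1) →+ G) (pre y)) (by
          intro y y'
          rw [← map_add]
          apply hwd
          rw [hpre, map_add, hpre, hpre]
          rfl) with hf₀def
      have hf₀ : ∀ x, f₀ ((δ (n + 1)).rangeRestrict x) = (z : A (n + 1) →+ G) x := by
        intro x
        apply hwd
        rw [hpre, AddMonoidHom.coe_rangeRestrict]
      refine ⟨QuotientAddGroup.mk (sgn (n + 1) • f₀), ?_⟩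
      rw [hrule]
      congr 1
      apply Subtype.ext
      show sgn (n + 1) • ((sgn (n + 1) • f₀).comp (δ (n + 1)).rangeRestrict) =
        (z : A (n + 1) →+ G)
      refine AddMonoidHom.ext fun x => ?_
      show sgn (n + 1) • (sgn (n + 1) • f₀) ((δ (n + 1)).rangeRestrict x) = _
      rw [AddMonoidHom.smul_apply, smul_smul, hee, one_smul, hf₀]
    · rintro ⟨q, hq⟩ a ha
      obtain ⟨f, rfl⟩ := QuotientAddGroup.mk_surjective q
      rw [hrule] at hq
      rw [QuotientAddGroup.eq] at hq
      rw [AddSubgroup.mem_addSubgroupOf] at hq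
      obtain ⟨g, hg⟩ := hq
      have hg' : g.comp (δ (n + 1)) =
          ((-(F f) + z : ↥(precompHom G (δ n)).ker) : A (n + 1) →+ G) := hg
      have heval : g (δ (n + 1) a) =
          -((F f : ↥(precompHom G (δ n)).ker) : A (n + 1) →+ G) a +
            (z : A (n + 1) →+ G) a := by
        rw [← AddMonoidHom.comp_apply, hg']
        rfl
      have ha0 : δ (n + 1) a = 0 := ha
      have hFa : ((F f : ↥(precompHom G (δ n)).ker) : A (n + 1) →+ G) a = 0 := by
        show (sgn (n + 1) • f.comp (δ (n + 1)).rangeRestrict) a = 0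
        have h0 : (δ (n + 1)).rangeRestrict a = 0 := by
          apply Subtype.ext
          rw [AddMonoidHom.coe_rangeRestrict, ha0]
          rfl
        rw [AddMonoidHom.smul_apply, AddMonoidHom.comp_apply, h0, map_zero, smul_zero]
      rw [ha0, map_zero, hFa, neg_zero, zero_add] at heval
      exact heval.symm
  · -- the split
    intro s hs
    refine ⟨?_, ?_⟩
    · exact continuous_pi fun b => (continuous_zsmul _).comp (continuous_apply (s b))
    · obtain ⟨L, Lh, hLh, hLrule, hLinv⟩ := LSEC s hs
      exact ⟨Lh, by rw [← hLh]; exact hLrule, by rw [← hLh]; exact hLinv⟩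
end

section
/- Let G be a Polish abelian group with the division closure property, A a cochain complex of countable free abelian groups, and A* its G-dual Polish chain complex. Then for every n ∈ ℤ the sequence 0 → Hom(B^{n+1}(A),G)/Hom(Z^{n+1}(A)|B^{n+1}(A),G) →(coIndex) H_n(A*) →(Index) Hom(H^n(A),G) → 0 is exact, where coIndex([f]) = [(−1)^n (f∘δ^n)] and Index([z])([a]) = z(a); the first group is isomorphic to Ext(H^{n+1}(A),G) realized as cocycles modulo coboundaries. Moreover the sequence splits, with a right inverse of Index induced by the continuous map φ ↦ φ∘p^n∘i† (for a group-theoretic retraction i† : A^n → Z^n(A) and quotient map p^n : Z^n(A) → H^n(A)) and a left inverse of coIndex induced by the continuous map z ↦ (−1)^n (z∘δ†) (for a group-theoretic section δ† : B^{n+1}(A) → A^n of δ^n). -/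
/-- The group of normalized symmetric 2-cocycles. -/
def cocycleSub (H G : Type*) [AddCommGroup H] [AddCommGroup G] :
    AddSubgroup (H → H → G) where
  carrier := {c | (∀ x : H, c x 0 = 0) ∧ (∀ x y : H, c x y = c y x) ∧
    ∀ x y z : H, c x y + c (x + y) z = c x z + c (x + z) y}
  zero_mem' := ⟨fun _ => rfl, fun _ _ => rfl, fun _ _ _ => by simp⟩
  add_mem' := by
    rintro a b ⟨a1, a2, a3⟩ ⟨b1, b2, b3⟩
    refine ⟨fun x => ?_, fun x y => ?_, fun x y z => ?_⟩
    · simp [a1, b1]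
    · simp [a2 x y, b2 x y]
    · show a x y + b x y + (a (x + y) z + b (x + y) z)
        = a x z + b x z + (a (x + z) y + b (x + z) y)
      calc a x y + b x y + (a (x + y) z + b (x + y) z)
          = (a x y + a (x + y) z) + (b x y + b (x + y) z) := by abel
        _ = (a x z + a (x + z) y) + (b x z + b (x + z) y) := by rw [a3, b3]
        _ = a x z + b x z + (a (x + z) y + b (x + z) y) := by abel
  neg_mem' := by
    rintro a ⟨a1, a2, a3⟩
    refine ⟨fun x => ?_, fun x y => ?_, fun x y z => ?_⟩
    · simp [a1]
    · simp [a2 x y]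
    · show -a x y + -a (x + y) z = -a x z + -a (x + z) y
      rw [← neg_add, ← neg_add, a3]

/-- The group of coboundaries. -/
def cobSub (H G : Type*) [AddCommGroup H] [AddCommGroup G] :
    AddSubgroup (H → H → G) where
  carrier := {c | ∃ h : H → G, h 0 = 0 ∧ ∀ x y : H, c x y = h x + h y - h (x + y)}
  zero_mem' := ⟨0, rfl, by simp⟩
  add_mem' := by
    rintro a b ⟨h1, h10, hh1⟩ ⟨h2, h20, hh2⟩
    refine ⟨h1 + h2, by simp [h10, h20], fun x y => ?_⟩
    show a x y + b x y = _
    rw [hh1 x y, hh2 x y]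
    simp only [Pi.add_apply]
    abel
  neg_mem' := by
    rintro a ⟨h, h0, hh⟩
    refine ⟨-h, by simp [h0], fun x y => ?_⟩
    show -a x y = _
    rw [hh x y]
    simp only [Pi.neg_apply]
    abel

/-- `Ext(H, G)` realized as normalized symmetric cocycles modulo coboundaries. -/
abbrev ExtCocycle (H G : Type*) [AddCommGroup H] [AddCommGroup G] : Type _ :=
  ↥(cocycleSub H G) ⧸ ((cobSub H G).addSubgroupOf (cocycleSub H G))


theorem sgn_sgn {α : Type*} [AddCommGroup α] (m : ℤ) (x : α) : sgn m • sgn m • x = x := by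
  unfold sgn
  by_cases h : Even m
  · simp [h]
  · simp [h]



open Finsupp

/-- The submodule of finitely supported functions vanishing at indices `≥ k`. -/
noncomputable def belowSub (k : ℕ) : Submodule ℤ (ℕ →₀ ℤ) where
  carrier := {x | ∀ j, k ≤ j → x j = 0}
  zero_mem' := fun j _ => rfl
  add_mem' := by intro a b ha hb j hj; simp [ha j hj, hb j hj]
  smul_mem' := by intro c a ha j hj; simp [ha j hj]

theorem mem_belowSub {k : ℕ} {x : ℕ →₀ ℤ} : x ∈ belowSub k ↔ ∀ j, k ≤ j → x j = 0 := Iff.rfl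

theorem free_submodule_natFinsupp (P : Submodule ℤ (ℕ →₀ ℤ)) : Module.Free ℤ ↥P := by
  classical
  set I : ℕ → Submodule ℤ ℤ := fun k => Submodule.map (Finsupp.lapply k) (P ⊓ belowSub (k+1))
    with hI
  haveI : ∀ k, (I k).IsPrincipal := fun k => IsPrincipalIdealRing.principal (I k)
  set gen : ℕ → ℤ := fun k => Submodule.IsPrincipal.generator (I k) with hgen
  have hspan : ∀ k, Submodule.span ℤ {gen k} = I k := fun k =>
    Submodule.IsPrincipal.span_singleton_generator (I k)
  have hx : ∀ k, ∃ x : ℕ →₀ ℤ, x ∈ P ∧ (∀ j, k + 1 ≤ j → x j = 0) ∧ x k = gen k := by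
    intro k
    have h := Submodule.IsPrincipal.generator_mem (I k)
    obtain ⟨x, hxmem, hxk⟩ := Submodule.mem_map.mp h
    exact ⟨x, (Submodule.mem_inf.mp hxmem).1,
      mem_belowSub.mp (Submodule.mem_inf.mp hxmem).2, hxk⟩
  set x : ℕ → (ℕ →₀ ℤ) := fun k => (hx k).choose with hxdef
  have hxP : ∀ k, x k ∈ P := fun k => (hx k).choose_spec.1
  have hxsupp : ∀ k, ∀ j, k + 1 ≤ j → x k j = 0 := fun k => (hx k).choose_spec.2.1
  have hxk : ∀ k, x k k = gen k := fun k => (hx k).choose_spec.2.2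
  set J : Set ℕ := {k | gen k ≠ 0} with hJ
  set v : J → ↥P := fun k => ⟨x k, hxP k⟩ with hv
  -- spanning
  have hspanning : ∀ N : ℕ, ∀ y : ↥P, (∀ j, N ≤ j → (y : ℕ →₀ ℤ) j = 0) →
      y ∈ Submodule.span ℤ (Set.range v) := by
    intro N
    induction N with
    | zero =>
      intro y hy
      have : y = 0 := by
        ext j
        exact hy j (Nat.zero_le j)
      rw [this]; exact Submodule.zero_mem _
    | succ N ih =>
      intro y hy
      have hmem : (y : ℕ →₀ ℤ) N ∈ I N :=
        Submodule.mem_map.mpr ⟨y, Submodule.mem_inf.mpr ⟨y.2,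
          mem_belowSub.mpr (fun j hj => hy j hj)⟩, rfl⟩
      rw [← hspan N, Submodule.mem_span_singleton] at hmem
      obtain ⟨a, ha⟩ := hmem
      by_cases h0 : gen N = 0
      · apply ih
        intro j hj
        rcases eq_or_lt_of_le hj with rfl | hj'
        · rw [← ha, h0]; simp
        · exact hy j hj'
      · have hNJ : N ∈ J := h0
        have hy' : ∀ j, N ≤ j → ((y - a • v ⟨N, hNJ⟩ : ↥P) : ℕ →₀ ℤ) j = 0 := by
          intro j hj
          have heq : ((y - a • v ⟨N, hNJ⟩ : ↥P) : ℕ →₀ ℤ) j = (y : ℕ →₀ ℤ) j - a * x N j := by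
            simp [hv]
          rw [heq]
          rcases eq_or_lt_of_le hj with rfl | hj'
          · rw [hxk, ← smul_eq_mul, ha, sub_self]
          · rw [hy j hj', hxsupp N j hj']; ring
        have hmem2 := ih _ hy'
        have hvmem : v ⟨N, hNJ⟩ ∈ Submodule.span ℤ (Set.range v) :=
          Submodule.subset_span ⟨_, rfl⟩
        have := Submodule.add_mem _ hmem2 (Submodule.smul_mem _ a hvmem)
        simpa using this
  have hspan_top : ⊤ ≤ Submodule.span ℤ (Set.range v) := by
    intro y _
    obtain ⟨N, hN⟩ : ∃ N, ∀ j, N ≤ j → (y : ℕ →₀ ℤ) j = 0 := by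
      rcases (y : ℕ →₀ ℤ).support.eq_empty_or_nonempty with h | h
      · exact ⟨0, fun j _ => Finsupp.notMem_support_iff.mp (by simp [h])⟩
      · refine ⟨(y : ℕ →₀ ℤ).support.max' h + 1, fun j hj => ?_⟩
        apply Finsupp.notMem_support_iff.mp
        intro hmem
        exact absurd (Finset.le_max' _ j hmem) (by omega)
    exact hspanning N y hN
  -- linear independence
  have hindep : LinearIndependent ℤ v := by
    apply LinearIndependent.of_comp P.subtype
    rw [linearIndependent_iff']
    intro s₀ g hsum₀
    have key : ∀ s : Finset J, (∑ i ∈ s, g i • (P.subtype ∘ v) i) = 0 → ∀ i ∈ s, g i = 0 := by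
      intro s
      induction s using Finset.strongInduction with
      | _ s ihs =>
        intro hsum i hi
        have hne : s.Nonempty := ⟨i, hi⟩
        set m : J := s.max' hne with hm
        have hmJ : gen (m : ℕ) ≠ 0 := m.2
        have hgm : g m = 0 := by
          have heval : (∑ j ∈ s, g j • (P.subtype ∘ v) j) (m : ℕ) = g m * gen (m : ℕ) := by
            rw [Finset.sum_apply']
            rw [Finset.sum_eq_single m]
            · simp [hv, hxk, Finsupp.smul_apply, smul_eq_mul]
            · intro b hb hbm
              have hblt : (b : ℕ) < (m : ℕ) := by
                rcases lt_or_eq_of_le (s.le_max' b hb) with h | h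
                · exact_mod_cast h
                · exact absurd h hbm
              simp [hv, Finsupp.smul_apply, hxsupp b m hblt]
            · intro h; exact absurd (s.max'_mem hne) h
          rw [hsum] at heval
          simp only [Finsupp.coe_zero, Pi.zero_apply] at heval
          rcases mul_eq_zero.mp heval.symm with h | h
          · exact h
          · exact absurd h hmJ
        rcases eq_or_ne i m with rfl | him
        · exact hgm
        · rw [← Finset.sum_erase_add s _ (s.max'_mem hne)] at hsum
          rw [← hm] at hsum
          rw [hgm, zero_smul, add_zero] at hsum
          exact ihs (s.erase m) (Finset.erase_ssubset (s.max'_mem hne)) hsum i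
            (Finset.mem_erase.mpr ⟨him, hi⟩)
    exact fun i hi => key s₀ hsum₀ i hi
  exact Module.Free.of_basis (Module.Basis.mk hindep hspan_top)


theorem projective_transport {N : Type*} [AddCommGroup N] {m1 m2 : Module ℤ N}
    (h : @Module.Projective ℤ _ N _ m1) : @Module.Projective ℤ _ N _ m2 := by
  haveI := AddCommGroup.uniqueIntModule (M := N)
  exact (Subsingleton.elim m1 m2) ▸ h

/-- Lifting property for homomorphisms out of a subgroup of a countable free abelian group. -/
theorem subgroup_lift {M : Type*} [AddCommGroup M] [Countable M] [Module.Free ℤ M]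
    (S : AddSubgroup M) {X Y : Type*} [AddCommGroup X] [AddCommGroup Y]
    (f : X →+ Y) (hf : Function.Surjective f) (g : ↥S →+ Y) :
    ∃ h : ↥S →+ X, ∀ p, f (h p) = g p := by
  classical
  let b := Module.Free.chooseBasis ℤ M
  haveI : Countable (Module.Free.ChooseBasisIndex ℤ M) := b.injective.countable
  obtain ⟨e, he⟩ := exists_injective_nat (Module.Free.ChooseBasisIndex ℤ M)
  let L : M →ₗ[ℤ] (ℕ →₀ ℤ) :=
    (Finsupp.lmapDomain ℤ ℤ e).comp (b.repr : M ≃ₗ[ℤ] _).toLinearMap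
  have hL : Function.Injective L := by
    intro u v huv
    have : Finsupp.mapDomain e (b.repr u) = Finsupp.mapDomain e (b.repr v) := huv
    exact b.repr.injective (Finsupp.mapDomain_injective he this)
  set P' : Submodule ℤ (ℕ →₀ ℤ) := (AddSubgroup.toIntSubmodule S).map L with hP'
  haveI : Module.Free ℤ ↥P' := free_submodule_natFinsupp P'
  haveI : Module.Projective ℤ ↥P' := Module.Projective.of_free
  haveI hproj : @Module.Projective ℤ _ ↥P' _ (AddCommGroup.toIntModule ↥P') :=
    projective_transport this
  let eS : ↥S ≃+ ↥P' :=
    (Submodule.equivMapOfInjective L hL (AddSubgroup.toIntSubmodule S)).toAddEquiv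
  let g' : ↥P' →+ Y := g.comp eS.symm.toAddMonoidHom
  obtain ⟨h, hh⟩ := @Module.projective_lifting_property ℤ _ ↥P' _
    (AddCommGroup.toIntModule _) X _ (AddCommGroup.toIntModule _) Y _
    (AddCommGroup.toIntModule _) hproj f.toIntLinearMap g'.toIntLinearMap hf
  refine ⟨(h.toAddMonoidHom).comp eS.toAddMonoidHom, fun p => ?_⟩
  have h1 : f (h (eS p)) = g' (eS p) := congrFun (congrArg (fun t => t.toFun) hh) (eS p)
  have h2 : g' (eS p) = g p := by simp [g']
  simpa [h2] using h1


/-- Twisted product. -/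
structure Tw (G H : Type*) where
  a : G
  b : H

section Tw

variable {G H : Type*} [AddCommGroup G] [AddCommGroup H]

theorem c_zero_left {c : H → H → G} (h1 : ∀ x, c x 0 = 0) (h2 : ∀ x y, c x y = c y x)
    (x : H) : c 0 x = 0 := by rw [h2]; exact h1 x

theorem c_assoc {c : H → H → G} (h2 : ∀ x y, c x y = c y x)
    (h3 : ∀ x y z, c x y + c (x + y) z = c x z + c (x + z) y)
    (x y z : H) : c x y + c (x + y) z = c y z + c x (y + z) := by
  have h := h3 y z x
  rw [h2 y x, add_comm y x] at h
  rw [← h, h2 (y+z) x]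

/-- The twisted group structure defined by a normalized symmetric 2-cocycle. -/
def twGroup (c : H → H → G) (h1 : ∀ x, c x 0 = 0) (h2 : ∀ x y, c x y = c y x)
    (h3 : ∀ x y z, c x y + c (x + y) z = c x z + c (x + z) y) :
    AddCommGroup (Tw G H) :=
  letI : Zero (Tw G H) := ⟨⟨0, 0⟩⟩
  letI : Add (Tw G H) := ⟨fun p q => ⟨p.a + q.a + c p.b q.b, p.b + q.b⟩⟩
  letI : Neg (Tw G H) := ⟨fun p => ⟨-p.a - c p.b (-p.b), -p.b⟩⟩
  { add := (· + ·), zero := (0 : Tw G H), neg := Neg.neg,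
    nsmul := nsmulRec, zsmul := zsmulRec,
    add_assoc := by
      intro p q r
      show Tw.mk (p.a + q.a + c p.b q.b + r.a + c (p.b + q.b) r.b) (p.b + q.b + r.b)
        = Tw.mk (p.a + (q.a + r.a + c q.b r.b) + c p.b (q.b + r.b)) (p.b + (q.b + r.b))
      have h := c_assoc h2 h3 p.b q.b r.b
      congr 1
      · calc p.a + q.a + c p.b q.b + r.a + c (p.b + q.b) r.b
            = p.a + q.a + r.a + (c p.b q.b + c (p.b + q.b) r.b) := by abel
          _ = p.a + q.a + r.a + (c q.b r.b + c p.b (q.b + r.b)) := by rw [h]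
          _ = p.a + (q.a + r.a + c q.b r.b) + c p.b (q.b + r.b) := by abel
      · exact add_assoc _ _ _
    zero_add := by
      intro p
      show Tw.mk (0 + p.a + c 0 p.b) (0 + p.b) = p
      rw [c_zero_left h1 h2]
      simp
    add_zero := by
      intro p
      show Tw.mk (p.a + 0 + c p.b 0) (p.b + 0) = p
      rw [h1]
      simp
    neg_add_cancel := by
      intro p
      show Tw.mk (-p.a - c p.b (-p.b) + p.a + c (-p.b) p.b) (-p.b + p.b)
        = Tw.mk 0 0
      congr 1
      · rw [h2 (-p.b) p.b]; abel
      · exact neg_add_cancel _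
    add_comm := by
      intro p q
      show Tw.mk (p.a + q.a + c p.b q.b) (p.b + q.b)
        = Tw.mk (q.a + p.a + c q.b p.b) (q.b + p.b)
      rw [h2 p.b q.b, add_comm p.a q.a, add_comm p.b q.b] }

end Tw

theorem ext_iso {X G : Type*} [AddCommGroup X] [Countable X] [Module.Free ℤ X]
    [AddCommGroup G] (S T : AddSubgroup X) (hST : S ≤ T) :
    Nonempty (((↥S →+ G) ⧸ extSub S T) ≃+ ExtCocycle (↥T ⧸ S.addSubgroupOf T) G) := by
  classical
  set N := S.addSubgroupOf T with hN
  let q : ↥T →+ (↥T ⧸ N) := QuotientAddGroup.mk' N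
  let σ : (↥T ⧸ N) → ↥T := fun x => if x = 0 then 0 else Quotient.out x
  have hσ : ∀ x, q (σ x) = x := by
    intro x
    by_cases h : x = 0
    · simp [σ, h, map_zero]
    · show QuotientAddGroup.mk' N (if x = 0 then 0 else Quotient.out x) = x
      rw [if_neg h]
      exact QuotientAddGroup.out_eq' x
  have hσ0 : σ 0 = 0 := by simp [σ]
  let d : (↥T ⧸ N) → (↥T ⧸ N) → ↥T := fun x y => σ x + σ y - σ (x + y)
  have hdS : ∀ x y, (d x y : X) ∈ S := by
    intro x y
    have h0 : q (d x y) = 0 := by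
      show q (σ x + σ y - σ (x + y)) = 0
      rw [map_sub, map_add, hσ, hσ, hσ, sub_self]
    exact AddSubgroup.mem_addSubgroupOf.mp ((QuotientAddGroup.eq_zero_iff _).mp h0)
  have hd0 : ∀ x, d x 0 = 0 := by
    intro x
    show σ x + σ 0 - σ (x + 0) = 0
    rw [hσ0, add_zero, add_zero, sub_self]
  have hdcomm : ∀ x y, d x y = d y x := by
    intro x y
    show σ x + σ y - σ (x + y) = σ y + σ x - σ (y + x)
    rw [add_comm x y, add_comm (σ x) (σ y)]
  have hdassoc : ∀ x y z, d x y + d (x + y) z = d x z + d (x + z) y := by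
    intro x y z
    show σ x + σ y - σ (x + y) + (σ (x + y) + σ z - σ (x + y + z))
      = σ x + σ z - σ (x + z) + (σ (x + z) + σ y - σ (x + z + y))
    rw [add_right_comm x y z]
    abel
  -- the cocycle associated to a homomorphism on S
  let cFun : (↥S →+ G) → ((↥T ⧸ N) → (↥T ⧸ N) → G) := fun f x y => f ⟨(d x y).1, hdS x y⟩
  have hcmem : ∀ f, cFun f ∈ cocycleSub (↥T ⧸ N) G := by
    intro f
    refine ⟨fun x => ?_, fun x y => ?_, fun x y z => ?_⟩
    · show f ⟨(d x 0).1, hdS x 0⟩ = 0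
      have h : (⟨(d x 0).1, hdS x 0⟩ : ↥S) = 0 :=
        Subtype.ext (congrArg (Subtype.val : ↥T → X) (hd0 x))
      rw [h, map_zero]
    · show f ⟨(d x y).1, _⟩ = f ⟨(d y x).1, _⟩
      congr 1
      exact Subtype.ext (congrArg (Subtype.val : ↥T → X) (hdcomm x y))
    · show f ⟨(d x y).1, _⟩ + f ⟨(d (x+y) z).1, _⟩ = f ⟨(d x z).1, _⟩ + f ⟨(d (x+z) y).1, _⟩
      rw [← map_add, ← map_add]
      congr 1
      exact Subtype.ext (congrArg (Subtype.val : ↥T → X) (hdassoc x y z))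
  let Φ : (↥S →+ G) →+ ↥(cocycleSub (↥T ⧸ N) G) :=
    { toFun := fun f => ⟨cFun f, hcmem f⟩
      map_zero' := Subtype.ext rfl
      map_add' := fun f g => Subtype.ext rfl }
  let ΦQ : (↥S →+ G) →+ ExtCocycle (↥T ⧸ N) G :=
    (QuotientAddGroup.mk' ((cobSub (↥T ⧸ N) G).addSubgroupOf (cocycleSub (↥T ⧸ N) G))).comp Φ
  -- membership in S of the defect
  have hmemz : ∀ z : ↥T, (z - σ (q z)).1 ∈ S := by
    intro z
    have h0 : q (z - σ (q z)) = 0 := by rw [map_sub, hσ, sub_self]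
    exact AddSubgroup.mem_addSubgroupOf.mp ((QuotientAddGroup.eq_zero_iff _).mp h0)
  -- if the cocycle of f is a coboundary then f extends to T
  have hext : ∀ (f : ↥S →+ G), cFun f ∈ cobSub (↥T ⧸ N) G → f ∈ extSub S T := by
    intro f hf
    obtain ⟨h, h0, hh⟩ := hf
    have hadd : ∀ z w : ↥T,
        (fun z => f ⟨(z - σ (q z)).1, hmemz z⟩ + h (q z)) (z + w)
        = (fun z => f ⟨(z - σ (q z)).1, hmemz z⟩ + h (q z)) z
          + (fun z => f ⟨(z - σ (q z)).1, hmemz z⟩ + h (q z)) w := by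
      intro z w
      simp only
      have hkey : (⟨(z + w - σ (q (z + w))).1, hmemz (z + w)⟩ : ↥S)
          = ⟨(z - σ (q z)).1, hmemz z⟩ + ⟨(w - σ (q w)).1, hmemz w⟩
            + ⟨(d (q z) (q w)).1, hdS (q z) (q w)⟩ := by
        apply Subtype.ext
        show (z + w - σ (q (z + w))).1 = (z - σ (q z)).1 + (w - σ (q w)).1 + (d (q z) (q w)).1
        have : z + w - σ (q (z + w)) = (z - σ (q z)) + (w - σ (q w)) + d (q z) (q w) := by
          show z + w - σ (q (z + w))
            = (z - σ (q z)) + (w - σ (q w)) + (σ (q z) + σ (q w) - σ (q z + q w))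
          rw [← map_add q]
          abel
        rw [this]
        rfl
      rw [hkey, map_add, map_add]
      have hc : f ⟨(d (q z) (q w)).1, hdS (q z) (q w)⟩ = h (q z) + h (q w) - h (q z + q w) :=
        hh (q z) (q w)
      rw [hc, map_add q]
      abel
    refine ⟨AddMonoidHom.mk' (fun z => f ⟨(z - σ (q z)).1, hmemz z⟩ + h (q z)) hadd,
      fun x hxS hxT => ?_⟩
    show f ⟨((⟨x, hxT⟩ : ↥T) - σ (q ⟨x, hxT⟩)).1, _⟩ + h (q ⟨x, hxT⟩) = f ⟨x, hxS⟩
    have hq0 : q ⟨x, hxT⟩ = 0 :=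
      (QuotientAddGroup.eq_zero_iff _).mpr (AddSubgroup.mem_addSubgroupOf.mpr hxS)
    have h2 : h (q ⟨x, hxT⟩) = 0 := by rw [hq0, h0]
    rw [h2, add_zero]
    congr 1
    apply Subtype.ext
    show ((⟨x, hxT⟩ : ↥T) - σ (q ⟨x, hxT⟩)).1 = x
    have h3 : σ (q ⟨x, hxT⟩) = 0 := by rw [hq0, hσ0]
    rw [h3, sub_zero]
  -- conversely
  have hcob : ∀ (f : ↥S →+ G), f ∈ extSub S T → cFun f ∈ cobSub (↥T ⧸ N) G := by
    rintro f ⟨ψ, hψ⟩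
    refine ⟨fun x => ψ (σ x), by show ψ (σ 0) = 0; rw [hσ0, map_zero], fun x y => ?_⟩
    calc cFun f x y = ψ (d x y) := (hψ (d x y).1 (hdS x y) (d x y).2).symm
      _ = ψ (σ x) + ψ (σ y) - ψ (σ (x + y)) := by
          show ψ (σ x + σ y - σ (x + y)) = _
          rw [map_sub, map_add]
  have hker : ∀ f, ΦQ f = 0 ↔ f ∈ extSub S T := by
    intro f
    constructor
    · intro hf
      apply hext
      have := (QuotientAddGroup.eq_zero_iff (Φ f)).mp hf
      exact AddSubgroup.mem_addSubgroupOf.mp this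
    · intro hf
      exact (QuotientAddGroup.eq_zero_iff (Φ f)).mpr
        (AddSubgroup.mem_addSubgroupOf.mpr (hcob f hf))
  let Ψ : ((↥S →+ G) ⧸ extSub S T) →+ ExtCocycle (↥T ⧸ N) G :=
    QuotientAddGroup.lift (extSub S T) ΦQ (fun f hf => (hker f).mpr hf)
  have hinj : Function.Injective Ψ := by
    rw [injective_iff_map_eq_zero]
    intro a
    induction a using QuotientAddGroup.induction_on with
    | H f =>
      intro ha
      exact (QuotientAddGroup.eq_zero_iff _).mpr ((hker f).mp ha)
  have hsurj : Function.Surjective Ψ := by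
    intro y
    induction y using QuotientAddGroup.induction_on with
    | H cc =>
      obtain ⟨c, hc1, hc2, hc3⟩ := cc
      letI instTw : AddCommGroup (Tw G (↥T ⧸ N)) := twGroup c hc1 hc2 hc3
      have haddA : ∀ p r : Tw G (↥T ⧸ N), (p + r).a = p.a + r.a + c p.b r.b := fun _ _ => rfl
      have haddB : ∀ p r : Tw G (↥T ⧸ N), (p + r).b = p.b + r.b := fun _ _ => rfl
      have hnegA : ∀ p : Tw G (↥T ⧸ N), (-p).a = -p.a - c p.b (-p.b) := fun _ => rfl
      have hnegB : ∀ p : Tw G (↥T ⧸ N), (-p).b = -p.b := fun _ => rfl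
      let π : Tw G (↥T ⧸ N) →+ (↥T ⧸ N) := AddMonoidHom.mk' Tw.b (fun _ _ => rfl)
      have hπ : Function.Surjective π := fun x => ⟨⟨0, x⟩, rfl⟩
      obtain ⟨ℓ, hℓ⟩ := subgroup_lift T π hπ q
      have hfb : ∀ s : ↥S, (ℓ ⟨s.1, hST s.2⟩).b = 0 := by
        intro s
        have : π (ℓ ⟨s.1, hST s.2⟩) = 0 := by
          rw [hℓ]
          exact (QuotientAddGroup.eq_zero_iff _).mpr (AddSubgroup.mem_addSubgroupOf.mpr s.2)
        exact this
      have hfadd : ∀ s t : ↥S,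
          (fun s : ↥S => (ℓ ⟨s.1, hST s.2⟩).a) (s + t)
          = (fun s : ↥S => (ℓ ⟨s.1, hST s.2⟩).a) s + (fun s : ↥S => (ℓ ⟨s.1, hST s.2⟩).a) t := by
        intro s t
        simp only
        have h1 : (⟨(s + t).1, hST (s + t).2⟩ : ↥T) = ⟨s.1, hST s.2⟩ + ⟨t.1, hST t.2⟩ :=
          Subtype.ext rfl
        rw [h1, map_add, haddA, hfb s, hfb t, hc1, add_zero]
      let f : ↥S →+ G := AddMonoidHom.mk' (fun s => (ℓ ⟨s.1, hST s.2⟩).a) hfadd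
      -- key formula
      have hub : ∀ x, (ℓ (σ x)).b = x := by intro x; rw [show (ℓ (σ x)).b = π (ℓ (σ x)) from rfl, hℓ, hσ]
      have hsubA : ∀ p r w : Tw G (↥T ⧸ N), w.b = p.b + r.b →
          (p + r - w).a = p.a + r.a + c p.b r.b - w.a := by
        intro p r w hw
        rw [sub_eq_add_neg, haddA (p + r) (-w), haddA p r, haddB p r, hnegA w, hnegB w, hw]
        abel
      have hkey : ∀ x y, cFun f x y = (ℓ (σ x)).a + (ℓ (σ y)).a + c x y - (ℓ (σ (x + y))).a := by
        intro x y
        have h1 : cFun f x y = (ℓ (d x y)).a := by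
          show (ℓ ⟨(d x y).1, hST (hdS x y)⟩).a = (ℓ (d x y)).a
          congr 1
        have h2 : ℓ (d x y) = ℓ (σ x) + ℓ (σ y) - ℓ (σ (x + y)) := by
          show ℓ (σ x + σ y - σ (x + y)) = _
          rw [map_sub, map_add]
        have h3 : (ℓ (σ (x+y))).b = (ℓ (σ x)).b + (ℓ (σ y)).b := by
          rw [hub, hub, hub]
        rw [h1, h2, hsubA _ _ _ h3, hub, hub]
      refine ⟨QuotientAddGroup.mk f, ?_⟩
      have hΨ : Ψ (QuotientAddGroup.mk f) = ΦQ f := rfl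
      rw [hΨ]
      show QuotientAddGroup.mk (Φ f) = QuotientAddGroup.mk (⟨c, hc1, hc2, hc3⟩ : ↥(cocycleSub _ G))
      rw [QuotientAddGroup.eq]
      apply AddSubgroup.mem_addSubgroupOf.mpr
      refine ⟨fun x => -(ℓ (σ x)).a, ?_, fun x y => ?_⟩
      · show -(ℓ (σ 0)).a = 0
        rw [hσ0, map_zero]
        show -(0 : G) = 0
        rw [neg_zero]
      · show -(cFun f x y) + c x y = -(ℓ (σ x)).a + -(ℓ (σ y)).a - -(ℓ (σ (x+y))).a
        rw [hkey x y]
        abel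
  exact ⟨AddEquiv.ofBijective Ψ ⟨hinj, hsurj⟩⟩

set_option maxHeartbeats 2000000 in
theorem algebraic_universal_coefficient_theorem
    {G : Type*} [AddCommGroup G] [TopologicalSpace G] [IsTopologicalAddGroup G]
    [PolishSpace G]
    (hdcp : ∀ k : ℕ, 0 < k → IsClosed {g : G | ∃ x : G, k • x = g})
    (A : ℤ → Type*) [∀ n, AddCommGroup (A n)] [∀ n, Countable (A n)]
    [∀ n, Module.Free ℤ (A n)]
    (δ : ∀ n : ℤ, A n →+ A (n + 1))
    (hδδ : ∀ (n : ℤ) (x : A n), δ (n + 1) (δ n x) = 0) :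
    ∀ n : ℤ,
      ∃ (coIndex :
          ((↥(δ (n + 1)).range →+ G) ⧸ extSub (δ (n + 1)).range (δ (n + 1 + 1)).ker) →+
          (↥(precompHom G (δ n)).ker ⧸
            ((precompHom G (δ (n + 1))).range.addSubgroupOf (precompHom G (δ n)).ker)))
        (Index :
          (↥(precompHom G (δ n)).ker ⧸
            ((precompHom G (δ (n + 1))).range.addSubgroupOf (precompHom G (δ n)).ker)) →+
          ((↥(δ (n + 1)).ker ⧸ ((δ n).range.addSubgroupOf (δ (n + 1)).ker)) →+ G)),
        -- the defining rule of coIndex: coIndex([f]) = [(−1)^n (f ∘ δ^n)]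
        (∀ f : ↥(δ (n + 1)).range →+ G,
          ∃ hmem : sgn (n + 1) • f.comp (δ (n + 1)).rangeRestrict ∈
              (precompHom G (δ n)).ker,
            coIndex (QuotientAddGroup.mk f) =
              QuotientAddGroup.mk
                (⟨sgn (n + 1) • f.comp (δ (n + 1)).rangeRestrict, hmem⟩ :
                  ↥(precompHom G (δ n)).ker)) ∧
        -- the defining rule of Index: Index([z])([a]) = z(a)
        (∀ (z : ↥(precompHom G (δ n)).ker) (a : ↥(δ (n + 1)).ker),
          Index (QuotientAddGroup.mk z) (QuotientAddGroup.mk a) = z.1 a.1) ∧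
        -- exactness: coIndex is injective, ker Index = range coIndex, Index surjective
        Function.Injective coIndex ∧
        (∀ x, Index x = 0 ↔ ∃ q, coIndex q = x) ∧
        Function.Surjective Index ∧
        -- the first group is isomorphic to Ext(H^{n+1}(A), G), realized as cocycles
        -- modulo coboundaries
        Nonempty
          ((((↥(δ (n + 1)).range →+ G) ⧸ extSub (δ (n + 1)).range (δ (n + 1 + 1)).ker)) ≃+
            ExtCocycle
              (↥(δ (n + 1 + 1)).ker ⧸ ((δ (n + 1)).range.addSubgroupOf (δ (n + 1 + 1)).ker))
              G) ∧
        -- the sequence splits: a right inverse of Index induced by the continuous map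
        -- φ ↦ φ ∘ p^n ∘ i†, for any group-theoretic retraction i† of Z^{n+1}(A) ↪ A^{n+1}
        (∀ r : A (n + 1) →+ ↥(δ (n + 1)).ker, (∀ a : ↥(δ (n + 1)).ker, r ↑a = a) →
          Continuous (fun (φ : (↥(δ (n + 1)).ker ⧸
                ((δ n).range.addSubgroupOf (δ (n + 1)).ker)) → G) (a : A (n + 1)) =>
              φ (QuotientAddGroup.mk (r a))) ∧
          ∀ φ : (↥(δ (n + 1)).ker ⧸ ((δ n).range.addSubgroupOf (δ (n + 1)).ker)) →+ G,
            ∃ hmem : φ.comp ((QuotientAddGroup.mk'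
                ((δ n).range.addSubgroupOf (δ (n + 1)).ker)).comp r) ∈
                (precompHom G (δ n)).ker,
              Index (QuotientAddGroup.mk
                (⟨φ.comp ((QuotientAddGroup.mk'
                    ((δ n).range.addSubgroupOf (δ (n + 1)).ker)).comp r), hmem⟩ :
                  ↥(precompHom G (δ n)).ker)) = φ) ∧
        -- and a left inverse of coIndex induced by the continuous map z ↦ (−1)^n (z∘δ†),
        -- for any group-theoretic section δ† of δ^n : A^n → B^{n+1}(A)
        (∀ s : ↥(δ (n + 1)).range →+ A (n + 1),
          (∀ b : ↥(δ (n + 1)).range, δ (n + 1) (s b) = ↑b) →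
          Continuous (fun (z : A (n + 1) → G) (b : ↥(δ (n + 1)).range) =>
            sgn (n + 1) • z (s b)) ∧
          ∃ L : (↥(precompHom G (δ n)).ker ⧸
              ((precompHom G (δ (n + 1))).range.addSubgroupOf (precompHom G (δ n)).ker)) →+
              ((↥(δ (n + 1)).range →+ G) ⧸ extSub (δ (n + 1)).range (δ (n + 1 + 1)).ker),
            (∀ z : ↥(precompHom G (δ n)).ker,
              L (QuotientAddGroup.mk z) = QuotientAddGroup.mk (sgn (n + 1) • z.1.comp s)) ∧
            ∀ q, L (coIndex q) = q) := by
  classical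
  intro n
  set B := (δ (n + 1)).range with hB
  set Tker := (δ (n + 1 + 1)).ker with hTker
  set K := (δ (n + 1)).ker with hK
  set Zd := (precompHom G (δ n)).ker with hZd
  set Bd := (precompHom G (δ (n + 1))).range with hBd
  set NB := (δ n).range.addSubgroupOf K with hNB
  have hBT : B ≤ Tker := by
    rintro x ⟨y, rfl⟩
    exact AddMonoidHom.mem_ker.mpr (hδδ (n + 1) y)
  -- z ∈ Zd kills range of δ n
  have hzB : ∀ (z : ↥Zd) (x : A n), z.1 (δ n x) = 0 := by
    intro z x
    exact DFunLike.congr_fun (AddMonoidHom.mem_ker.mp z.2) x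
  -- section s₁ of δ (n+1) over its range, and retraction r₁ onto K
  obtain ⟨s₁, hs₁⟩ := subgroup_lift (δ (n + 1)).range (δ (n + 1)).rangeRestrict
    (δ (n + 1)).rangeRestrict_surjective (AddMonoidHom.id ↥B)
  have hδs₁ : ∀ b : ↥B, δ (n + 1) (s₁ b) = b.1 := by
    intro b
    have := congrArg Subtype.val (hs₁ b)
    exact this
  have hr₁mem : ∀ a : A (n + 1), a - s₁ ((δ (n + 1)).rangeRestrict a) ∈ K := by
    intro a
    have : δ (n + 1) (a - s₁ ((δ (n + 1)).rangeRestrict a)) = 0 := by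
      rw [map_sub, hδs₁]
      simp [AddMonoidHom.coe_rangeRestrict]
    exact AddMonoidHom.mem_ker.mpr this
  let r₁ : A (n + 1) →+ ↥K := AddMonoidHom.mk'
    (fun a => ⟨a - s₁ ((δ (n + 1)).rangeRestrict a), hr₁mem a⟩)
    (by
      intro a b
      apply Subtype.ext
      show a + b - s₁ ((δ (n + 1)).rangeRestrict (a + b)) = _
      rw [map_add, map_add]
      show _ = (a - s₁ ((δ (n + 1)).rangeRestrict a)) + (b - s₁ ((δ (n + 1)).rangeRestrict b))
      abel)
  have hr₁ : ∀ a : ↥K, r₁ a.1 = a := by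
    intro a
    apply Subtype.ext
    show a.1 - s₁ ((δ (n + 1)).rangeRestrict a.1) = a.1
    have h0 : (δ (n + 1)).rangeRestrict a.1 = 0 := by
      apply Subtype.ext
      show δ (n + 1) a.1 = 0
      exact AddMonoidHom.mem_ker.mp a.2
    rw [h0, map_zero, sub_zero]
  -- section s₂ of δ (n+1+1) over its range, and retraction r₂ onto Tker
  obtain ⟨s₂, hs₂⟩ := subgroup_lift (δ (n + 1 + 1)).range (δ (n + 1 + 1)).rangeRestrict
    (δ (n + 1 + 1)).rangeRestrict_surjective (AddMonoidHom.id _)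
  have hδs₂ : ∀ b : ↥(δ (n + 1 + 1)).range, δ (n + 1 + 1) (s₂ b) = b.1 := by
    intro b
    have := congrArg Subtype.val (hs₂ b)
    simpa using this
  have hr₂mem : ∀ a : A (n + 1 + 1), a - s₂ ((δ (n + 1 + 1)).rangeRestrict a) ∈ Tker := by
    intro a
    have : δ (n + 1 + 1) (a - s₂ ((δ (n + 1 + 1)).rangeRestrict a)) = 0 := by
      rw [map_sub, hδs₂]
      simp [AddMonoidHom.coe_rangeRestrict]
    exact AddMonoidHom.mem_ker.mpr this
  let r₂ : A (n + 1 + 1) →+ ↥Tker := AddMonoidHom.mk'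
    (fun a => ⟨a - s₂ ((δ (n + 1 + 1)).rangeRestrict a), hr₂mem a⟩)
    (by
      intro a b
      apply Subtype.ext
      show a + b - s₂ ((δ (n + 1 + 1)).rangeRestrict (a + b)) = _
      rw [map_add, map_add]
      show _ = (a - s₂ ((δ (n + 1 + 1)).rangeRestrict a))
        + (b - s₂ ((δ (n + 1 + 1)).rangeRestrict b))
      abel)
  have hr₂ : ∀ a : ↥Tker, r₂ a.1 = a := by
    intro a
    apply Subtype.ext
    show a.1 - s₂ ((δ (n + 1 + 1)).rangeRestrict a.1) = a.1
    have h0 : (δ (n + 1 + 1)).rangeRestrict a.1 = 0 := by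
      apply Subtype.ext
      show δ (n + 1 + 1) a.1 = 0
      exact AddMonoidHom.mem_ker.mp a.2
    rw [h0, map_zero, sub_zero]
  -- Index
  have hNBker : ∀ (z : ↥Zd) (a : ↥K), a ∈ NB → z.1.comp K.subtype a = 0 := by
    intro z a ha
    obtain ⟨x, hx⟩ := AddSubgroup.mem_addSubgroupOf.mp ha
    show z.1 a.1 = 0
    rw [← hx]
    exact hzB z x
  let IndexAux : ↥Zd →+ ((↥K ⧸ NB) →+ G) :=
    { toFun := fun z => QuotientAddGroup.lift NB (z.1.comp K.subtype) (hNBker z)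
      map_zero' := by
        apply AddMonoidHom.ext
        intro a
        induction a using QuotientAddGroup.induction_on with
        | H a => rfl
      map_add' := by
        intro z w
        apply AddMonoidHom.ext
        intro a
        induction a using QuotientAddGroup.induction_on with
        | H a => rfl }
  have hIndexKer : ∀ z : ↥Zd, z ∈ Bd.addSubgroupOf Zd → IndexAux z = 0 := by
    intro z hz
    obtain ⟨w, hw⟩ := AddSubgroup.mem_addSubgroupOf.mp hz
    apply AddMonoidHom.ext
    intro a
    induction a using QuotientAddGroup.induction_on with
    | H a =>
      show z.1 a.1 = 0
      rw [← hw]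
      show w (δ (n + 1) a.1) = 0
      rw [AddMonoidHom.mem_ker.mp a.2, map_zero]
  let Index := QuotientAddGroup.lift (Bd.addSubgroupOf Zd) IndexAux hIndexKer
  have hIndexRule : ∀ (z : ↥Zd) (a : ↥K),
      Index (QuotientAddGroup.mk z) (QuotientAddGroup.mk a) = z.1 a.1 := fun z a => rfl
  -- coIndex
  have hrrδ : ∀ x : A n, (δ (n + 1)).rangeRestrict (δ n x) = 0 := by
    intro x
    apply Subtype.ext
    show δ (n + 1) (δ n x) = 0
    exact hδδ n x
  have hcmem : ∀ f : ↥B →+ G,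
      sgn (n + 1) • f.comp (δ (n + 1)).rangeRestrict ∈ Zd := by
    intro f
    apply AddMonoidHom.mem_ker.mpr
    apply AddMonoidHom.ext
    intro x
    show (sgn (n + 1) • f.comp (δ (n + 1)).rangeRestrict) (δ n x) = 0
    rw [AddMonoidHom.smul_apply, AddMonoidHom.comp_apply, hrrδ x, map_zero, smul_zero]
  let coIndexAux : (↥B →+ G) →+ ↥Zd := AddMonoidHom.mk'
    (fun f => ⟨sgn (n + 1) • f.comp (δ (n + 1)).rangeRestrict, hcmem f⟩)
    (by
      intro f g
      apply Subtype.ext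
      show sgn (n + 1) • (f + g).comp (δ (n + 1)).rangeRestrict = _
      rw [AddMonoidHom.add_comp, smul_add]
      rfl)
  have hcoKer : ∀ f : ↥B →+ G, f ∈ extSub B Tker →
      coIndexAux f ∈ Bd.addSubgroupOf Zd := by
    rintro f ⟨ψ, hψ⟩
    apply AddSubgroup.mem_addSubgroupOf.mpr
    refine ⟨sgn (n + 1) • ψ.comp r₂, ?_⟩
    apply AddMonoidHom.ext
    intro a
    show (sgn (n + 1) • ψ.comp r₂) (δ (n + 1) a) = (sgn (n + 1) • f.comp (δ (n + 1)).rangeRestrict) a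
    rw [AddMonoidHom.smul_apply, AddMonoidHom.smul_apply, AddMonoidHom.comp_apply,
      AddMonoidHom.comp_apply]
    congr 1
    have hmem : δ (n + 1) a ∈ Tker := AddMonoidHom.mem_ker.mpr (hδδ (n + 1) a)
    have h1 : r₂ (δ (n + 1) a) = ⟨δ (n + 1) a, hmem⟩ := hr₂ ⟨δ (n + 1) a, hmem⟩
    rw [h1]
    have h2 := hψ (δ (n + 1) a) (AddMonoidHom.mem_range.mpr ⟨a, rfl⟩) hmem
    rw [h2]
    congr 1
  let coIndex := QuotientAddGroup.lift (extSub B Tker)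
    ((QuotientAddGroup.mk' (Bd.addSubgroupOf Zd)).comp coIndexAux) (by
      intro f hf
      show QuotientAddGroup.mk (coIndexAux f) = 0
      exact (QuotientAddGroup.eq_zero_iff _).mpr (hcoKer f hf))
  have hcoRule : ∀ f : ↥B →+ G,
      coIndex (QuotientAddGroup.mk f) = QuotientAddGroup.mk (coIndexAux f) := fun f => rfl
  refine ⟨coIndex, Index, ?_, ?_, ?_, ?_, ?_, ?_, ?_, ?_⟩
  · -- coIndex rule
    intro f
    exact ⟨hcmem f, rfl⟩
  · -- Index rule
    intro z a
    exact hIndexRule z a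
  · -- coIndex injective
    rw [injective_iff_map_eq_zero]
    intro a
    induction a using QuotientAddGroup.induction_on with
    | H f =>
      intro ha
      have h1 : coIndexAux f ∈ Bd.addSubgroupOf Zd := by
        have := (QuotientAddGroup.eq_zero_iff (coIndexAux f)).mp ha
        exact this
      obtain ⟨w, hw⟩ := AddSubgroup.mem_addSubgroupOf.mp h1
      apply (QuotientAddGroup.eq_zero_iff f).mpr
      refine ⟨sgn (n + 1) • w.comp Tker.subtype, ?_⟩
      intro x hxS hxT
      obtain ⟨y, hy⟩ := AddMonoidHom.mem_range.mp hxS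
      show sgn (n + 1) • w x = f ⟨x, hxS⟩
      have h3 : w x = (sgn (n + 1) • f.comp (δ (n + 1)).rangeRestrict) y := by
        rw [← hy]
        exact DFunLike.congr_fun hw y
      rw [h3, AddMonoidHom.smul_apply, sgn_sgn, AddMonoidHom.comp_apply]
      congr 1
      exact Subtype.ext hy
  · -- exactness at the middle
    intro x
    constructor
    · induction x using QuotientAddGroup.induction_on with
      | H z =>
        intro hx
        have hzK : ∀ a : ↥K, z.1 a.1 = 0 := by
          intro a
          have h := DFunLike.congr_fun hx (QuotientAddGroup.mk a)
          rw [hIndexRule z a] at h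
          simpa using h
        refine ⟨QuotientAddGroup.mk (sgn (n + 1) • z.1.comp s₁), ?_⟩
        rw [hcoRule]
        congr 1
        apply Subtype.ext
        show sgn (n + 1) • (sgn (n + 1) • z.1.comp s₁).comp (δ (n + 1)).rangeRestrict = z.1
        apply AddMonoidHom.ext
        intro a
        show sgn (n + 1) • (sgn (n + 1) • z.1.comp s₁) ((δ (n + 1)).rangeRestrict a) = z.1 a
        rw [AddMonoidHom.smul_apply, sgn_sgn]
        show z.1 (s₁ ((δ (n + 1)).rangeRestrict a)) = z.1 a
        have hk := hzK (r₁ a)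
        have : z.1 (a - s₁ ((δ (n + 1)).rangeRestrict a)) = 0 := hk
        rw [map_sub] at this
        exact (sub_eq_zero.mp this).symm
    · rintro ⟨q, rfl⟩
      induction q using QuotientAddGroup.induction_on with
      | H f =>
        rw [hcoRule]
        apply AddMonoidHom.ext
        intro a
        induction a using QuotientAddGroup.induction_on with
        | H a =>
          show (sgn (n + 1) • f.comp (δ (n + 1)).rangeRestrict) a.1 = 0
          rw [AddMonoidHom.smul_apply, AddMonoidHom.comp_apply]
          have h0 : (δ (n + 1)).rangeRestrict a.1 = 0 := by
            apply Subtype.ext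
            exact AddMonoidHom.mem_ker.mp a.2
          rw [h0, map_zero, smul_zero]
  · -- Index surjective
    intro φ
    have hmem : φ.comp ((QuotientAddGroup.mk' NB).comp r₁) ∈ Zd := by
      apply AddMonoidHom.mem_ker.mpr
      apply AddMonoidHom.ext
      intro x
      show φ ((QuotientAddGroup.mk' NB) (r₁ (δ n x))) = 0
      have hk : δ n x ∈ K := AddMonoidHom.mem_ker.mpr (hδδ n x)
      have h1 : r₁ (δ n x) = ⟨δ n x, hk⟩ := hr₁ ⟨δ n x, hk⟩
      rw [h1]
      have h2 : (QuotientAddGroup.mk' NB) (⟨δ n x, hk⟩ : ↥K) = 0 :=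
        (QuotientAddGroup.eq_zero_iff _).mpr (AddSubgroup.mem_addSubgroupOf.mpr ⟨x, rfl⟩)
      rw [h2, map_zero]
    refine ⟨QuotientAddGroup.mk (⟨φ.comp ((QuotientAddGroup.mk' NB).comp r₁), hmem⟩ : ↥Zd), ?_⟩
    apply AddMonoidHom.ext
    intro a
    induction a using QuotientAddGroup.induction_on with
    | H a =>
      show φ ((QuotientAddGroup.mk' NB) (r₁ a.1)) = φ (QuotientAddGroup.mk a)
      rw [hr₁ a]
      rfl
  · -- Ext iso
    exact ext_iso B Tker hBT
  · -- right inverse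
    intro r hr
    constructor
    · exact continuous_pi fun a => continuous_apply _
    · intro φ
      have hmem : φ.comp ((QuotientAddGroup.mk' NB).comp r) ∈ Zd := by
        apply AddMonoidHom.mem_ker.mpr
        apply AddMonoidHom.ext
        intro x
        show φ ((QuotientAddGroup.mk' NB) (r (δ n x))) = 0
        have hk : δ n x ∈ K := AddMonoidHom.mem_ker.mpr (hδδ n x)
        have h1 : r (δ n x) = ⟨δ n x, hk⟩ := hr ⟨δ n x, hk⟩
        rw [h1]
        have h2 : (QuotientAddGroup.mk' NB) (⟨δ n x, hk⟩ : ↥K) = 0 :=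
          (QuotientAddGroup.eq_zero_iff _).mpr
            (AddSubgroup.mem_addSubgroupOf.mpr ⟨x, rfl⟩)
        rw [h2, map_zero]
      refine ⟨hmem, ?_⟩
      apply AddMonoidHom.ext
      intro a
      induction a using QuotientAddGroup.induction_on with
      | H a =>
        show φ ((QuotientAddGroup.mk' NB) (r a.1)) = φ (QuotientAddGroup.mk a)
        rw [hr a]
        rfl
  · -- left inverse
    intro s hs
    constructor
    · exact continuous_pi fun b => (continuous_zsmul _).comp (continuous_apply (s b))
    · have hLKer : ∀ z : ↥Zd, z ∈ Bd.addSubgroupOf Zd →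
          (sgn (n + 1) • z.1.comp s) ∈ extSub B Tker := by
        intro z hz
        obtain ⟨w, hw⟩ := AddSubgroup.mem_addSubgroupOf.mp hz
        refine ⟨sgn (n + 1) • w.comp Tker.subtype, ?_⟩
        intro x hxS hxT
        show sgn (n + 1) • w x = (sgn (n + 1) • z.1.comp s) ⟨x, hxS⟩
        rw [AddMonoidHom.smul_apply, AddMonoidHom.comp_apply]
        congr 1
        have h1 : z.1 (s ⟨x, hxS⟩) = w (δ (n + 1) (s ⟨x, hxS⟩)) :=
          (DFunLike.congr_fun hw (s ⟨x, hxS⟩)).symm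
        rw [h1, hs ⟨x, hxS⟩]
      let LAux : ↥Zd →+ (↥B →+ G) := AddMonoidHom.mk'
        (fun z => sgn (n + 1) • z.1.comp s)
        (by
          intro z w
          show sgn (n + 1) • (z.1 + w.1).comp s = _
          rw [AddMonoidHom.add_comp, smul_add])
      let L := QuotientAddGroup.lift (Bd.addSubgroupOf Zd)
        ((QuotientAddGroup.mk' (extSub B Tker)).comp LAux) (by
          intro z hz
          show QuotientAddGroup.mk (LAux z) = 0
          exact (QuotientAddGroup.eq_zero_iff _).mpr (hLKer z hz))
      refine ⟨L, fun z => rfl, ?_⟩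
      intro q
      induction q using QuotientAddGroup.induction_on with
      | H f =>
        show L (coIndex (QuotientAddGroup.mk f)) = QuotientAddGroup.mk f
        rw [hcoRule]
        show QuotientAddGroup.mk (LAux (coIndexAux f)) = QuotientAddGroup.mk f
        congr 1
        show sgn (n + 1) • (sgn (n + 1) • f.comp (δ (n + 1)).rangeRestrict).comp s = f
        apply AddMonoidHom.ext
        intro b
        show sgn (n + 1) • (sgn (n + 1) • f.comp (δ (n + 1)).rangeRestrict) (s b) = f b
        rw [AddMonoidHom.smul_apply, sgn_sgn]
        show f ((δ (n + 1)).rangeRestrict (s b)) = f b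
        congr 1
        apply Subtype.ext
        show δ (n + 1) (s b) = b.1
        exact hs b
end

section
/- Let G be a Polish abelian group with the division closure property, and let 0 → A →(i) B →(π) C → 0 be an exact sequence of cochain complexes of countable free abelian groups and cochain maps that is split in each degree; let 0 → C* → B* → A* → 0 be its G-dual sequence of Polish chain complexes. Let d^n : H^n(C) → H^{n+1}(A) and d_n : H_n(A*) → H_{n−1}(C*) be the connecting homomorphisms (induced, for compatible choices of degreewise splittings i†, π† with i†∘π† = 0, by d̂^n = i†∘δ^n∘π† and its dual). Then for every n ∈ ℤ: (i) Index_C ∘ d_n = Hom(d^{n−1},G) ∘ Index_A as maps H_n(A*) → Hom(H^{n−1}(C),G); and (ii) d_n ∘ coIndex_A = coIndex_C ∘ E^n, where E^n : Hom(B^{n+1}(A),G)/Hom(Z^{n+1}(A)|B^{n+1}(A),G) → Hom(B^n(C),G)/Hom(Z^n(C)|B^n(C),G) is induced by θ ↦ θ ∘ (d̂^n restricted to B^n(C)). -/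
set_option maxHeartbeats 2000000 in
theorem uct_natural_with_respect_to_connecting_homomorphisms
    {G : Type*} [AddCommGroup G] [TopologicalSpace G] [IsTopologicalAddGroup G]
    [PolishSpace G]
    (hdcp : ∀ k : ℕ, 0 < k → IsClosed {g : G | ∃ x : G, k • x = g})
    (A B C : ℤ → Type*)
    [∀ n, AddCommGroup (A n)] [∀ n, Countable (A n)] [∀ n, Module.Free ℤ (A n)]
    [∀ n, AddCommGroup (B n)] [∀ n, Countable (B n)] [∀ n, Module.Free ℤ (B n)]
    [∀ n, AddCommGroup (C n)] [∀ n, Countable (C n)] [∀ n, Module.Free ℤ (C n)]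
    (δA : ∀ n : ℤ, A n →+ A (n + 1)) (δB : ∀ n : ℤ, B n →+ B (n + 1))
    (δC : ∀ n : ℤ, C n →+ C (n + 1))
    (hδA : ∀ (n : ℤ) (x : A n), δA (n + 1) (δA n x) = 0)
    (hδB : ∀ (n : ℤ) (x : B n), δB (n + 1) (δB n x) = 0)
    (hδC : ∀ (n : ℤ) (x : C n), δC (n + 1) (δC n x) = 0)
    -- the cochain maps i : A → B and π : B → C
    (i : ∀ n : ℤ, A n →+ B n)
    (hichain : ∀ (n : ℤ) (x : A n), δB n (i n x) = i (n + 1) (δA n x))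
    (p : ∀ n : ℤ, B n →+ C n)
    (hpchain : ∀ (n : ℤ) (x : B n), δC n (p n x) = p (n + 1) (δB n x))
    -- degreewise exactness
    (hinj : ∀ n, Function.Injective (i n))
    (hexact : ∀ n, (i n).range = (p n).ker)
    (hsurj : ∀ n, Function.Surjective (p n))
    -- compatible degreewise splittings with i† ∘ π† = 0
    (iret : ∀ n : ℤ, B n →+ A n) (hiret : ∀ (n : ℤ) (a : A n), iret n (i n a) = a)
    (psec : ∀ n : ℤ, C n →+ B n) (hpsec : ∀ (n : ℤ) (c : C n), p n (psec n c) = c)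
    (hcomp0 : ∀ (n : ℤ) (c : C n), iret n (psec n c) = 0) :
    ∀ m : ℤ,
      -- d̂^k := i† ∘ δ^k ∘ π†
      ∀ dhat : ∀ k : ℤ, C k →+ A (k + 1),
      (∀ k : ℤ, dhat k = (iret (k + 1)).comp ((δB k).comp (psec k))) →
      -- the connecting homomorphism d^{n−1} : H^{n−1}(C) → H^n(A)
      ∀ dc : (↥(δC (m + 1)).ker ⧸ ((δC m).range.addSubgroupOf (δC (m + 1)).ker)) →+
             (↥(δA (m + 1 + 1)).ker ⧸ ((δA (m + 1)).range.addSubgroupOf (δA (m + 1 + 1)).ker)),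
      (∀ (a : ↥(δC (m + 1)).ker) (hm : dhat (m + 1) a.1 ∈ (δA (m + 1 + 1)).ker),
        dc (QuotientAddGroup.mk a) =
          QuotientAddGroup.mk (⟨dhat (m + 1) a.1, hm⟩ : ↥(δA (m + 1 + 1)).ker)) →
      -- the dual connecting homomorphism d_n : H_n(A*) → H_{n−1}(C*)
      ∀ ddual : (↥(precompHom G (δA (m + 1))).ker ⧸
            ((precompHom G (δA (m + 1 + 1))).range.addSubgroupOf
              (precompHom G (δA (m + 1))).ker)) →+
          (↥(precompHom G (δC m)).ker ⧸
            ((precompHom G (δC (m + 1))).range.addSubgroupOf (precompHom G (δC m)).ker)),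
      (∀ (z : ↥(precompHom G (δA (m + 1))).ker)
        (hm : z.1.comp (dhat (m + 1)) ∈ (precompHom G (δC m)).ker),
        ddual (QuotientAddGroup.mk z) =
          QuotientAddGroup.mk (⟨z.1.comp (dhat (m + 1)), hm⟩ : ↥(precompHom G (δC m)).ker)) →
      -- the index homomorphisms of A and of C
      ∀ IndexA : (↥(precompHom G (δA (m + 1))).ker ⧸
            ((precompHom G (δA (m + 1 + 1))).range.addSubgroupOf
              (precompHom G (δA (m + 1))).ker)) →+
          ((↥(δA (m + 1 + 1)).ker ⧸
            ((δA (m + 1)).range.addSubgroupOf (δA (m + 1 + 1)).ker)) →+ G),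
      (∀ (z : ↥(precompHom G (δA (m + 1))).ker) (a : ↥(δA (m + 1 + 1)).ker),
        IndexA (QuotientAddGroup.mk z) (QuotientAddGroup.mk a) = z.1 a.1) →
      ∀ IndexC : (↥(precompHom G (δC m)).ker ⧸
            ((precompHom G (δC (m + 1))).range.addSubgroupOf (precompHom G (δC m)).ker)) →+
          ((↥(δC (m + 1)).ker ⧸ ((δC m).range.addSubgroupOf (δC (m + 1)).ker)) →+ G),
      (∀ (w : ↥(precompHom G (δC m)).ker) (a : ↥(δC (m + 1)).ker),
        IndexC (QuotientAddGroup.mk w) (QuotientAddGroup.mk a) = w.1 a.1) →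
      -- the co-index homomorphisms of A and of C
      ∀ coIndexA : ((↥(δA (m + 1 + 1)).range →+ G) ⧸
            extSub (δA (m + 1 + 1)).range (δA (m + 1 + 1 + 1)).ker) →+
          (↥(precompHom G (δA (m + 1))).ker ⧸
            ((precompHom G (δA (m + 1 + 1))).range.addSubgroupOf
              (precompHom G (δA (m + 1))).ker)),
      (∀ (f : ↥(δA (m + 1 + 1)).range →+ G)
        (hm : sgn (m + 1 + 1) • f.comp (δA (m + 1 + 1)).rangeRestrict ∈
          (precompHom G (δA (m + 1))).ker),
        coIndexA (QuotientAddGroup.mk f) =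
          QuotientAddGroup.mk
            (⟨sgn (m + 1 + 1) • f.comp (δA (m + 1 + 1)).rangeRestrict, hm⟩ :
              ↥(precompHom G (δA (m + 1))).ker)) →
      ∀ coIndexC : ((↥(δC (m + 1)).range →+ G) ⧸
            extSub (δC (m + 1)).range (δC (m + 1 + 1)).ker) →+
          (↥(precompHom G (δC m)).ker ⧸
            ((precompHom G (δC (m + 1))).range.addSubgroupOf (precompHom G (δC m)).ker)),
      (∀ (f : ↥(δC (m + 1)).range →+ G)
        (hm : sgn (m + 1) • f.comp (δC (m + 1)).rangeRestrict ∈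
          (precompHom G (δC m)).ker),
        coIndexC (QuotientAddGroup.mk f) =
          QuotientAddGroup.mk
            (⟨sgn (m + 1) • f.comp (δC (m + 1)).rangeRestrict, hm⟩ :
              ↥(precompHom G (δC m)).ker)) →
      -- the homomorphism E^n induced by θ ↦ θ ∘ (d̂^n restricted to B^n(C))
      ∀ E : ((↥(δA (m + 1 + 1)).range →+ G) ⧸
            extSub (δA (m + 1 + 1)).range (δA (m + 1 + 1 + 1)).ker) →+
          ((↥(δC (m + 1)).range →+ G) ⧸ extSub (δC (m + 1)).range (δC (m + 1 + 1)).ker),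
      (∀ (θ : ↥(δA (m + 1 + 1)).range →+ G) (g : ↥(δC (m + 1)).range →+ G),
        (∀ (b : C (m + 1 + 1)) (hb : b ∈ (δC (m + 1)).range)
          (hm : dhat (m + 1 + 1) b ∈ (δA (m + 1 + 1)).range),
          g ⟨b, hb⟩ = θ ⟨dhat (m + 1 + 1) b, hm⟩) →
        E (QuotientAddGroup.mk θ) = QuotientAddGroup.mk g) →
      -- (i) Index_C ∘ d_n = Hom(d^{n−1}, G) ∘ Index_A
      (∀ x, IndexC (ddual x) = (IndexA x).comp dc) ∧
      -- (ii) d_n ∘ coIndex_A = coIndex_C ∘ E^n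
      (∀ q, ddual (coIndexA q) = coIndexC (E q)) := by
  intro m dhat hdhat dc hdc ddual hddual IndexA hIndexA IndexC hIndexC coIndexA hcoIndexA
    coIndexC hcoIndexC E hE
  -- key anticommutation relation: dhat (k+1) ∘ δC k = - δA (k+1) ∘ dhat k
  have key : ∀ (k : ℤ) (c : C k), dhat (k+1) (δC k c) = - δA (k+1) (dhat k c) := by
    intro k c
    rw [hdhat, hdhat]
    simp only [AddMonoidHom.comp_apply]
    have hb : psec (k+1) (δC k c) - δB k (psec k c) ∈ (i (k+1)).range := by
      rw [hexact, AddMonoidHom.mem_ker, map_sub, hpsec, ← hpchain, hpsec, sub_self]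
    obtain ⟨a, ha⟩ := hb
    have ha' : psec (k+1) (δC k c) = i (k+1) a + δB k (psec k c) := by
      rw [ha]; abel
    have haval : a = - iret (k+1) (δB k (psec k c)) := by
      have h2 := congrArg (iret (k+1)) ha
      rw [hiret, map_sub, hcomp0, zero_sub] at h2
      exact h2
    calc iret (k+1+1) (δB (k+1) (psec (k+1) (δC k c)))
        = iret (k+1+1) (δB (k+1) (i (k+1) a + δB k (psec k c))) := by rw [ha']
      _ = iret (k+1+1) (i (k+1+1) (δA (k+1) a))
            + iret (k+1+1) (δB (k+1) (δB k (psec k c))) := by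
          rw [map_add, map_add, hichain]
      _ = δA (k+1) a := by rw [hiret, hδB, map_zero, add_zero]
      _ = - δA (k+1) (iret (k+1) (δB k (psec k c))) := by rw [haval, map_neg]
  -- dhat maps cocycles to cocycles
  have keyker : ∀ (k : ℤ) (c : C k), δC k c = 0 → δA (k+1) (dhat k c) = 0 := by
    intro k c hc
    rw [hdhat]
    simp only [AddMonoidHom.comp_apply]
    have h1 : δB k (psec k c) ∈ (i (k+1)).range := by
      rw [hexact, AddMonoidHom.mem_ker, ← hpchain, hpsec, hc]
    obtain ⟨a, ha⟩ := h1
    have h2 : iret (k+1) (δB k (psec k c)) = a := by rw [← ha, hiret]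
    rw [h2]
    have h3 : i (k+1+1) (δA (k+1) a) = 0 := by rw [← hichain, ha, hδB]
    exact hinj (k+1+1) (by rw [h3, map_zero])
  -- membership for hdc
  have hma : ∀ a : ↥(δC (m+1)).ker, dhat (m+1) a.1 ∈ (δA (m+1+1)).ker := by
    intro a
    exact AddMonoidHom.mem_ker.2 (keyker (m+1) a.1 (AddMonoidHom.mem_ker.1 a.2))
  -- membership for hddual
  have hmz : ∀ z : ↥(precompHom G (δA (m+1))).ker,
      z.1.comp (dhat (m+1)) ∈ (precompHom G (δC m)).ker := by
    intro z
    have hz : z.1.comp (δA (m+1)) = 0 := AddMonoidHom.mem_ker.1 z.2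
    rw [AddMonoidHom.mem_ker]
    ext x
    have h1 : z.1 (δA (m+1) (dhat m x)) = 0 := DFunLike.congr_fun hz (dhat m x)
    show z.1 (dhat (m+1) (δC m x)) = 0
    rw [key m x, map_neg, h1, neg_zero]
  constructor
  · intro x
    refine QuotientAddGroup.induction_on x (fun z => ?_)
    ext a
    simp only [AddMonoidHom.comp_apply, QuotientAddGroup.mk'_apply]
    rw [hddual z (hmz z), hIndexC, AddMonoidHom.comp_apply, hdc a (hma a), hIndexA]
  · intro q
    refine QuotientAddGroup.induction_on q (fun f => ?_)
    -- membership for coIndexA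
    have hmf : sgn (m+1+1) • f.comp (δA (m+1+1)).rangeRestrict ∈
        (precompHom G (δA (m+1))).ker := by
      rw [AddMonoidHom.mem_ker]
      ext x
      show sgn (m+1+1) • f ((δA (m+1+1)).rangeRestrict (δA (m+1) x)) = 0
      have h0 : (δA (m+1+1)).rangeRestrict (δA (m+1) x) = 0 := by
        apply Subtype.ext
        exact hδA (m+1) x
      rw [h0, map_zero, smul_zero]
    set z : ↥(precompHom G (δA (m+1))).ker :=
      ⟨sgn (m+1+1) • f.comp (δA (m+1+1)).rangeRestrict, hmf⟩ with hzdef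
    -- the restriction of dhat (m+1+1) to coboundaries
    have hrange : ∀ b : C (m+1+1), b ∈ (δC (m+1)).range →
        dhat (m+1+1) b ∈ (δA (m+1+1)).range := by
      rintro b ⟨c, rfl⟩
      rw [key (m+1) c]
      exact ⟨-(dhat (m+1) c), by rw [map_neg]⟩
    set g : ↥(δC (m+1)).range →+ G := f.comp
      { toFun := fun b => (⟨dhat (m+1+1) b.1, hrange b.1 b.2⟩ : ↥(δA (m+1+1)).range)
        map_zero' := by apply Subtype.ext; simp
        map_add' := fun x y => by apply Subtype.ext; simp } with hgdef
    have hEg : E (QuotientAddGroup.mk f) = QuotientAddGroup.mk g := by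
      apply hE
      intro b hb hm2
      rfl
    have hmg : sgn (m+1) • g.comp (δC (m+1)).rangeRestrict ∈ (precompHom G (δC m)).ker := by
      rw [AddMonoidHom.mem_ker]
      ext x
      show sgn (m+1) • g ((δC (m+1)).rangeRestrict (δC m x)) = 0
      have h0 : (δC (m+1)).rangeRestrict (δC m x) = 0 := by
        apply Subtype.ext
        exact hδC m x
      rw [h0, map_zero, smul_zero]
    rw [hEg]
    rw [hcoIndexA f hmf]
    rw [hcoIndexC g hmg]
    rw [hddual z (hmz z)]
    congr 1
    apply Subtype.ext
    have hsgn : sgn (m+1+1) = - sgn (m+1) := by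
      simp only [sgn, Int.even_add_one (n := m+1)]
      by_cases h : Even (m+1) <;> simp [h]
    ext x
    simp only [AddMonoidHom.comp_apply, AddMonoidHom.smul_apply, hzdef]
    show (sgn (m+1+1) • f.comp (δA (m+1+1)).rangeRestrict) (dhat (m+1) x)
        = sgn (m+1) • g ((δC (m+1)).rangeRestrict x)
    have hval : g ((δC (m+1)).rangeRestrict x)
        = f (- (δA (m+1+1)).rangeRestrict (dhat (m+1) x)) := by
      show f _ = _
      congr 1
      apply Subtype.ext
      show dhat (m+1+1) (δC (m+1) x) = - δA (m+1+1) (dhat (m+1) x)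
      exact key (m+1) x
    rw [hval, map_neg, smul_neg, AddMonoidHom.smul_apply, AddMonoidHom.comp_apply, hsgn, neg_smul]
end

section
/- Let G be a Polish abelian group with the division closure property and let A = (A^n, δ^n)_{n∈ℤ} be a cochain complex of finitely generated free abelian groups. Then the G-dual Polish chain complex A* is proper: for every n ∈ ℤ, the subgroup B_n(A*) = {w ∘ δ^n : w ∈ Hom(A^{n+1},G)} is a closed subgroup of A*_n = Hom(A^n,G). -/
/-!
Statement 9: if `G` is a Polish abelian group with the division closure property and
`A` is a cochain complex of finitely generated free abelian groups, then the `G`-dual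
Polish chain complex `A*` is proper: each group of boundaries
`B_n(A*) = {w ∘ δ^n : w ∈ Hom(A^{n+1}, G)}` is closed in `A*_n = Hom(A^n, G)`.

`Hom(A^n, G)` is realized as the subtype of additive functions `A^n → G`, with the
subspace topology inherited from the product topology on `A^n → G`.
-/

theorem dual_of_fg_free_cochain_complex_is_proper
    {G : Type*} [AddCommGroup G] [TopologicalSpace G] [IsTopologicalAddGroup G]
    [PolishSpace G]
    (hdcp : ∀ k : ℕ, 0 < k → IsClosed {g : G | ∃ x : G, k • x = g})
    (A : ℤ → Type*) [∀ n, AddCommGroup (A n)]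
    [∀ n, Module.Free ℤ (A n)] [∀ n, Module.Finite ℤ (A n)]
    (δ : ∀ n : ℤ, A n →+ A (n + 1))
    (hδδ : ∀ (n : ℤ) (x : A n), δ (n + 1) (δ n x) = 0) :
    ∀ n : ℤ,
      IsClosed {z : {f : A n → G // ∀ a b : A n, f (a + b) = f a + f b} |
        ∃ w : A (n + 1) →+ G, ∀ a : A n, z.1 a = w (δ n a)} := by
  intro n
  classical
  set M := A (n + 1) with hM
  let d : A n →ₗ[ℤ] M := (δ n).toIntLinearMap
  let N : Submodule ℤ M := LinearMap.range d
  obtain ⟨m, snf⟩ := N.smithNormalForm (Module.Free.chooseBasis ℤ M)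
  -- preimages of the basis vectors of `N`
  have hx : ∀ i : Fin m, ∃ x : A n, δ n x = (snf.bN i : M) := fun i => (snf.bN i).2
  choose x hx using hx
  -- the diagonal entries are nonzero
  have ha : ∀ i, snf.a i ≠ 0 := by
    intro i h
    have h2 := snf.snf i
    rw [h, zero_smul] at h2
    exact snf.bN.ne_zero i (Subtype.ext h2)
  -- rewrite the set as an intersection of closed conditions
  have hset : {z : {f : A n → G // ∀ a b : A n, f (a + b) = f a + f b} |
        ∃ w : M →+ G, ∀ a : A n, z.1 a = w (δ n a)} =
      (⋂ k : {u : A n // δ n u = 0},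
        {z : {f : A n → G // ∀ a b : A n, f (a + b) = f a + f b} | z.1 k.1 = 0}) ∩
      (⋂ i : Fin m,
        {z : {f : A n → G // ∀ a b : A n, f (a + b) = f a + f b} |
          ∃ g : G, (snf.a i).natAbs • g = z.1 (x i)}) := by
    ext z
    simp only [Set.mem_setOf_eq, Set.mem_inter_iff, Set.mem_iInter]
    constructor
    · rintro ⟨w, hw⟩
      constructor
      · rintro ⟨k, hk⟩
        simp [hw k, hk]
      · intro i
        have h1 : z.1 (x i) = snf.a i • w (snf.bM (snf.f i)) := by
          rw [hw (x i), hx i, snf.snf i, map_zsmul]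
        rcases Int.natAbs_eq (snf.a i) with h | h
        · refine ⟨w (snf.bM (snf.f i)), ?_⟩
          conv_rhs => rw [h1, h]
          rw [natCast_zsmul]
        · refine ⟨-w (snf.bM (snf.f i)), ?_⟩
          conv_rhs => rw [h1, h]
          rw [neg_zsmul, natCast_zsmul, ← smul_neg]
    · rintro ⟨h1, h2⟩
      -- the additive hom version of z
      let Z : A n →+ G := AddMonoidHom.mk' z.1 (fun a b => z.2 a b)
      have hZker : ∀ u : A n, δ n u = 0 → Z u = 0 := fun u hu => h1 ⟨u, hu⟩
      -- choose ℤ-divided values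
      have hg' : ∀ i : Fin m, ∃ g : G, snf.a i • g = z.1 (x i) := by
        intro i
        obtain ⟨g, hg⟩ := h2 i
        rcases Int.natAbs_eq (snf.a i) with h | h
        · exact ⟨g, by rw [h, natCast_zsmul, hg]⟩
        · exact ⟨-g, by rw [h, neg_zsmul, natCast_zsmul, smul_neg, neg_neg, hg]⟩
      choose g hg using hg'
      -- define w on the basis of M
      let wl : M →ₗ[ℤ] G := snf.bM.constr ℕ (Function.extend snf.f g 0)
      have hwb : ∀ i : Fin m, wl (snf.bM (snf.f i)) = g i := by
        intro i
        rw [Module.Basis.constr_basis, snf.f.injective.extend_apply]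
      refine ⟨wl.toAddMonoidHom, ?_⟩
      intro a
      -- express δ n a in the basis of N
      have hmem : δ n a ∈ N := ⟨a, rfl⟩
      set y : N := ⟨δ n a, hmem⟩ with hy
      set c : Fin m → ℤ := fun i => snf.bN.repr y i with hc
      have hyrepr : (y : M) = ∑ i, c i • (snf.bN i : M) := by
        conv_lhs => rw [← snf.bN.sum_repr y]
        push_cast
        rfl
      set u : A n := ∑ i, c i • x i with hu
      have hdu : δ n u = δ n a := by
        rw [hu, map_sum]
        have : ∀ i ∈ Finset.univ, (δ n) (c i • x i) = c i • (snf.bN i : M) := by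
          intro i _
          rw [map_zsmul, hx i]
        rw [Finset.sum_congr rfl this, ← hyrepr]
      have hza : Z a = Z u := by
        have : δ n (a - u) = 0 := by rw [map_sub, hdu, sub_self]
        have h0 := hZker _ this
        rw [map_sub] at h0
        exact sub_eq_zero.mp h0
      have hZu : Z u = ∑ i, c i • (snf.a i • g i) := by
        rw [hu, map_sum]
        refine Finset.sum_congr rfl fun i _ => ?_
        rw [map_zsmul]
        congr 1
        exact (hg i).symm
      have hwy : wl (δ n a) = ∑ i, c i • (snf.a i • g i) := by
        have : (y : M) = δ n a := rfl
        rw [← this, hyrepr, map_sum]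
        refine Finset.sum_congr rfl fun i _ => ?_
        rw [snf.snf i, map_smul, map_smul, hwb i]
      show Z a = wl (δ n a)
      rw [hza, hZu, hwy]
  rw [hset]
  apply IsClosed.inter
  · refine isClosed_iInter fun k => ?_
    have hcont : Continuous fun z : {f : A n → G // ∀ a b : A n, f (a + b) = f a + f b} =>
        z.1 k.1 := (continuous_apply k.1).comp continuous_subtype_val
    exact isClosed_singleton.preimage hcont
  · refine isClosed_iInter fun i => ?_
    have hcont : Continuous fun z : {f : A n → G // ∀ a b : A n, f (a + b) = f a + f b} =>
        z.1 (x i) := (continuous_apply (x i)).comp continuous_subtype_val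
    exact (hdcp (snf.a i).natAbs (Int.natAbs_pos.mpr (ha i))).preimage hcont
end

section
/- Let 𝐀 = (A^(m), p^(m,m+1))_{m∈ω} be a tower of proper Polish chain complexes, and let Local : H_n(holim 𝐀) → ∏_{k∈ω} H_n(A^(k)) be the group homomorphism sending the class of a cycle z = (z_m, z_{m0,m1}) to the sequence ([z_k])_{k∈ω}. Then for every n ∈ ℤ: (i) the image of Local equals the inverse limit lim_k H_n(A^(k)), i.e., the subgroup of sequences (h_k) with H_n(p^(k,k+1))(h_{k+1}) = h_k for all k; and (ii) the kernel of Local equals H_n^∞(holim 𝐀), i.e., for a cycle z ∈ Z_n(holim 𝐀), Local([z]) = 0 if and only if z lies in the closure of B_n(holim 𝐀) in (holim 𝐀)_n. -/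
/-- Composite bonding maps `p^(m, m+k)` of a tower. -/
def pcomp {A : ℕ → ℤ → Type*} [∀ m n, AddCommGroup (A m n)]
    (p : ∀ (m : ℕ) (n : ℤ), A (m + 1) n →+ A m n) (n : ℤ) :
    ∀ m k : ℕ, A (m + k) n →+ A m n
  | _, 0 => AddMonoidHom.id _
  | m, (k + 1) => (pcomp p n m k).comp (p (m + k) n)

lemma sgn_sq (n : ℤ) : sgn n * sgn n = 1 := by unfold sgn; split <;> norm_num

lemma sgn_succ (n : ℤ) : sgn (n + 1) = - sgn n := by
  unfold sgn
  by_cases h : Even n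
  · rw [if_pos h, if_neg (by simp [Int.even_add_one, h])]
  · rw [if_neg h, if_pos (by simp [Int.even_add_one, h, Int.not_even_iff_odd.mp h])]; norm_num

section aux
variable {A : ℕ → ℤ → Type*} [∀ m n, AddCommGroup (A m n)]
  (p : ∀ (m : ℕ) (n : ℤ), A (m + 1) n →+ A m n)

lemma pcomp_zero (n : ℤ) (m : ℕ) (x : A (m + 0) n) : pcomp p n m 0 x = x := rfl

lemma pcomp_succ (n : ℤ) (m k : ℕ) (x : A (m + (k + 1)) n) :
    pcomp p n m (k + 1) x = pcomp p n m k (p (m + k) n x) := rfl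

lemma pcomp_one (n : ℤ) (m : ℕ) (x : A (m + 1) n) : pcomp p n m 1 x = p m n x := rfl

lemma pcomp_comp (n : ℤ) (c : ∀ i, A i n) (m k j : ℕ) :
    pcomp p n m k (pcomp p n (m + k) j (c (m + k + j))) =
      pcomp p n m (k + j) (c (m + (k + j))) := by
  induction j generalizing c with
  | zero => rfl
  | succ j ih => exact ih (fun i => p i n (c (i + 1)))

lemma pcomp_d (d : ∀ (m : ℕ) (n : ℤ), A m (n + 1) →+ A m n)
    (hpchain : ∀ (m : ℕ) (n : ℤ) (x : A (m + 1) (n + 1)),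
      p m n (d (m + 1) n x) = d m n (p m (n + 1) x))
    (n : ℤ) (m k : ℕ) (x : A (m + k) (n + 1)) :
    pcomp p n m k (d (m + k) n x) = d m n (pcomp p (n + 1) m k x) := by
  induction k with
  | zero => rfl
  | succ k ih =>
    show pcomp p n m k ((p (m + k) n) ((d (m + k + 1) n) x)) =
      d m n (pcomp p (n + 1) m k ((p (m + k) (n + 1)) x))
    rw [hpchain, ih]

end aux

/-- Downward-recursive partial solutions used in part (ii). -/
def Vaux {A : ℕ → ℤ → Type*} [∀ m n, AddCommGroup (A m n)]
    (p : ∀ (m : ℕ) (n : ℤ), A (m + 1) n →+ A m n) (n : ℤ)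
    (u : ∀ m, A m n) (c : ∀ m, A m n) : ℕ → ∀ m, A m n
  | 0, m => p m n (u (m + 1)) + c m
  | (k + 1), m => p m n (Vaux p n u c k (m + 1)) + c m

/-- The windowed lift used in part (ii). -/
def Wfun {A : ℕ → ℤ → Type*} [∀ m n, AddCommGroup (A m n)]
    (p : ∀ (m : ℕ) (n : ℤ), A (m + 1) n →+ A m n) (n : ℤ)
    (u : ∀ m, A m n) (c : ∀ m, A m n) (T m : ℕ) : A m n :=
  if m + 1 ≤ T then Vaux p n u c (T - 1 - m) m else u m

theorem local_image_and_kernel_for_holim_of_tower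
    (A : ℕ → ℤ → Type*)
    [∀ m n, AddCommGroup (A m n)] [∀ m n, TopologicalSpace (A m n)]
    [∀ m n, IsTopologicalAddGroup (A m n)] [∀ m n, PolishSpace (A m n)]
    (d : ∀ (m : ℕ) (n : ℤ), A m (n + 1) →+ A m n)
    (hdc : ∀ m n, Continuous (d m n))
    (hdd : ∀ (m : ℕ) (n : ℤ) (x : A m (n + 1 + 1)), d m n (d m (n + 1) x) = 0)
    -- properness
    (hproper : ∀ (m : ℕ) (n : ℤ), IsClosed ((d m n).range : Set (A m n)))
    -- bonding chain maps
    (p : ∀ (m : ℕ) (n : ℤ), A (m + 1) n →+ A m n)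
    (hpc : ∀ m n, Continuous (p m n))
    (hpchain : ∀ (m : ℕ) (n : ℤ) (x : A (m + 1) (n + 1)),
      p m n (d (m + 1) n x) = d m n (p m (n + 1) x)) :
    ∀ N : ℤ,
      -- (i) image of Local equals lim_k H_{N+1}(A^(k)):
      -- (⊆) the components of a cycle of holim 𝐀 have compatible classes
      ((∀ (z : ∀ m, A m (N + 1)) (z2 : ∀ (m k : ℕ), A m (N + 1 + 1)),
          (∀ m k l, z2 m k + pcomp p (N + 1 + 1) m k (z2 (m + k) l) = z2 m (k + l)) →
          (∀ m, d m N (z m) = 0) →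
          (∀ m k, d m (N + 1) (z2 m k) +
              sgn (N + 1) • (pcomp p (N + 1) m k (z (m + k)) - z m) = 0) →
          ∀ m, ∃ u : A m (N + 1 + 1), p m (N + 1) (z (m + 1)) - z m = d m (N + 1) u) ∧
        -- (⊇) every compatible family of classes lifts to a cycle of holim 𝐀
        (∀ h : ∀ m, A m (N + 1),
          (∀ m, d m N (h m) = 0) →
          (∀ m, ∃ u : A m (N + 1 + 1), p m (N + 1) (h (m + 1)) - h m = d m (N + 1) u) →
          ∃ (z : ∀ m, A m (N + 1)) (z2 : ∀ (m k : ℕ), A m (N + 1 + 1)),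
            (∀ m k l, z2 m k + pcomp p (N + 1 + 1) m k (z2 (m + k) l) = z2 m (k + l)) ∧
            (∀ m, d m N (z m) = 0) ∧
            (∀ m k, d m (N + 1) (z2 m k) +
                sgn (N + 1) • (pcomp p (N + 1) m k (z (m + k)) - z m) = 0) ∧
            ∀ m, ∃ u : A m (N + 1 + 1), z m - h m = d m (N + 1) u)) ∧
      -- (ii) kernel of Local equals H^∞_{N+1}(holim 𝐀)
      (∀ (z : ∀ m, A m (N + 1)) (z2 : ∀ (m k : ℕ), A m (N + 1 + 1)),
        (∀ m k l, z2 m k + pcomp p (N + 1 + 1) m k (z2 (m + k) l) = z2 m (k + l)) →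
        (∀ m, d m N (z m) = 0) →
        (∀ m k, d m (N + 1) (z2 m k) +
            sgn (N + 1) • (pcomp p (N + 1) m k (z (m + k)) - z m) = 0) →
        ((∀ m, ∃ u : A m (N + 1 + 1), z m = d m (N + 1) u) ↔
          ((z, z2) ∈ closure {y : (∀ m, A m (N + 1)) × (∀ (m k : ℕ), A m (N + 1 + 1)) |
            ∃ (w : ∀ m, A m (N + 1 + 1)) (w2 : ∀ (m k : ℕ), A m (N + 1 + 1 + 1)),
              (∀ m k l, w2 m k + pcomp p (N + 1 + 1 + 1) m k (w2 (m + k) l) = w2 m (k + l)) ∧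
              y = (fun m => d m (N + 1) (w m),
                   fun m k => d m (N + 1 + 1) (w2 m k) +
                     sgn (N + 1 + 1) • (pcomp p (N + 1 + 1) m k (w (m + k)) - w m))}))) := by
  intro N
  refine ⟨⟨?_, ?_⟩, ?_⟩
  · -- (i⊆)
    intro z z2 hcoh hz hcyc m
    refine ⟨(-(sgn (N + 1))) • z2 m 1, ?_⟩
    have h2 : d m (N + 1) (z2 m 1) =
        -(sgn (N + 1) • (pcomp p (N + 1) m 1 (z (m + 1)) - z m)) :=
      eq_neg_of_add_eq_zero_left (hcyc m 1)
    have hX : d m (N + 1) ((-(sgn (N + 1))) • z2 m 1) =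
        pcomp p (N + 1) m 1 (z (m + 1)) - z m := by
      rw [map_zsmul, h2, smul_neg, neg_smul, neg_neg, smul_smul, sgn_sq, one_smul]
    rw [hX]
    rfl
  · -- (i⊇)
    intro h hz hb
    choose u hu using hb
    set c : ∀ m, A m (N + 1 + 1) := fun m => (-(sgn (N + 1))) • u m with hc
    have hdc' : ∀ m, d m (N + 1) (c m) =
        (-(sgn (N + 1))) • (p m (N + 1) (h (m + 1)) - h m) := by
      intro m
      rw [hc, map_zsmul, ← hu]
    have hcohS : ∀ m k l,
        (∑ j ∈ Finset.range k, pcomp p (N + 1 + 1) m j (c (m + j))) +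
          pcomp p (N + 1 + 1) m k
            (∑ j ∈ Finset.range l, pcomp p (N + 1 + 1) (m + k) j (c (m + k + j))) =
        ∑ j ∈ Finset.range (k + l), pcomp p (N + 1 + 1) m j (c (m + j)) := by
      intro m k l
      induction l with
      | zero => simp
      | succ l ih =>
        rw [Finset.sum_range_succ, map_add, ← add_assoc, ih,
          pcomp_comp p (N + 1 + 1) c m k l, ← Finset.sum_range_succ]
        rfl
    have key : ∀ m k,
        d m (N + 1) (∑ j ∈ Finset.range k, pcomp p (N + 1 + 1) m j (c (m + j))) =
          (-(sgn (N + 1))) • (pcomp p (N + 1) m k (h (m + k)) - h m) := by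
      intro m k
      induction k with
      | zero =>
        show d m (N + 1) (∑ j ∈ Finset.range 0, pcomp p (N + 1 + 1) m j (c (m + j))) =
          (-(sgn (N + 1))) • (h m - h m)
        simp
      | succ k ih =>
        rw [Finset.sum_range_succ, map_add, ih, ← pcomp_d p d hpchain, hdc' (m + k),
          map_zsmul, map_sub, pcomp_succ, ← smul_add]
        congr 1
        abel
    refine ⟨h, fun m k => ∑ j ∈ Finset.range k, pcomp p (N + 1 + 1) m j (c (m + j)),
      fun m k l => hcohS m k l, hz, fun m k => ?_, fun m => ⟨0, by simp⟩⟩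
    show d m (N + 1) (∑ j ∈ Finset.range k, pcomp p (N + 1 + 1) m j (c (m + j))) +
      sgn (N + 1) • (pcomp p (N + 1) m k (h (m + k)) - h m) = 0
    rw [key m k, neg_smul]
    exact neg_add_cancel _
  · -- (ii)
    intro z z2 hcoh hz hcyc
    have hz20 : ∀ m, z2 m 0 = 0 := by
      intro m
      have h0 := hcoh m 0 0
      rw [pcomp_zero] at h0
      exact add_left_cancel (h0.trans (add_zero _).symm)
    have hz21 : ∀ m, d m (N + 1) (z2 m 1) =
        -(sgn (N + 1) • (pcomp p (N + 1) m 1 (z (m + 1)) - z m)) := fun m =>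
      eq_neg_of_add_eq_zero_left (hcyc m 1)
    constructor
    · -- boundaries ⇒ closure
      intro hb
      choose u hu using hb
      set c2 : ∀ m, A m (N + 1 + 1) := fun m => sgn (N + 1) • z2 m 1 with hc2
      set W := Wfun p (N + 1 + 1) u c2 with hW
      have hdc2 : ∀ m, d m (N + 1) (c2 m) =
          -(pcomp p (N + 1) m 1 (z (m + 1)) - z m) := by
        intro m
        rw [hc2, map_zsmul, hz21 m, smul_neg, smul_smul, sgn_sq, one_smul]
      have hstep : ∀ m (x : A (m + 1) (N + 1 + 1)), d (m + 1) (N + 1) x = z (m + 1) →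
          d m (N + 1) (p m (N + 1 + 1) x + c2 m) = z m := by
        intro m x hx
        rw [map_add, ← hpchain, hx, hdc2 m, pcomp_one]
        abel
      have hVd : ∀ k m, d m (N + 1) (Vaux p (N + 1 + 1) u c2 k m) = z m := by
        intro k
        induction k with
        | zero => exact fun m => hstep m (u (m + 1)) (hu (m + 1)).symm
        | succ k ih => exact fun m => hstep m (Vaux p (N + 1 + 1) u c2 k (m + 1)) (ih (m + 1))
      have hwd : ∀ T m, d m (N + 1) (W T m) = z m := by
        intro T m
        rw [hW, Wfun]
        split
        · exact hVd _ m
        · exact (hu m).symm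
      have hloc : ∀ T m, m + 1 ≤ T → W T m = p m (N + 1 + 1) (W T (m + 1)) + c2 m := by
        intro T m hm
        by_cases h2 : m + 1 + 1 ≤ T
        · have e3 : T - 1 - m = (T - 1 - (m + 1)) + 1 := by omega
          rw [hW]
          simp only [Wfun, if_pos hm, if_pos h2, e3]
          rfl
        · have e0 : T - 1 - m = 0 := by omega
          rw [hW]
          simp only [Wfun, if_pos hm, if_neg h2, e0]
          rfl
      have htel : ∀ T k m, m + k ≤ T →
          sgn (N + 1 + 1) • (pcomp p (N + 1 + 1) m k (W T (m + k)) - W T m) = z2 m k := by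
        intro T k
        induction k with
        | zero =>
          intro m _
          show sgn (N + 1 + 1) • (W T m - W T m) = z2 m 0
          rw [sub_self, smul_zero, hz20]
        | succ k ih =>
          intro m hm
          have hl := hloc T (m + k) (by omega)
          have hz2k1 : z2 (m + k) 1 =
              sgn (N + 1) • (W T (m + k) - p (m + k) (N + 1 + 1) (W T (m + k + 1))) := by
            have h5 : sgn (N + 1) • z2 (m + k) 1 =
                W T (m + k) - p (m + k) (N + 1 + 1) (W T (m + k + 1)) := by
              rw [hl]
              abel
            rw [← h5, smul_smul, sgn_sq, one_smul]
          show sgn (N + 1 + 1) • (pcomp p (N + 1 + 1) m (k + 1) (W T (m + k + 1)) - W T m)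
              = z2 m (k + 1)
          rw [← hcoh m k 1, ← ih m (by omega), hz2k1, map_zsmul, map_sub, pcomp_succ,
            sgn_succ]
          simp only [neg_smul, smul_sub]
          abel
      refine mem_closure_of_tendsto (b := Filter.atTop) (f := fun T =>
        ((fun m => d m (N + 1) (W T m)),
         (fun m k => d m (N + 1 + 1) ((0 : A m (N + 1 + 1 + 1))) +
           sgn (N + 1 + 1) • (pcomp p (N + 1 + 1) m k (W T (m + k)) - W T m)))) ?_ ?_
      · apply Filter.Tendsto.prodMk_nhds
        · have e : (fun T => (fun m => d m (N + 1) (W T m))) = fun _ => z :=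
            funext fun T => funext fun m => hwd T m
          rw [e]
          exact tendsto_const_nhds
        · rw [tendsto_pi_nhds]
          intro m
          rw [tendsto_pi_nhds]
          intro k
          refine Filter.Tendsto.congr' ?_ tendsto_const_nhds
          refine Filter.eventually_atTop.mpr ⟨m + k, fun T hT => ?_⟩
          show z2 m k = d m (N + 1 + 1) (0 : A m (N + 1 + 1 + 1)) +
            sgn (N + 1 + 1) • (pcomp p (N + 1 + 1) m k (W T (m + k)) - W T m)
          rw [map_zero, zero_add]
          exact (htel T k m hT).symm
      · refine Filter.Eventually.of_forall fun T => ?_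
        exact ⟨W T, fun _ _ => 0, fun m k l => by simp, rfl⟩
    · -- closure ⇒ boundaries
      intro hcl m
      have hmap : Set.MapsTo
          (fun y : (∀ m, A m (N + 1)) × (∀ (m k : ℕ), A m (N + 1 + 1)) => y.1 m)
          {y : (∀ m, A m (N + 1)) × (∀ (m k : ℕ), A m (N + 1 + 1)) |
            ∃ (w : ∀ m, A m (N + 1 + 1)) (w2 : ∀ (m k : ℕ), A m (N + 1 + 1 + 1)),
              (∀ m k l, w2 m k + pcomp p (N + 1 + 1 + 1) m k (w2 (m + k) l) = w2 m (k + l)) ∧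
              y = (fun m => d m (N + 1) (w m),
                   fun m k => d m (N + 1 + 1) (w2 m k) +
                     sgn (N + 1 + 1) • (pcomp p (N + 1 + 1) m k (w (m + k)) - w m))}
          ((d m (N + 1)).range : Set (A m (N + 1))) := by
        rintro y ⟨w, w2, -, rfl⟩
        exact AddMonoidHom.mem_range.mpr ⟨w m, rfl⟩
      have h1 := map_mem_closure ((continuous_apply m).comp continuous_fst) hcl hmap
      rw [IsClosed.closure_eq (hproper m (N + 1))] at h1
      obtain ⟨v, hv⟩ := AddMonoidHom.mem_range.mp h1
      exact ⟨v, hv.symm⟩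
end
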